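/- arXiv:2005.07224 — 4 statements merged into one kernel-verified Lean document; each statement's English description precedes it below -/
import Mathlib

section
/- Let s > t ≥ 1 be fixed integers. For all sufficiently large n there exists a simple graph G on n vertices with exactly ⌊n²/4⌋ + t edges, triangle covering number τ₃(G) = s, and exactly N₃(G) = s·n⁻_{s,t}(n) − m_{s,t}(n) triangles. -/
open Finset SimpleGraph

/-- Number of `k`-cliques of a graph. -/
noncomputable def cliqueCount {V : Type*} (G : SimpleGraph V) (k : ℕ) : ℕ :=
  Nat.card {T : Finset V // G.IsNClique k T}

/-- `K_k`-covering number: minimum size of a vertex set meeting every `k`-clique. -/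
noncomputable def cliqueCover {V : Type*} [Fintype V] [DecidableEq V]
    (G : SimpleGraph V) (k : ℕ) : ℕ :=
  sInf {m | ∃ S : Finset V, S.card = m ∧ ∀ T : Finset V, G.IsNClique k T → ∃ v ∈ T, v ∈ S}

/-- Number of edges of a graph. -/
noncomputable def edgeCount {V : Type*} (G : SimpleGraph V) : ℕ := Nat.card G.edgeSet

/-- Number of edges of the Turán graph `T_r(n)`. -/
noncomputable def turanEdges (r n : ℕ) : ℕ := edgeCount (turanGraph n r)

/-- `e(n) = n² - 4⌊n²/4⌋`. -/
def eDef (n : ℕ) : ℕ := n ^ 2 - 4 * (n ^ 2 / 4)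

/-- `m_{s,t}(n)`: least `m` such that `4s - 4t - 4m + e(n)` is a perfect square. -/
noncomputable def mst (s t n : ℕ) : ℕ :=
  sInf {m : ℕ | ∃ p : ℕ, (p : ℤ) ^ 2 = 4 * s - 4 * t - 4 * m + eDef n}

/-- `R₃(n,s,t) = (4s - 4t - 4m_{s,t}(n) + e(n))^{1/2}`. -/
noncomputable def R3 (s t n : ℕ) : ℕ :=
  Nat.sqrt (4 * (s : ℤ) - 4 * t - 4 * mst s t n + eDef n).toNat

/-- Number of copies of `F` in `G`: subgraphs of `G` isomorphic to `F`. -/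
noncomputable def copyCount {α V : Type*} (F : SimpleGraph α) (G : SimpleGraph V) : ℕ :=
  Nat.card {H : G.Subgraph // Nonempty (F ≃g H.coe)}

/-- `F`-covering number of `G`. -/
noncomputable def coverNumber {α V : Type*} [Fintype V] [DecidableEq V]
    (F : SimpleGraph α) (G : SimpleGraph V) : ℕ :=
  sInf {m | ∃ S : Finset V, S.card = m ∧
    ∀ H : G.Subgraph, Nonempty (F ≃g H.coe) → ∃ v ∈ H.verts, v ∈ S}

/-- A graph `F` is `k`-critical. -/
def IsCritical {α : Type*} (k : ℕ) (F : SimpleGraph α) : Prop :=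
  F.chromaticNumber = k ∧ ∃ e ∈ F.edgeSet, (F.deleteEdges {e}).chromaticNumber < k

/-- `c(n,F)`: minimum number of copies of `F` after adding one new edge to `T_{k-1}(n)`. -/
noncomputable def cnF {α : Type*} (k n : ℕ) (F : SimpleGraph α) : ℕ :=
  sInf {c | ∃ u v : Fin n, u ≠ v ∧ ¬ (turanGraph n (k - 1)).Adj u v ∧
    c = copyCount F (turanGraph n (k - 1) ⊔ fromEdgeSet {s(u, v)})}

/-- `N_k(n,s)` from Theorem 1.3. -/
def NkBound (k s n : ℕ) : ℕ :=
  if n % (k - 1) = 0 then s * (n / (k - 1)) ^ (k - 3) * (n / (k - 1) - 1)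
  else if n % (k - 1) = 1 then s * (n / (k - 1)) ^ (k - 2) - (n / (k - 1)) ^ (k - 3)
  else s * (n / (k - 1) + 1) ^ (n % (k - 1) - 2) * (n / (k - 1)) ^ (k - n % (k - 1))

/-- `R_k(n,s,t)`. -/
noncomputable def Rk (k s t n : ℕ) : ℝ :=
  Real.sqrt ((2 * ((k : ℝ) - 1) * ((s : ℝ) - t) +
    ((k : ℝ) - 1 - (n % (k - 1) : ℕ)) * (n % (k - 1) : ℕ)) / ((k : ℝ) - 2))

/-- `c(x₁,…,x_{k-1},F)`: copies of `F` in the complete multipartite graph with parts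
`Fin (x i)` plus one edge inside part `0`. -/
noncomputable def cParts {α : Type*} (k : ℕ) (x : Fin (k - 1) → ℕ) (F : SimpleGraph α) : ℕ :=
  sInf {c | ∃ i₀ : Fin (k - 1), ∃ a b : Fin (x i₀), (i₀ : ℕ) = 0 ∧ a ≠ b ∧
    c = copyCount F (completeMultipartiteGraph (fun i => Fin (x i)) ⊔
      fromEdgeSet {s(⟨i₀, a⟩, ⟨i₀, b⟩)})}

open Fin.NatCast

/-- The extremal graph: complete bipartite on `[0,a) ∪ [a,n)`, plus a matching
`(2i,2i+1)` for `i < s` inside the first part, minus crossing edges `(2i, a)` for `i < m`. -/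
def Gr (n a s m : ℕ) : SimpleGraph (Fin n) :=
  SimpleGraph.fromRel (fun u v =>
    ((u : ℕ) < a ∧ a ≤ (v : ℕ) ∧ ¬((u : ℕ) < 2 * m ∧ (u : ℕ) % 2 = 0 ∧ (v : ℕ) = a)) ∨
    ((u : ℕ) < 2 * s ∧ (v : ℕ) < 2 * s ∧ (u : ℕ) / 2 = (v : ℕ) / 2))

lemma Gr_adj {n a s m : ℕ} {u v : Fin n} : (Gr n a s m).Adj u v ↔ u ≠ v ∧
    ((((u : ℕ) < a ∧ a ≤ (v : ℕ) ∧ ¬((u : ℕ) < 2 * m ∧ (u : ℕ) % 2 = 0 ∧ (v : ℕ) = a)) ∨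
     ((u : ℕ) < 2 * s ∧ (v : ℕ) < 2 * s ∧ (u : ℕ) / 2 = (v : ℕ) / 2)) ∨
     (((v : ℕ) < a ∧ a ≤ (u : ℕ) ∧ ¬((v : ℕ) < 2 * m ∧ (v : ℕ) % 2 = 0 ∧ (u : ℕ) = a)) ∨
     ((v : ℕ) < 2 * s ∧ (u : ℕ) < 2 * s ∧ (v : ℕ) / 2 = (u : ℕ) / 2))) := by
  simp [Gr, SimpleGraph.fromRel_adj]

lemma adj_cases {n a s m : ℕ} {u v : Fin n}
    (h : (Gr n a s m).Adj u v) :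
    ((u : ℕ) < 2 * s ∧ (v : ℕ) < 2 * s ∧ (u : ℕ) / 2 = (v : ℕ) / 2 ∧ u ≠ v) ∨
    ((u : ℕ) < a ∧ a ≤ (v : ℕ) ∧ ¬((u : ℕ) < 2 * m ∧ (u : ℕ) % 2 = 0 ∧ (v : ℕ) = a)) ∨
    ((v : ℕ) < a ∧ a ≤ (u : ℕ) ∧ ¬((v : ℕ) < 2 * m ∧ (v : ℕ) % 2 = 0 ∧ (u : ℕ) = a)) := by
  rw [Gr_adj] at h
  obtain ⟨hne, (h | h) | (h | h)⟩ := h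
  · exact Or.inr (Or.inl h)
  · exact Or.inl ⟨h.1, h.2.1, h.2.2, hne⟩
  · exact Or.inr (Or.inr h)
  · exact Or.inl ⟨h.2.1, h.1, h.2.2.symm, hne⟩

lemma fin_val_ne {n : ℕ} {u v : Fin n} (h : u ≠ v) : (u : ℕ) ≠ (v : ℕ) :=
  fun hv => h (Fin.ext hv)

/-- Core: two vertices in part A, one in part B, pairwise adjacent. -/
lemma core {n a s m : ℕ} [NeZero n] (h2sa : 2 * s + 2 ≤ a) (hn : a + s + 2 ≤ n)
    {x y z : Fin n}
    (hxy : (Gr n a s m).Adj x y) (hxz : (Gr n a s m).Adj x z)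
    (hyz : (Gr n a s m).Adj y z)
    (hx : (x : ℕ) < a) (hy : (y : ℕ) < a) (hz : a ≤ (z : ℕ)) :
    ∃ i w : ℕ, i < s ∧ a ≤ w ∧ w < n ∧ (i < m → w ≠ a) ∧
      ({x, y, z} : Finset (Fin n)) = {((2 * i : ℕ) : Fin n), ((2 * i + 1 : ℕ) : Fin n), ((w : ℕ) : Fin n)} := by
  have hmat := adj_cases hxy
  have hvne : (x : ℕ) ≠ (y : ℕ) := fin_val_ne hxy.ne
  have hmat' : (x : ℕ) < 2 * s ∧ (y : ℕ) < 2 * s ∧ (x : ℕ) / 2 = (y : ℕ) / 2 := by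
    rcases hmat with ⟨h1, h2, h3, _⟩ | ⟨_, h2, _⟩ | ⟨h1, _, _⟩
    · exact ⟨h1, h2, h3⟩
    · omega
    · omega
  obtain ⟨hx2s, hy2s, hq⟩ := hmat'
  set q := (x : ℕ) / 2 with hqdef
  have hcases : ((x : ℕ) = 2 * q ∧ (y : ℕ) = 2 * q + 1) ∨
      ((x : ℕ) = 2 * q + 1 ∧ (y : ℕ) = 2 * q) := by omega
  have hqs : q < s := by omega
  have hzn : (z : ℕ) < n := z.isLt
  have hxz' := adj_cases hxz
  have hyz' := adj_cases hyz
  -- the cross edge from the even endpoint to z is not deleted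
  have hdel : q < m → (z : ℕ) ≠ a := by
    intro hqm hza
    rcases hcases with ⟨hxe, _⟩ | ⟨_, hye⟩
    · rcases hxz' with ⟨_, h2, _⟩ | ⟨_, _, h3⟩ | ⟨h1, _, _⟩
      · omega
      · exact h3 ⟨by omega, by omega, hza⟩
      · omega
    · rcases hyz' with ⟨_, h2, _⟩ | ⟨_, _, h3⟩ | ⟨h1, _, _⟩
      · omega
      · exact h3 ⟨by omega, by omega, hza⟩
      · omega
  refine ⟨q, (z : ℕ), hqs, hz, hzn, hdel, ?_⟩
  have hz' : (((z : ℕ) : ℕ) : Fin n) = z := by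
    apply Fin.ext; simp [Fin.val_cast_of_lt hzn]
  rcases hcases with ⟨hxe, hye⟩ | ⟨hxe, hye⟩
  · have ex : x = ((2 * q : ℕ) : Fin n) := by
      apply Fin.ext; rw [Fin.val_cast_of_lt (show 2 * q < n by omega)]; exact hxe
    have ey : y = ((2 * q + 1 : ℕ) : Fin n) := by
      apply Fin.ext; rw [Fin.val_cast_of_lt (show 2 * q + 1 < n by omega)]; exact hye
    rw [ex, ey, hz']
  · have ex : x = ((2 * q + 1 : ℕ) : Fin n) := by
      apply Fin.ext; rw [Fin.val_cast_of_lt (show 2 * q + 1 < n by omega)]; exact hxe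
    have ey : y = ((2 * q : ℕ) : Fin n) := by
      apply Fin.ext; rw [Fin.val_cast_of_lt (show 2 * q < n by omega)]; exact hye
    rw [ex, ey, hz', Finset.insert_comm]

/-- Characterization of triangles in `Gr`. -/
lemma clique_iff {n a s m : ℕ} [NeZero n] (h2sa : 2 * s + 2 ≤ a) (hn : a + s + 2 ≤ n)
    (hma : m ≤ s) (T : Finset (Fin n)) :
    (Gr n a s m).IsNClique 3 T ↔ ∃ i w : ℕ, i < s ∧ a ≤ w ∧ w < n ∧ (i < m → w ≠ a) ∧
      T = {((2 * i : ℕ) : Fin n), ((2 * i + 1 : ℕ) : Fin n), ((w : ℕ) : Fin n)} := by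
  constructor
  · intro h
    rw [SimpleGraph.is3Clique_iff] at h
    obtain ⟨x, y, z, hxy, hxz, hyz, rfl⟩ := h
    by_cases hx : (x : ℕ) < a <;> by_cases hy : (y : ℕ) < a <;> by_cases hz : (z : ℕ) < a
    · -- all in A: impossible
      exfalso
      have h1 := adj_cases hxy (m := m); have h2 := adj_cases hxz (m := m)
      have h3 := adj_cases hyz (m := m)
      have nxy := fin_val_ne hxy.ne; have nxz := fin_val_ne hxz.ne
      have nyz := fin_val_ne hyz.ne
      rcases h1 with ⟨_,_,e1,_⟩|⟨_,_,_⟩|⟨_,_,_⟩ <;>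
      rcases h2 with ⟨_,_,e2,_⟩|⟨_,_,_⟩|⟨_,_,_⟩ <;>
      rcases h3 with ⟨_,_,e3,_⟩|⟨_,_,_⟩|⟨_,_,_⟩ <;> omega
    · obtain ⟨i, w, h1, h2, h3, h4, h5⟩ := core h2sa hn hxy hxz hyz hx hy (by omega)
      exact ⟨i, w, h1, h2, h3, h4, h5⟩
    · obtain ⟨i, w, h1, h2, h3, h4, h5⟩ := core h2sa hn hxz hxy hyz.symm hx hz (by omega)
      refine ⟨i, w, h1, h2, h3, h4, ?_⟩
      rw [← h5, Finset.pair_comm y z]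
    · exfalso
      rcases adj_cases (m := m) hyz with ⟨h1,_,_⟩|⟨h1,_,_⟩|⟨h1,_,_⟩ <;> omega
    · obtain ⟨i, w, h1, h2, h3, h4, h5⟩ := core h2sa hn hyz hxy.symm hxz.symm hy hz (by omega)
      refine ⟨i, w, h1, h2, h3, h4, ?_⟩
      rw [← h5, Finset.insert_comm, Finset.pair_comm x z]
    · exfalso
      rcases adj_cases (m := m) hxz with ⟨h1,_,_⟩|⟨h1,_,_⟩|⟨h1,_,_⟩ <;> omega
    · exfalso
      rcases adj_cases (m := m) hxy with ⟨h1,_,_⟩|⟨h1,_,_⟩|⟨h1,_,_⟩ <;> omega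
    · exfalso
      rcases adj_cases (m := m) hxy with ⟨h1,_,_⟩|⟨h1,_,_⟩|⟨h1,_,_⟩ <;> omega
  · rintro ⟨i, w, hi, haw, hwn, hcond, rfl⟩
    rw [SimpleGraph.is3Clique_triple_iff]
    have v1 : ((2 * i : ℕ) : Fin n).val = 2 * i := Fin.val_cast_of_lt (by omega)
    have v2 : ((2 * i + 1 : ℕ) : Fin n).val = 2 * i + 1 := Fin.val_cast_of_lt (by omega)
    have v3 : ((w : ℕ) : Fin n).val = w := Fin.val_cast_of_lt hwn
    refine ⟨?_, ?_, ?_⟩ <;> rw [Gr_adj]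
    · refine ⟨fun h => by rw [Fin.ext_iff, v1, v2] at h; omega, Or.inl (Or.inr ?_)⟩
      rw [v1, v2]; omega
    · refine ⟨fun h => by rw [Fin.ext_iff, v1, v3] at h; omega, Or.inl (Or.inl ?_)⟩
      rw [v1, v3]
      refine ⟨by omega, haw, ?_⟩
      rintro ⟨hm1, _, hm3⟩
      exact hcond (by omega) hm3
    · refine ⟨fun h => by rw [Fin.ext_iff, v2, v3] at h; omega, Or.inl (Or.inl ?_)⟩
      rw [v2, v3]
      exact ⟨by omega, haw, by omega⟩

lemma tri_count {n a s m : ℕ} [NeZero n] (h2sa : 2 * s + 2 ≤ a) (hn : a + s + 2 ≤ n)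
    (hma : m ≤ s) : cliqueCount (Gr n a s m) 3 + m = s * (n - a) := by
  classical
  set G := Gr n a s m with hG
  set D : Finset (ℕ × ℕ) := (range s ×ˢ Ico a n).filter (fun p => p.1 < m → p.2 ≠ a) with hD
  set f : ℕ × ℕ → Finset (Fin n) := fun p =>
    {((2 * p.1 : ℕ) : Fin n), ((2 * p.1 + 1 : ℕ) : Fin n), ((p.2 : ℕ) : Fin n)} with hf
  have hmemD : ∀ p : ℕ × ℕ, p ∈ D ↔ p.1 < s ∧ a ≤ p.2 ∧ p.2 < n ∧ (p.1 < m → p.2 ≠ a) := by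
    intro p
    simp [hD, Finset.mem_filter, Finset.mem_product, Finset.mem_range, Finset.mem_Ico, and_assoc]
  have hset : {T : Finset (Fin n) | G.IsNClique 3 T} = ↑(D.image f) := by
    ext T
    rw [Set.mem_setOf_eq, clique_iff h2sa hn hma, Finset.coe_image, Set.mem_image]
    constructor
    · rintro ⟨i, w, h1, h2, h3, h4, h5⟩
      exact ⟨(i, w), by rw [Finset.mem_coe, hmemD]; exact ⟨h1, h2, h3, h4⟩, h5.symm⟩
    · rintro ⟨p, hp, rfl⟩
      rw [Finset.mem_coe, hmemD] at hp
      exact ⟨p.1, p.2, hp.1, hp.2.1, hp.2.2.1, hp.2.2.2, rfl⟩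
  have hinj : Set.InjOn f D := by
    rintro ⟨i, w⟩ hiw ⟨i', w'⟩ hiw' h
    rw [Finset.mem_coe, hmemD] at hiw
    rw [Finset.mem_coe, hmemD] at hiw'
    obtain ⟨his, haw, hwn, -⟩ := hiw
    obtain ⟨his', haw', hwn', -⟩ := hiw'
    have v1 : ((2 * i : ℕ) : Fin n).val = 2 * i := Fin.val_cast_of_lt (by omega)
    have v2 : ((2 * i + 1 : ℕ) : Fin n).val = 2 * i + 1 := Fin.val_cast_of_lt (by omega)
    have v3 : ((w : ℕ) : Fin n).val = w := Fin.val_cast_of_lt (by omega)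
    have v1' : ((2 * i' : ℕ) : Fin n).val = 2 * i' := Fin.val_cast_of_lt (by omega)
    have v2' : ((2 * i' + 1 : ℕ) : Fin n).val = 2 * i' + 1 := Fin.val_cast_of_lt (by omega)
    have v3' : ((w' : ℕ) : Fin n).val = w' := Fin.val_cast_of_lt (by omega)
    have m1 : ((w : ℕ) : Fin n) ∈ f (i', w') := by
      rw [← h]; simp [hf]
    have m2 : ((2 * i : ℕ) : Fin n) ∈ f (i', w') := by
      rw [← h]; simp [hf]
    simp only [hf, Finset.mem_insert, Finset.mem_singleton] at m1 m2
    have hww : w = w' := by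
      rcases m1 with h1 | h1 | h1 <;> rw [Fin.ext_iff] at h1 <;> omega
    have hii : i = i' := by
      rcases m2 with h1 | h1 | h1 <;> rw [Fin.ext_iff] at h1 <;> omega
    simp [hww, hii]
  have h1 : cliqueCount G 3 = (D.image f).card := by
    have e1 : Nat.card {T : Finset (Fin n) // G.IsNClique 3 T} =
        ({T : Finset (Fin n) | G.IsNClique 3 T} : Set _).ncard := Nat.card_coe_set_eq _
    rw [cliqueCount, e1, hset, Set.ncard_coe_finset]
  have h2 : (D.image f).card = D.card := Finset.card_image_of_injOn hinj
  have h3 : D.card + m = s * (n - a) := by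
    have hsub : range m ×ˢ ({a} : Finset ℕ) ⊆ range s ×ˢ Ico a n := by
      rintro ⟨i, w⟩ hp
      simp only [Finset.mem_product, Finset.mem_range, Finset.mem_singleton] at hp
      simp only [Finset.mem_product, Finset.mem_range, Finset.mem_Ico]
      omega
    have hDeq : D = (range s ×ˢ Ico a n) \ (range m ×ˢ ({a} : Finset ℕ)) := by
      ext ⟨i, w⟩
      simp only [hD, Finset.mem_filter, Finset.mem_sdiff, Finset.mem_product,
        Finset.mem_range, Finset.mem_Ico, Finset.mem_singleton, not_and]
      try omega
    have e2 := Finset.card_sdiff_add_card_eq_card hsub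
    rw [hDeq]
    rw [Finset.card_product, Finset.card_product, Finset.card_range, Finset.card_range,
      Finset.card_singleton, Nat.card_Ico] at e2
    omega
  omega

lemma edge_count {n a s m : ℕ} [NeZero n] (h2sa : 2 * s + 2 ≤ a) (hn : a + s + 2 ≤ n)
    (hma : m ≤ s) : edgeCount (Gr n a s m) + m = a * (n - a) + s := by
  classical
  set G := Gr n a s m with hG
  set crossD : Finset (ℕ × ℕ) :=
    (range a ×ˢ Ico a n).filter (fun p => ¬(p.1 < 2 * m ∧ p.1 % 2 = 0 ∧ p.2 = a)) with hcrossD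
  set fc : ℕ × ℕ → Sym2 (Fin n) := fun p => s(((p.1 : ℕ) : Fin n), ((p.2 : ℕ) : Fin n)) with hfc
  set fm : ℕ → Sym2 (Fin n) := fun i => s(((2 * i : ℕ) : Fin n), ((2 * i + 1 : ℕ) : Fin n)) with hfm
  set Efin : Finset (Sym2 (Fin n)) := crossD.image fc ∪ (range s).image fm with hEfin
  have hmemC : ∀ p : ℕ × ℕ, p ∈ crossD ↔
      p.1 < a ∧ a ≤ p.2 ∧ p.2 < n ∧ ¬(p.1 < 2 * m ∧ p.1 % 2 = 0 ∧ p.2 = a) := by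
    intro p
    simp [hcrossD, Finset.mem_filter, Finset.mem_product, Finset.mem_range, Finset.mem_Ico,
      and_assoc]
  -- the edge set is `Efin`
  have hset : G.edgeSet = ↑Efin := by
    ext e
    induction e with
    | _ u v =>
      simp only [SimpleGraph.mem_edgeSet]
      constructor
      · intro h
        have hne : (u : ℕ) ≠ (v : ℕ) := fin_val_ne h.ne
        rcases adj_cases h with ⟨h1, h2, h3, _⟩ | ⟨h1, h2, h3⟩ | ⟨h1, h2, h3⟩
        · -- matching edge
          set q := (u : ℕ) / 2 with hq
          have hcases : ((u : ℕ) = 2 * q ∧ (v : ℕ) = 2 * q + 1) ∨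
              ((u : ℕ) = 2 * q + 1 ∧ (v : ℕ) = 2 * q) := by omega
          have hqs : q < s := by omega
          have hin : fm q ∈ Efin := by
            rw [hEfin, Finset.mem_union]
            exact Or.inr (Finset.mem_image_of_mem fm (Finset.mem_range.2 hqs))
          rw [Finset.mem_coe]
          have eu : ((2 * q : ℕ) : Fin n).val = 2 * q := Fin.val_cast_of_lt (by omega)
          have ev : ((2 * q + 1 : ℕ) : Fin n).val = 2 * q + 1 := Fin.val_cast_of_lt (by omega)
          rcases hcases with ⟨e1, e2⟩ | ⟨e1, e2⟩
          · have : s(u, v) = fm q := by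
              rw [hfm, Sym2.eq_iff]
              exact Or.inl ⟨Fin.ext (by omega), Fin.ext (by omega)⟩
            rw [this]; exact hin
          · have : s(u, v) = fm q := by
              rw [hfm, Sym2.eq_iff]
              exact Or.inr ⟨Fin.ext (by omega), Fin.ext (by omega)⟩
            rw [this]; exact hin
        · rw [Finset.mem_coe, hEfin, Finset.mem_union]
          left
          refine Finset.mem_image.2 ⟨((u : ℕ), (v : ℕ)), ?_, ?_⟩
          · rw [hmemC]; exact ⟨h1, h2, v.isLt, h3⟩
          · rw [hfc]; simp [Fin.cast_val_eq_self]
        · rw [Finset.mem_coe, hEfin, Finset.mem_union]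
          left
          refine Finset.mem_image.2 ⟨((v : ℕ), (u : ℕ)), ?_, ?_⟩
          · rw [hmemC]; exact ⟨h1, h2, u.isLt, h3⟩
          · rw [hfc]; simp [Fin.cast_val_eq_self, Sym2.eq_swap]
      · intro h
        rw [Finset.mem_coe, hEfin, Finset.mem_union] at h
        rcases h with h | h
        · obtain ⟨p, hp, hpe⟩ := Finset.mem_image.1 h
          rw [hmemC] at hp
          obtain ⟨h1, h2, h3, h4⟩ := hp
          have eu : ((p.1 : ℕ) : Fin n).val = p.1 := Fin.val_cast_of_lt (by omega)
          have ev : ((p.2 : ℕ) : Fin n).val = p.2 := Fin.val_cast_of_lt (by omega)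
          rw [hfc] at hpe
          rcases Sym2.eq_iff.1 hpe with ⟨e1, e2⟩ | ⟨e1, e2⟩ <;>
          · rw [Gr_adj]
            subst e1 e2
            constructor
            · intro hc; rw [Fin.ext_iff] at hc; omega
            · first
              | exact Or.inl (Or.inl (by rw [eu, ev]; exact ⟨h1, h2, h4⟩))
              | exact Or.inr (Or.inl (by rw [eu, ev]; exact ⟨h1, h2, h4⟩))
        · obtain ⟨i, hi, hie⟩ := Finset.mem_image.1 h
          rw [Finset.mem_range] at hi
          have eu : ((2 * i : ℕ) : Fin n).val = 2 * i := Fin.val_cast_of_lt (by omega)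
          have ev : ((2 * i + 1 : ℕ) : Fin n).val = 2 * i + 1 := Fin.val_cast_of_lt (by omega)
          rw [hfm] at hie
          rcases Sym2.eq_iff.1 hie with ⟨e1, e2⟩ | ⟨e1, e2⟩ <;>
          · rw [Gr_adj]
            subst e1 e2
            constructor
            · intro hc; rw [Fin.ext_iff] at hc; omega
            · first
              | exact Or.inl (Or.inr (by rw [eu, ev]; exact ⟨by omega, by omega, by omega⟩))
              | exact Or.inr (Or.inr (by rw [eu, ev]; exact ⟨by omega, by omega, by omega⟩))
  -- cardinalities
  have hinjc : Set.InjOn fc crossD := by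
    rintro ⟨u, w⟩ hp ⟨u', w'⟩ hp' h
    rw [Finset.mem_coe, hmemC] at hp hp'
    obtain ⟨h1, h2, h3, -⟩ := hp
    obtain ⟨h1', h2', h3', -⟩ := hp'
    have h : s(((u : ℕ) : Fin n), ((w : ℕ) : Fin n)) =
        s(((u' : ℕ) : Fin n), ((w' : ℕ) : Fin n)) := h
    have e1 : ((u : ℕ) : Fin n).val = u := Fin.val_cast_of_lt (by omega)
    have e2 : ((w : ℕ) : Fin n).val = w := Fin.val_cast_of_lt (by omega)
    have e1' : ((u' : ℕ) : Fin n).val = u' := Fin.val_cast_of_lt (by omega)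
    have e2' : ((w' : ℕ) : Fin n).val = w' := Fin.val_cast_of_lt (by omega)
    rcases Sym2.eq_iff.1 h with ⟨f1, f2⟩ | ⟨f1, f2⟩ <;>
      rw [Fin.ext_iff] at f1 f2 <;>
      · simp only [Prod.mk.injEq]; omega
  have hinjm : Set.InjOn fm (range s) := by
    intro i hi j hj h
    rw [Finset.mem_coe, Finset.mem_range] at hi hj
    rw [hfm] at h
    have e1 : ((2 * i : ℕ) : Fin n).val = 2 * i := Fin.val_cast_of_lt (by omega)
    have e2 : ((2 * i + 1 : ℕ) : Fin n).val = 2 * i + 1 := Fin.val_cast_of_lt (by omega)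
    have e1' : ((2 * j : ℕ) : Fin n).val = 2 * j := Fin.val_cast_of_lt (by omega)
    have e2' : ((2 * j + 1 : ℕ) : Fin n).val = 2 * j + 1 := Fin.val_cast_of_lt (by omega)
    rcases Sym2.eq_iff.1 h with ⟨f1, f2⟩ | ⟨f1, f2⟩ <;> rw [Fin.ext_iff] at f1 f2 <;> omega
  have hdisj : Disjoint (crossD.image fc) ((range s).image fm) := by
    rw [Finset.disjoint_left]
    intro e he he'
    obtain ⟨p, hp, hpe⟩ := Finset.mem_image.1 he
    obtain ⟨i, hi, hie⟩ := Finset.mem_image.1 he'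
    rw [hmemC] at hp
    rw [Finset.mem_range] at hi
    obtain ⟨h1, h2, h3, -⟩ := hp
    have heq : fc p = fm i := hpe.trans hie.symm
    rw [hfc, hfm] at heq
    have e1 : ((p.1 : ℕ) : Fin n).val = p.1 := Fin.val_cast_of_lt (by omega)
    have e2 : ((p.2 : ℕ) : Fin n).val = p.2 := Fin.val_cast_of_lt (by omega)
    have e1' : ((2 * i : ℕ) : Fin n).val = 2 * i := Fin.val_cast_of_lt (by omega)
    have e2' : ((2 * i + 1 : ℕ) : Fin n).val = 2 * i + 1 := Fin.val_cast_of_lt (by omega)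
    rcases Sym2.eq_iff.1 heq with ⟨f1, f2⟩ | ⟨f1, f2⟩ <;> rw [Fin.ext_iff] at f1 f2 <;> omega
  have hcardC : crossD.card + m = a * (n - a) := by
    set B : Finset (ℕ × ℕ) := (range m).image (fun i => (2 * i, a)) with hB
    have hmemB : ∀ p : ℕ × ℕ, p ∈ B ↔ p.1 < 2 * m ∧ p.1 % 2 = 0 ∧ p.2 = a := by
      rintro ⟨u, w⟩
      rw [hB, Finset.mem_image]
      constructor
      · rintro ⟨i, hi, heq⟩
        rw [Finset.mem_range] at hi
        rw [Prod.mk.injEq] at heq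
        omega
      · rintro ⟨h1, h2, h3⟩
        refine ⟨u / 2, Finset.mem_range.2 (by omega), ?_⟩
        rw [Prod.mk.injEq]; omega
    have hsub : B ⊆ range a ×ˢ Ico a n := by
      intro p hp
      rw [hmemB] at hp
      rw [Finset.mem_product, Finset.mem_range, Finset.mem_Ico]
      omega
    have hCeq : crossD = (range a ×ˢ Ico a n) \ B := by
      ext p
      rw [hmemC, Finset.mem_sdiff, hmemB, Finset.mem_product, Finset.mem_range, Finset.mem_Ico]
      constructor
      · rintro ⟨h1, h2, h3, h4⟩; exact ⟨⟨h1, h2, h3⟩, h4⟩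
      · rintro ⟨⟨h1, h2, h3⟩, h4⟩; exact ⟨h1, h2, h3, h4⟩
    have hBcard : B.card = m := by
      rw [hB, Finset.card_image_of_injOn, Finset.card_range]
      intro i _ j _ h
      rw [Prod.mk.injEq] at h
      omega
    have e2 := Finset.card_sdiff_add_card_eq_card hsub
    rw [Finset.card_product, Finset.card_range, Nat.card_Ico] at e2
    rw [hCeq]
    omega
  have hE : edgeCount G = Efin.card := by
    have e1 : Nat.card G.edgeSet = (G.edgeSet).ncard := Nat.card_coe_set_eq _
    rw [edgeCount, e1, hset, Set.ncard_coe_finset]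
  rw [hE, hEfin, Finset.card_union_of_disjoint hdisj, Finset.card_image_of_injOn hinjc,
    Finset.card_image_of_injOn hinjm, Finset.card_range]
  omega

lemma cover_eq {n a s m : ℕ} [NeZero n] (h2sa : 2 * s + 2 ≤ a) (hn : a + s + 2 ≤ n)
    (hma : m ≤ s) : cliqueCover (Gr n a s m) 3 = s := by
  classical
  set G := Gr n a s m with hG
  have hnpos : 0 < n := by omega
  -- the odd matched vertices form a cover
  have hmem : s ∈ {r | ∃ S : Finset (Fin n), S.card = r ∧
      ∀ T : Finset (Fin n), G.IsNClique 3 T → ∃ v ∈ T, v ∈ S} := by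
    refine ⟨(range s).image (fun i => ((2 * i + 1 : ℕ) : Fin n)), ?_, ?_⟩
    · rw [Finset.card_image_of_injOn, Finset.card_range]
      intro i hi j hj hij
      rw [Finset.mem_coe, Finset.mem_range] at hi hj
      rw [Fin.ext_iff, Fin.val_cast_of_lt (by omega), Fin.val_cast_of_lt (by omega)] at hij
      omega
    · intro T hT
      rw [clique_iff h2sa hn hma] at hT
      obtain ⟨i, w, hi, -, -, -, rfl⟩ := hT
      refine ⟨((2 * i + 1 : ℕ) : Fin n), ?_, ?_⟩
      · simp
      · exact Finset.mem_image_of_mem _ (Finset.mem_range.2 hi)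
  apply le_antisymm
  · exact Nat.sInf_le hmem
  · refine le_csInf ⟨s, hmem⟩ ?_
    rintro r ⟨S, hScard, hScov⟩
    -- s pairwise disjoint triangles
    have hclique : ∀ i : ℕ, i < s → G.IsNClique 3
        ({((2 * i : ℕ) : Fin n), ((2 * i + 1 : ℕ) : Fin n), ((a + 1 + i : ℕ) : Fin n)} :
          Finset (Fin n)) := by
      intro i hi
      rw [clique_iff h2sa hn hma]
      exact ⟨i, a + 1 + i, hi, by omega, by omega, fun _ => by omega, rfl⟩
    have hch : ∀ i : ℕ, ∃ v : Fin n, i < s →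
        v ∈ ({((2 * i : ℕ) : Fin n), ((2 * i + 1 : ℕ) : Fin n), ((a + 1 + i : ℕ) : Fin n)} :
          Finset (Fin n)) ∧ v ∈ S := by
      intro i
      by_cases hi : i < s
      · obtain ⟨v, hv1, hv2⟩ := hScov _ (hclique i hi)
        exact ⟨v, fun _ => ⟨hv1, hv2⟩⟩
      · exact ⟨⟨0, hnpos⟩, fun h => absurd h hi⟩
    choose f hf using hch
    rw [← hScard, ← Finset.card_range s]
    apply Finset.card_le_card_of_injOn f
    · intro i hi
      exact (hf i (Finset.mem_range.1 hi)).2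
    · intro i hi j hj hij
      rw [Finset.mem_coe, Finset.mem_range] at hi hj
      obtain ⟨hm1, -⟩ := hf i hi
      obtain ⟨hm2, -⟩ := hf j hj
      rw [hij] at hm1
      simp only [Finset.mem_insert, Finset.mem_singleton] at hm1 hm2
      have d1 : (f j : ℕ) = 2 * i ∨ (f j : ℕ) = 2 * i + 1 ∨ (f j : ℕ) = a + 1 + i := by
        rcases hm1 with h | h | h
        · exact Or.inl (by rw [h]; exact Fin.val_cast_of_lt (by omega))
        · exact Or.inr (Or.inl (by rw [h]; exact Fin.val_cast_of_lt (by omega)))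
        · exact Or.inr (Or.inr (by rw [h]; exact Fin.val_cast_of_lt (by omega)))
      have d2 : (f j : ℕ) = 2 * j ∨ (f j : ℕ) = 2 * j + 1 ∨ (f j : ℕ) = a + 1 + j := by
        rcases hm2 with h | h | h
        · exact Or.inl (by rw [h]; exact Fin.val_cast_of_lt (by omega))
        · exact Or.inr (Or.inl (by rw [h]; exact Fin.val_cast_of_lt (by omega)))
        · exact Or.inr (Or.inr (by rw [h]; exact Fin.val_cast_of_lt (by omega)))
      omega

lemma sq_form (x : ℕ) : ∃ K, x ^ 2 = 4 * K + x % 2 := by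
  rcases Nat.even_or_odd x with ⟨k, hk⟩ | ⟨k, hk⟩
  · refine ⟨k * k, ?_⟩
    have h1 : x ^ 2 = 4 * (k * k) := by rw [hk]; ring
    have h2 : x % 2 = 0 := by omega
    omega
  · refine ⟨k * k + k, ?_⟩
    have h1 : x ^ 2 = 4 * (k * k + k) + 1 := by rw [hk]; ring
    have h2 : x % 2 = 1 := by omega
    omega

lemma mst_R3_spec (s t : ℕ) (hts : t < s) (n : ℕ) :
    (R3 s t n) ^ 2 + 4 * mst s t n + 4 * t = 4 * s + eDef n ∧ eDef n ≤ 1 := by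
  have he : eDef n ≤ 1 ∧ eDef n = n % 2 := by
    obtain ⟨K, hK⟩ := sq_form n
    have : eDef n = n ^ 2 - 4 * (n ^ 2 / 4) := rfl
    omega
  have hmem : (s - t) ∈ {m : ℕ | ∃ p : ℕ, (p : ℤ) ^ 2 = 4 * s - 4 * t - 4 * m + eDef n} := by
    refine ⟨eDef n, ?_⟩
    rw [Nat.cast_sub hts.le]
    have : eDef n = 0 ∨ eDef n = 1 := by omega
    rcases this with h | h <;> rw [h] <;> push_cast <;> ring
  obtain ⟨p, hp'⟩ := Nat.sInf_mem ⟨s - t, hmem⟩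
  have hp : (p : ℤ) ^ 2 = 4 * s - 4 * t - 4 * (mst s t n) + eDef n := hp'
  have hR : R3 s t n = p := by
    rw [R3]
    have h1 : (4 * (s : ℤ) - 4 * t - 4 * mst s t n + eDef n) = ((p ^ 2 : ℕ) : ℤ) := by
      push_cast
      linarith [hp]
    rw [h1, Int.toNat_natCast, Nat.sqrt_eq']
  have hz : ((p ^ 2 + 4 * mst s t n + 4 * t : ℕ) : ℤ) = ((4 * s + eDef n : ℕ) : ℤ) := by
    push_cast
    linarith [hp]
  have hn : p ^ 2 + 4 * mst s t n + 4 * t = 4 * s + eDef n := by exact_mod_cast hz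
  rw [hR]
  exact ⟨hn, he.1⟩

/-- existence of an extremal graph achieving the triangle bound. -/
theorem stmt_1 (s t : ℕ) (ht : 1 ≤ t) (hts : t < s) :
    ∃ n₀ : ℕ, ∀ n ≥ n₀, ∃ G : SimpleGraph (Fin n),
      edgeCount G = n ^ 2 / 4 + t ∧ cliqueCover G 3 = s ∧
      (cliqueCount G 3 : ℚ) = (s : ℚ) * (((n : ℚ) - R3 s t n) / 2) - mst s t n := by
  refine ⟨20 * s + 20, fun n hn => ?_⟩
  haveI : NeZero n := ⟨by omega⟩
  obtain ⟨hNat, he1⟩ := mst_R3_spec s t hts n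
  set m := mst s t n with hm
  set R := R3 s t n with hRdef
  -- basic bounds
  obtain ⟨K1, hK1⟩ := sq_form R
  obtain ⟨K2, hK2⟩ := sq_form n
  have heD : eDef n = n ^ 2 - 4 * (n ^ 2 / 4) := rfl
  have heval : eDef n = n % 2 := by omega
  have hma : m ≤ s ∧ m + t ≤ s := by omega
  have hRle : R ≤ 2 * s + 1 := by
    by_contra h
    push_neg at h
    have h2 : (2 * s + 2) ^ 2 ≤ R ^ 2 := Nat.pow_le_pow_left (by omega) 2
    have h3 : (2 * s + 2) ^ 2 = 4 * (s * s) + 8 * s + 4 := by ring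
    have h4 : R ^ 2 ≤ 4 * s + 1 := by omega
    nlinarith
  have hpar : R % 2 = n % 2 := by omega
  -- the two parts
  set b := (n - R) / 2 with hb
  have h2b : 2 * b + R = n := by omega
  set a := n - b with ha
  have haa : a = b + R := by omega
  have h2sa : 2 * s + 2 ≤ a := by omega
  have hnb : a + s + 2 ≤ n := by omega
  have h4ab : 4 * (a * b) + R ^ 2 = n ^ 2 := by
    rw [haa, ← h2b]; ring
  have hkey : a * b + s = n ^ 2 / 4 + t + m := by omega
  refine ⟨Gr n a s m, ?_, cover_eq h2sa hnb hma.1, ?_⟩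
  · have hec := edge_count (n := n) (a := a) (s := s) (m := m) h2sa hnb hma.1
    have hba : n - a = b := by omega
    rw [hba] at hec
    omega
  · have htc := tri_count (n := n) (a := a) (s := s) (m := m) h2sa hnb hma.1
    have hba : n - a = b := by omega
    rw [hba] at htc
    have hbq : ((n : ℚ) - R) / 2 = b := by
      have : ((2 * b + R : ℕ) : ℚ) = n := by rw [h2b]
      push_cast at this
      linarith
    rw [hbq]
    have : ((cliqueCount (Gr n a s m) 3 + m : ℕ) : ℚ) = ((s * b : ℕ) : ℚ) := by rw [htc]
    push_cast at this
    linarith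
end

section
/- Let s > t ≥ 1 be integers such that s − t is a perfect square and s − t > 4. Then for all sufficiently large even n there exists a simple graph G on n vertices with exactly ⌊n²/4⌋ + t edges and triangle covering number τ₃(G) ≥ s whose number of triangles satisfies N₃(G) = sn/2 − s·(s−t)^{1/2} < (s−1)⌊n/2⌋ + ⌈n/2⌉ − 2(s−t). In particular, the conjecture of Xiao and Katona that every n-vertex graph with ⌊n²/4⌋ + t edges and τ₃(G) ≥ s has at least (s−1)⌊n/2⌋ + ⌈n/2⌉ − 2(s−t) triangles is false. -/
open Finset SimpleGraph
open Fin.NatCast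

def xkG (n a s : ℕ) : SimpleGraph (Fin n) where
  Adj u v := u ≠ v ∧ ((((u : ℕ) < a) ↔ ¬((v : ℕ) < a)) ∨ ((u:ℕ)/2 = (v:ℕ)/2 ∧ (u:ℕ)/2 < s))
  symm := by
    constructor
    rintro u v ⟨h1, h2⟩
    exact ⟨h1.symm, by omega⟩
  loopless := by constructor; rintro u ⟨h, -⟩; exact h rfl

instance xkG.instDec (n a s : ℕ) : DecidableRel (xkG n a s).Adj := fun u v =>
  inferInstanceAs (Decidable (_ ∧ _))

lemma xk_adj {n a s : ℕ} {u v : Fin n} : (xkG n a s).Adj u v ↔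
    u ≠ v ∧ ((((u : ℕ) < a) ↔ ¬((v : ℕ) < a)) ∨ ((u:ℕ)/2 = (v:ℕ)/2 ∧ (u:ℕ)/2 < s)) :=
  Iff.rfl

lemma xk_card_lt {n a : ℕ} (h : a ≤ n) :
    #(Finset.univ.filter fun v : Fin n => (v : ℕ) < a) = a := by
  have e : {v : Fin n // (v : ℕ) < a} ≃ Fin a :=
    { toFun := fun v => ⟨(v.1 : ℕ), v.2⟩
      invFun := fun i => ⟨⟨(i : ℕ), lt_of_lt_of_le i.2 h⟩, i.2⟩
      left_inv := fun v => by ext; rfl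
      right_inv := fun i => rfl }
  rw [← Fintype.card_subtype, Fintype.card_congr e, Fintype.card_fin]

lemma xk_card_ge {n a : ℕ} (h : a ≤ n) :
    #(Finset.univ.filter fun v : Fin n => a ≤ (v : ℕ)) = n - a := by
  classical
  have h1 := Finset.card_filter_add_card_filter_not
    (s := (Finset.univ : Finset (Fin n))) (p := fun v : Fin n => (v : ℕ) < a)
  simp only [not_lt] at h1
  rw [xk_card_lt h, Finset.card_univ, Fintype.card_fin] at h1
  omega

lemma xk_tri {n s p m : ℕ} [NeZero n] (hn : n = 2*m) (hm : 2*s + 2*p + 2 ≤ m)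
    (T : Finset (Fin n)) :
    (xkG n (m+p) s).IsNClique 3 T ↔
      ∃ i : ℕ, i < s ∧ ∃ y : Fin n, m + p ≤ (y:ℕ) ∧
        T = {(↑(2*i) : Fin n), (↑(2*i+1) : Fin n), y} := by
  constructor
  · intro h
    rw [is3Clique_iff] at h
    obtain ⟨u, v, w, huv, huw, hvw, rfl⟩ := h
    have key : ∀ x y : Fin n, (xkG n (m+p) s).Adj x y →
        ¬(m + p ≤ (x:ℕ) ∧ m + p ≤ (y:ℕ)) := by
      rintro x y ⟨-, h | ⟨h1, h2⟩⟩ ⟨hx, hy⟩ <;> omega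
    have match' : ∀ x y : Fin n, (xkG n (m+p) s).Adj x y →
        (x:ℕ) < m + p → (y:ℕ) < m + p → (x:ℕ)/2 = (y:ℕ)/2 ∧ (x:ℕ)/2 < s ∧ (x:ℕ) ≠ (y:ℕ) := by
      rintro x y ⟨hne, h | ⟨h1, h2⟩⟩ hx hy
      · omega
      · exact ⟨h1, h2, fun hc => hne (Fin.ext hc)⟩
    have main : ∀ x y z : Fin n, (xkG n (m+p) s).Adj x y → (xkG n (m+p) s).Adj x z →
        (xkG n (m+p) s).Adj y z → (x:ℕ) < m + p → (y:ℕ) < m + p → m + p ≤ (z:ℕ) →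
        ∃ i : ℕ, i < s ∧ ∃ yy : Fin n, m + p ≤ (yy:ℕ) ∧
          ({x, y, z} : Finset (Fin n)) = {(↑(2*i) : Fin n), (↑(2*i+1) : Fin n), yy} := by
      intro x y z hxy hxz hyz hx hy hz
      obtain ⟨hq, hqs, hne⟩ := match' x y hxy hx hy
      refine ⟨(x:ℕ)/2, hqs, z, hz, ?_⟩
      have e1 : ((↑(2*((x:ℕ)/2)) : Fin n) : ℕ) = 2*((x:ℕ)/2) :=
        Fin.val_cast_of_lt (by omega)
      have e2 : ((↑(2*((x:ℕ)/2)+1) : Fin n) : ℕ) = 2*((x:ℕ)/2)+1 :=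
        Fin.val_cast_of_lt (by omega)
      ext c
      simp only [Finset.mem_insert, Finset.mem_singleton, Fin.ext_iff, e1, e2]
      omega
    by_cases hu : (u:ℕ) < m + p <;> by_cases hv : (v:ℕ) < m + p <;>
      by_cases hw : (w:ℕ) < m + p
    · -- all small: contradiction
      obtain ⟨q1, -, ne1⟩ := match' u v huv hu hv
      obtain ⟨q2, -, ne2⟩ := match' u w huw hu hw
      obtain ⟨q3, -, ne3⟩ := match' v w hvw hv hw
      omega
    · exact main u v w huv huw hvw hu hv (by omega)
    · obtain ⟨i, hi, yy, hyy, hT⟩ := main u w v huw huv hvw.symm hu hw (by omega)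
      refine ⟨i, hi, yy, hyy, ?_⟩
      rw [← hT]; ext c; simp only [Finset.mem_insert, Finset.mem_singleton]; tauto
    · exact absurd ⟨by omega, by omega⟩ (key v w hvw)
    · obtain ⟨i, hi, yy, hyy, hT⟩ := main v w u hvw huv.symm huw.symm hv hw (by omega)
      refine ⟨i, hi, yy, hyy, ?_⟩
      rw [← hT]; ext c; simp only [Finset.mem_insert, Finset.mem_singleton]; tauto
    · exact absurd ⟨by omega, by omega⟩ (key u w huw)
    · exact absurd ⟨by omega, by omega⟩ (key u v huv)
    · exact absurd ⟨by omega, by omega⟩ (key u v huv)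
  · rintro ⟨i, hi, y, hy, rfl⟩
    have e1 : ((↑(2*i) : Fin n) : ℕ) = 2*i := Fin.val_cast_of_lt (by omega)
    have e2 : ((↑(2*i+1) : Fin n) : ℕ) = 2*i+1 := Fin.val_cast_of_lt (by omega)
    rw [is3Clique_triple_iff]
    refine ⟨⟨fun hc => ?_, Or.inr ⟨by omega, by omega⟩⟩,
      ⟨fun hc => ?_, Or.inl (by omega)⟩, ⟨fun hc => ?_, Or.inl (by omega)⟩⟩
    · rw [Fin.ext_iff, e1, e2] at hc; omega
    · rw [Fin.ext_iff, e1] at hc; omega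
    · rw [Fin.ext_iff, e2] at hc; omega

lemma xk_count {n s p m : ℕ} [NeZero n] (hn : n = 2*m) (hm : 2*s + 2*p + 2 ≤ m) :
    cliqueCount (xkG n (m+p) s) 3 = s * (m - p) := by
  classical
  rw [cliqueCount, Nat.card_eq_fintype_card, Fintype.card_subtype]
  have hinj : Set.InjOn (fun q : ℕ × Fin n =>
      ({(↑(2*q.1) : Fin n), (↑(2*q.1+1) : Fin n), q.2} : Finset (Fin n)))
      ↑((Finset.range s) ×ˢ (Finset.univ.filter fun y : Fin n => m + p ≤ (y:ℕ))) := by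
    rintro ⟨i, y⟩ hmem ⟨j, z⟩ hmem2 heq
    simp only [Finset.mem_coe, Finset.mem_product, mem_range, mem_filter, mem_univ,
      true_and] at hmem hmem2
    simp only [] at heq
    obtain ⟨hi, hy⟩ := hmem
    obtain ⟨hj, hz⟩ := hmem2
    have e1 : ((↑(2*i) : Fin n) : ℕ) = 2*i := Fin.val_cast_of_lt (by omega)
    have e2 : ((↑(2*i+1) : Fin n) : ℕ) = 2*i+1 := Fin.val_cast_of_lt (by omega)
    have e3 : ((↑(2*j) : Fin n) : ℕ) = 2*j := Fin.val_cast_of_lt (by omega)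
    have e4 : ((↑(2*j+1) : Fin n) : ℕ) = 2*j+1 := Fin.val_cast_of_lt (by omega)
    simp only [Prod.mk.injEq]
    have h1 : (↑(2*i) : Fin n) ∈ ({(↑(2*j) : Fin n), (↑(2*j+1) : Fin n), z} : Finset (Fin n)) := by
      rw [← heq]; simp
    have h2 : y ∈ ({(↑(2*j) : Fin n), (↑(2*j+1) : Fin n), z} : Finset (Fin n)) := by
      rw [← heq]; simp
    simp only [Finset.mem_insert, Finset.mem_singleton, Fin.ext_iff, e1, e2, e3, e4] at h1 h2
    constructor
    · omega
    · rw [Fin.ext_iff]; omega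
  have himg : (Finset.univ.filter fun T : Finset (Fin n) => (xkG n (m+p) s).IsNClique 3 T)
      = ((Finset.range s) ×ˢ (Finset.univ.filter fun y : Fin n => m + p ≤ (y:ℕ))).image
          (fun q : ℕ × Fin n =>
            ({(↑(2*q.1) : Fin n), (↑(2*q.1+1) : Fin n), q.2} : Finset (Fin n))) := by
    ext T
    simp only [mem_filter, mem_univ, true_and, Finset.mem_image, Finset.mem_product,
      mem_range, xk_tri hn hm]
    constructor
    · rintro ⟨i, hi, y, hy, rfl⟩
      exact ⟨(i, y), ⟨hi, by simp [hy]⟩, rfl⟩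
    · rintro ⟨⟨i, y⟩, ⟨hi, hy⟩, rfl⟩
      exact ⟨i, hi, y, by simpa using hy, rfl⟩
  rw [himg, Finset.card_image_of_injOn hinj, Finset.card_product, Finset.card_range,
    xk_card_ge (by omega)]
  congr 1
  omega

lemma xk_deg {n s p m : ℕ} [NeZero n] (hn : n = 2*m) (hm : 2*s + 2*p + 2 ≤ m) (v : Fin n) :
    (xkG n (m+p) s).degree v =
      (if (v:ℕ) < m + p then m - p else m + p) + (if (v:ℕ) < 2*s then 1 else 0) := by
  classical
  rw [← card_neighborFinset_eq_degree, neighborFinset_eq_filter]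
  by_cases hv : (v:ℕ) < m + p
  · by_cases hv2 : (v:ℕ) < 2*s
    · -- matched vertex
      have hpvlt : 4*((v:ℕ)/2) + 1 - (v:ℕ) < n := by omega
      set pv : Fin n := (↑(4*((v:ℕ)/2) + 1 - (v:ℕ)) : Fin n) with hpv
      have epv : (pv : ℕ) = 4*((v:ℕ)/2) + 1 - (v:ℕ) := Fin.val_cast_of_lt hpvlt
      have hset : (Finset.univ.filter fun u => (xkG n (m+p) s).Adj v u)
          = insert pv (Finset.univ.filter fun u : Fin n => m + p ≤ (u:ℕ)) := by
        ext u
        simp only [mem_filter, mem_univ, true_and, Finset.mem_insert, xk_adj]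
        constructor
        · rintro ⟨hne, h | ⟨h1, h2⟩⟩
          · right; omega
          · left
            rw [Fin.ext_iff, epv]
            have : (v:ℕ) ≠ (u:ℕ) := fun hc => hne (Fin.ext hc)
            omega
        · rintro (rfl | h)
          · have hne : v ≠ pv := by intro hc; rw [Fin.ext_iff, epv] at hc; omega
            exact ⟨hne, Or.inr ⟨by omega, by omega⟩⟩
          · exact ⟨fun hc => by rw [Fin.ext_iff] at hc; omega, Or.inl (by omega)⟩
      rw [hset, Finset.card_insert_of_notMem (by simp [epv]; omega), xk_card_ge (by omega),
        if_pos hv, if_pos hv2]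
      omega
    · -- unmatched small vertex
      have hset : (Finset.univ.filter fun u => (xkG n (m+p) s).Adj v u)
          = Finset.univ.filter fun u : Fin n => m + p ≤ (u:ℕ) := by
        ext u
        simp only [mem_filter, mem_univ, true_and, xk_adj]
        constructor
        · rintro ⟨hne, h | ⟨h1, h2⟩⟩
          · omega
          · omega
        · intro h
          exact ⟨fun hc => by rw [Fin.ext_iff] at hc; omega, Or.inl (by omega)⟩
      rw [hset, xk_card_ge (by omega), if_pos hv, if_neg hv2]
      omega
  · -- big vertex
    have hset : (Finset.univ.filter fun u => (xkG n (m+p) s).Adj v u)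
        = Finset.univ.filter fun u : Fin n => (u:ℕ) < m + p := by
      ext u
      simp only [mem_filter, mem_univ, true_and, xk_adj]
      constructor
      · rintro ⟨hne, h | ⟨h1, h2⟩⟩
        · omega
        · omega
      · intro h
        exact ⟨fun hc => by rw [Fin.ext_iff] at hc; omega, Or.inl (by omega)⟩
    rw [hset, xk_card_lt (by omega), if_neg hv, if_neg (by omega)]
    omega

lemma xk_edge {n s p m : ℕ} [NeZero n] (hn : n = 2*m) (hm : 2*s + 2*p + 2 ≤ m) :
    edgeCount (xkG n (m+p) s) = (m+p)*(m-p) + s := by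
  classical
  have hsum : ∑ v : Fin n, (xkG n (m+p) s).degree v = 2 * ((m+p)*(m-p) + s) := by
    rw [Finset.sum_congr rfl (fun v _ => xk_deg hn hm v), Finset.sum_add_distrib]
    rw [Finset.sum_ite, Finset.sum_const, Finset.sum_const, Finset.sum_ite,
      Finset.sum_const, Finset.sum_const]
    have c1 := xk_card_lt (n := n) (a := m + p) (by omega)
    have c2 : #(Finset.univ.filter fun v : Fin n => ¬ (v:ℕ) < m + p) = m - p := by
      have h := xk_card_ge (n := n) (a := m + p) (by omega)
      have e : (Finset.univ.filter fun v : Fin n => ¬ (v:ℕ) < m + p)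
          = Finset.univ.filter fun v : Fin n => m + p ≤ (v:ℕ) := by
        ext u; simp [not_lt]
      rw [e, h]; omega
    have c3 := xk_card_lt (n := n) (a := 2*s) (by omega)
    have c4 : #(Finset.univ.filter fun v : Fin n => ¬ (v:ℕ) < 2*s) = n - 2*s := by
      have h := xk_card_ge (n := n) (a := 2*s) (by omega)
      have e : (Finset.univ.filter fun v : Fin n => ¬ (v:ℕ) < 2*s)
          = Finset.univ.filter fun v : Fin n => 2*s ≤ (v:ℕ) := by
        ext u; simp [not_lt]
      rw [e, h]
    rw [c1, c2, c3, c4]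
    simp only [smul_eq_mul, mul_one, mul_zero, add_zero]
    have : (m + p) * (m - p) = (m - p) * (m + p) := Nat.mul_comm _ _
    rw [this]
    generalize (m - p) * (m + p) = X
    omega
  have h2 : ∑ v : Fin n, (xkG n (m+p) s).degree v = 2 * #(xkG n (m+p) s).edgeFinset :=
    SimpleGraph.sum_degrees_eq_twice_card_edges _
  rw [edgeCount, Nat.card_eq_fintype_card, ← SimpleGraph.edgeFinset_card]
  omega

lemma xk_cover {n s p m : ℕ} [NeZero n] (hn : n = 2*m) (hm : 2*s + 2*p + 2 ≤ m) :
    s ≤ cliqueCover (xkG n (m+p) s) 3 := by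
  classical
  rw [cliqueCover]
  apply le_csInf
  · refine ⟨Fintype.card (Fin n), Finset.univ, Finset.card_univ, fun T hT => ?_⟩
    have : T.Nonempty := Finset.card_pos.1 (by rw [hT.card_eq]; omega)
    obtain ⟨v, hv⟩ := this
    exact ⟨v, hv, Finset.mem_univ v⟩
  · rintro b ⟨S, rfl, hcov⟩
    by_contra hlt
    push_neg at hlt
    -- there is an uncovered matching pair
    have hpair : ∃ i : ℕ, i < s ∧ (↑(2*i) : Fin n) ∉ S ∧ (↑(2*i+1) : Fin n) ∉ S := by
      by_contra hno
      push_neg at hno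
      have hle : #(Finset.range s) ≤ #S := by
        have hf : ∀ i : ℕ, i < s →
            (if (((2*i : ℕ)) : Fin n) ∈ S then (((2*i : ℕ)) : Fin n)
              else (((2*i+1 : ℕ)) : Fin n)) ∈ S := by
          intro i hi
          by_cases h : (((2*i : ℕ)) : Fin n) ∈ S
          · rw [if_pos h]; exact h
          · rw [if_neg h]; exact hno i hi h
        apply Finset.card_le_card_of_injOn
          (f := fun i => if (((2*i : ℕ)) : Fin n) ∈ S then (((2*i : ℕ)) : Fin n)
            else (((2*i+1 : ℕ)) : Fin n))
        · intro i hi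
          exact hf i (Finset.mem_range.1 hi)
        · intro i hi j hj heq
          simp only [Finset.mem_coe, Finset.mem_range] at hi hj
          have e1 : ((((2*i : ℕ)) : Fin n) : ℕ) = 2*i := Fin.val_cast_of_lt (by omega)
          have e2 : ((((2*i+1 : ℕ)) : Fin n) : ℕ) = 2*i+1 := Fin.val_cast_of_lt (by omega)
          have e3 : ((((2*j : ℕ)) : Fin n) : ℕ) = 2*j := Fin.val_cast_of_lt (by omega)
          have e4 : ((((2*j+1 : ℕ)) : Fin n) : ℕ) = 2*j+1 := Fin.val_cast_of_lt (by omega)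
          simp only at heq
          split_ifs at heq <;> rw [Fin.ext_iff] at heq <;> omega
      rw [Finset.card_range] at hle
      omega
    obtain ⟨i, hi, h1, h2⟩ := hpair
    -- there is an uncovered vertex on the small side
    have hns : ¬ (Finset.univ.filter fun y : Fin n => m + p ≤ (y:ℕ)) ⊆ S := by
      intro hsub
      have := Finset.card_le_card hsub
      rw [xk_card_ge (by omega)] at this
      omega
    obtain ⟨y, hy1, hy2⟩ := Finset.not_subset.1 hns
    have hya : m + p ≤ (y:ℕ) := (Finset.mem_filter.1 hy1).2
    have htri : (xkG n (m+p) s).IsNClique 3 {(↑(2*i) : Fin n), (↑(2*i+1) : Fin n), y} :=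
      (xk_tri hn hm _).2 ⟨i, hi, y, hya, rfl⟩
    obtain ⟨v, hvT, hvS⟩ := hcov _ htri
    simp only [Finset.mem_insert, Finset.mem_singleton] at hvT
    rcases hvT with rfl | rfl | rfl
    · exact h1 hvS
    · exact h2 hvS
    · exact hy2 hvS


/-- counterexample to the conjecture of Xiao and Katona, when `s - t` is a
perfect square greater than `4` and `n` is large and even. -/
theorem stmt_2 (s t p : ℕ) (ht : 1 ≤ t) (hts : t < s) (hp : s - t = p ^ 2)
    (h4 : 4 < s - t) :
    ∃ n₀ : ℕ, ∀ n ≥ n₀, Even n →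
      ∃ G : SimpleGraph (Fin n),
        edgeCount G = n ^ 2 / 4 + t ∧ s ≤ cliqueCover G 3 ∧
        (cliqueCount G 3 : ℚ) = (s : ℚ) * n / 2 - s * p ∧
        (cliqueCount G 3 : ℚ) <
          ((s : ℚ) - 1) * (n / 2 : ℕ) + ((n + 1) / 2 : ℕ) - 2 * ((s : ℚ) - t) := by
  refine ⟨4*s + 4*p + 6, fun n hn hev => ?_⟩
  obtain ⟨r, hr⟩ := hev
  have hnm : n = 2 * r := by omega
  haveI : NeZero n := ⟨by omega⟩
  have hp4 : 4 < p ^ 2 := hp ▸ h4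
  have hp3 : 3 ≤ p := by
    by_contra hc
    push_neg at hc
    have h6 : p ^ 2 ≤ 4 := by
      calc p ^ 2 ≤ 2 ^ 2 := Nat.pow_le_pow_left (by omega) 2
        _ = 4 := by norm_num
    exact absurd hp4 (not_lt.2 h6)
  have hpp : s = p ^ 2 + t := (Nat.sub_eq_iff_eq_add hts.le).mp hp
  have hps : p ^ 2 + 1 ≤ s := by rw [hpp]; exact Nat.add_le_add_left ht _
  have hp2 : 2 ≤ p ^ 2 := by omega
  have hple : p ≤ p ^ 2 := by
    calc p = p * 1 := (Nat.mul_one p).symm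
      _ ≤ p * p := Nat.mul_le_mul_left p (by omega)
      _ = p ^ 2 := (pow_two p).symm
  have hm : 2*s + 2*p + 2 ≤ r := by omega
  have hpm : p ≤ r := by omega
  refine ⟨xkG n (r+p) s, ?_, xk_cover hnm hm, ?_, ?_⟩
  · -- edge count
    rw [xk_edge hnm hm]
    have hprmul : p * p ≤ r * r := Nat.mul_le_mul hpm hpm
    have hprod : (r+p)*(r-p) = r*r - p*p := by
      zify [hpm, hprmul]
      ring
    have hn2 : n^2/4 = r*r := by
      rw [hnm, show (2*r)^2 = 4*(r*r) by ring]
      exact Nat.mul_div_cancel_left _ (by norm_num)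
    rw [hprod, hn2]
    have hpp2 : s = p * p + t := by rw [hpp, pow_two]
    zify [hprmul]
    rw [hpp2]
    push_cast
    ring
  · -- count equality
    rw [xk_count hnm hm]
    rw [Nat.cast_mul, Nat.cast_sub hpm]
    have hnq : (n:ℚ) = 2*r := by exact_mod_cast congrArg (Nat.cast : ℕ → ℚ) hnm
    rw [hnq]
    ring
  · -- strict inequality
    rw [xk_count hnm hm]
    have e1 : n/2 = r := by omega
    have e2 : (n+1)/2 = r := by omega
    rw [e1, e2, Nat.cast_mul, Nat.cast_sub hpm]
    have hq1 : (3:ℚ) ≤ p := by exact_mod_cast hp3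
    have hq2 : (p:ℚ)^2 + 1 ≤ s := by exact_mod_cast hps
    have hq3 : (s:ℚ) = p^2 + t := by exact_mod_cast hpp
    have hkey : 2*(p:ℚ)^2 < s*p := by nlinarith [hq1, hq2]
    linarith [hkey, hq3]
end

section
/- Let k ≥ 4 and s ≥ 2 be fixed integers. For all sufficiently large n there exists a simple graph G on n vertices with exactly t_{k−1}(n) + s − 1 edges, K_k-covering number τ_k(G) = s, and exactly N_k(G) = N_k(n,s) copies of K_k, where, writing q = ⌊n/(k−1)⌋ and r = n − (k−1)q, one defines N_k(n,s) = s·q^{k−3}(q−1) if r = 0, N_k(n,s) = s·q^{k−2} − q^{k−3} if r = 1, and N_k(n,s) = s·(q+1)^{r−2} q^{k−r} if 2 ≤ r ≤ k−2. -/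
set_option linter.unusedSectionVars false
set_option maxHeartbeats 1000000
open scoped Classical


open Finset SimpleGraph

namespace S5

variable {V : Type*} [DecidableEq V]

def transv : List (Finset V) → Finset (Finset V)
  | [] => {∅}
  | A :: L => (A ×ˢ transv L).image fun p => insert p.1 p.2

lemma mem_transv_subset : ∀ {L : List (Finset V)} {T : Finset V}, T ∈ transv L →
    ∀ v ∈ T, ∃ A ∈ L, v ∈ A := by
  intro L
  induction L with
  | nil => intro T hT v hv; simp [transv] at hT; subst hT; simp at hv
  | cons A L ih =>
    intro T hT v hv
    simp only [transv, mem_image, mem_product] at hT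
    obtain ⟨⟨a, T'⟩, ⟨ha, hT'⟩, rfl⟩ := hT
    rcases Finset.mem_insert.1 hv with rfl | hvT'
    · exact ⟨A, List.mem_cons_self, ha⟩
    · obtain ⟨B, hB, hvB⟩ := ih hT' v hvT'
      exact ⟨B, List.mem_cons_of_mem _ hB, hvB⟩

lemma transv_not_mem_head {A : Finset V} {L : List (Finset V)}
    (hL : (A :: L).Pairwise Disjoint) {a : V} (ha : a ∈ A) {T : Finset V}
    (hT : T ∈ transv L) : a ∉ T := by
  intro haT
  obtain ⟨B, hB, haB⟩ := mem_transv_subset hT a haT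
  have hd : Disjoint A B := (List.pairwise_cons.1 hL).1 B hB
  exact (Finset.disjoint_left.1 hd ha) haB

lemma card_transv : ∀ {L : List (Finset V)}, L.Pairwise Disjoint →
    (transv L).card = (L.map Finset.card).prod := by
  intro L
  induction L with
  | nil => intro _; simp [transv]
  | cons A L ih =>
    intro hL
    have hL' : L.Pairwise Disjoint := (List.pairwise_cons.1 hL).2
    have hinj : Set.InjOn (fun p : V × Finset V => insert p.1 p.2) ↑(A ×ˢ transv L) := by
      rintro ⟨a, T⟩ haT ⟨a', T'⟩ haT' h
      simp only [Finset.coe_product, Set.mem_prod, Finset.mem_coe, mem_product] at haT haT'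
      obtain ⟨ha, hT⟩ := haT
      obtain ⟨ha', hT'⟩ := haT'
      have hna : a ∉ T := transv_not_mem_head hL ha hT
      have hna' : a' ∉ T' := transv_not_mem_head hL ha' hT'
      simp only at h
      have : a = a' := by
        have h1 : a ∈ insert a' T' := h ▸ Finset.mem_insert_self a T
        rcases Finset.mem_insert.1 h1 with h1 | h1
        · exact h1
        · obtain ⟨B, hB, haB⟩ := mem_transv_subset hT' a h1
          exact absurd haB (Finset.disjoint_left.1 ((List.pairwise_cons.1 hL).1 B hB) ha)
      subst this
      have : T = T' := by
        apply Finset.ext; intro v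
        constructor
        · intro hv
          have : v ∈ insert a T' := h ▸ Finset.mem_insert_of_mem hv
          rcases Finset.mem_insert.1 this with rfl | hv'
          · exact absurd hv hna
          · exact hv'
        · intro hv
          have : v ∈ insert a T := h ▸ Finset.mem_insert_of_mem hv
          rcases Finset.mem_insert.1 this with rfl | hv'
          · exact absurd hv hna'
          · exact hv'
      simp [this]
    rw [transv, Finset.card_image_of_injOn hinj, Finset.card_product, ih hL', List.map_cons,
      List.prod_cons]

lemma card_mem_transv : ∀ {L : List (Finset V)}, L.Pairwise Disjoint →
    ∀ {T : Finset V}, T ∈ transv L → T.card = L.length := by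
  intro L
  induction L with
  | nil => intro _ T hT; simp [transv] at hT; simp [hT]
  | cons A L ih =>
    intro hL T hT
    simp only [transv, mem_image, mem_product] at hT
    obtain ⟨⟨a, T'⟩, ⟨ha, hT'⟩, rfl⟩ := hT
    rw [Finset.card_insert_of_notMem (transv_not_mem_head hL ha hT'),
      ih (List.pairwise_cons.1 hL).2 hT', List.length_cons]

lemma inter_card_transv : ∀ {L : List (Finset V)}, L.Pairwise Disjoint →
    ∀ {T : Finset V}, T ∈ transv L → ∀ A ∈ L, ∀ u ∈ T ∩ A, ∀ v ∈ T ∩ A, u = v := by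
  intro L
  induction L with
  | nil => intro _ T hT A hA; simp at hA
  | cons B L ih =>
    intro hL T hT A hA u hu v hv
    simp only [transv, mem_image, mem_product] at hT
    obtain ⟨⟨a, T'⟩, ⟨ha, hT'⟩, rfl⟩ := hT
    simp only [Finset.mem_inter, Finset.mem_insert] at hu hv
    rcases List.mem_cons.1 hA with rfl | hA'
    · -- A = B
      have hT'A : ∀ x ∈ T', x ∉ A := by
        intro x hx hxA
        obtain ⟨C, hC, hxC⟩ := mem_transv_subset hT' x hx
        exact (Finset.disjoint_left.1 ((List.pairwise_cons.1 hL).1 C hC) hxA) hxC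
      rcases hu.1 with rfl | hu1
      · rcases hv.1 with rfl | hv1
        · rfl
        · exact absurd hv.2 (hT'A v hv1)
      · exact absurd hu.2 (hT'A u hu1)
    · have haA : a ∉ A := fun haA =>
        (Finset.disjoint_left.1 ((List.pairwise_cons.1 hL).1 A hA') ha) haA
      have hu' : u ∈ T' ∩ A := by
        rcases hu.1 with rfl | h
        · exact absurd hu.2 haA
        · exact Finset.mem_inter.2 ⟨h, hu.2⟩
      have hv' : v ∈ T' ∩ A := by
        rcases hv.1 with rfl | h
        · exact absurd hv.2 haA
        · exact Finset.mem_inter.2 ⟨h, hv.2⟩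
      exact ih (List.pairwise_cons.1 hL).2 hT' A hA' u hu' v hv'

lemma card_le_cover : ∀ {L : List (Finset V)} {T : Finset V},
    (∀ v ∈ T, ∃ A ∈ L, v ∈ A) → (∀ A ∈ L, (T ∩ A).card ≤ 1) → T.card ≤ L.length := by
  intro L
  induction L with
  | nil =>
    intro T h1 _
    have : T = ∅ := Finset.eq_empty_of_forall_notMem fun v hv => by
      obtain ⟨A, hA, -⟩ := h1 v hv; simp at hA
    simp [this]
  | cons A L ih =>
    intro T h1 h2
    have hsplit : T = (T ∩ A) ∪ (T \ A) := by
      ext v; simp only [Finset.mem_union, Finset.mem_inter, Finset.mem_sdiff]; tauto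
    have h3 : (T \ A).card ≤ L.length := by
      apply ih
      · intro v hv
        obtain ⟨B, hB, hvB⟩ := h1 v (Finset.mem_sdiff.1 hv).1
        rcases List.mem_cons.1 hB with rfl | hB'
        · exact absurd hvB (Finset.mem_sdiff.1 hv).2
        · exact ⟨B, hB', hvB⟩
      · intro B hB
        calc ((T \ A) ∩ B).card ≤ (T ∩ B).card := by
              apply Finset.card_le_card
              intro x hx
              simp only [Finset.mem_inter, Finset.mem_sdiff] at hx ⊢
              exact ⟨hx.1.1, hx.2⟩
          _ ≤ 1 := h2 B (List.mem_cons_of_mem _ hB)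
    calc T.card ≤ (T ∩ A).card + (T \ A).card := by
            conv_lhs => rw [hsplit]
            exact Finset.card_union_le _ _
      _ ≤ 1 + L.length := Nat.add_le_add (h2 A (List.mem_cons_self)) h3
      _ = (A :: L).length := by simp [Nat.add_comm]

lemma mem_transv_of : ∀ {L : List (Finset V)} {T : Finset V},
    (∀ v ∈ T, ∃ A ∈ L, v ∈ A) → (∀ A ∈ L, (T ∩ A).card ≤ 1) → T.card = L.length →
    T ∈ transv L := by
  intro L
  induction L with
  | nil =>
    intro T h1 _ h3
    have : T = ∅ := Finset.card_eq_zero.1 (by simpa using h3)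
    simp [transv, this]
  | cons A L ih =>
    intro T h1 h2 h3
    -- find a ∈ T ∩ A
    have hne : (T ∩ A).Nonempty := by
      by_contra hemp
      have hTA : ∀ v ∈ T, v ∉ A := by
        intro v hv hvA
        exact hemp ⟨v, Finset.mem_inter.2 ⟨hv, hvA⟩⟩
      have : T.card ≤ L.length := by
        apply card_le_cover
        · intro v hv
          obtain ⟨B, hB, hvB⟩ := h1 v hv
          rcases List.mem_cons.1 hB with rfl | hB'
          · exact absurd hvB (hTA v hv)
          · exact ⟨B, hB', hvB⟩
        · intro B hB; exact h2 B (List.mem_cons_of_mem _ hB)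
      rw [h3] at this; simp at this
    obtain ⟨a, ha⟩ := hne
    have haT : a ∈ T := (Finset.mem_inter.1 ha).1
    have haA : a ∈ A := (Finset.mem_inter.1 ha).2
    have herase : T.erase a ∈ transv L := by
      apply ih
      · intro v hv
        have hvT : v ∈ T := Finset.mem_of_mem_erase hv
        obtain ⟨B, hB, hvB⟩ := h1 v hvT
        rcases List.mem_cons.1 hB with rfl | hB'
        · exfalso
          have : (T ∩ B).card ≤ 1 := h2 B (List.mem_cons_self)
          have hv2 : v ∈ T ∩ B := Finset.mem_inter.2 ⟨hvT, hvB⟩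
          have ha2 : a ∈ T ∩ B := ha
          have : v = a := by
            by_contra hne
            have : ({v, a} : Finset V).card ≤ (T ∩ B).card :=
              Finset.card_le_card (by intro x hx; rcases Finset.mem_insert.1 hx with rfl | hx
                                      · exact hv2
                                      · simp at hx; subst hx; exact ha2)
            rw [Finset.card_pair hne] at this; omega
          exact (Finset.ne_of_mem_erase hv) this
        · exact ⟨B, hB', hvB⟩
      · intro B hB
        calc ((T.erase a) ∩ B).card ≤ (T ∩ B).card :=
              Finset.card_le_card (fun x hx => Finset.mem_inter.2
                ⟨Finset.mem_of_mem_erase (Finset.mem_inter.1 hx).1, (Finset.mem_inter.1 hx).2⟩)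
          _ ≤ 1 := h2 B (List.mem_cons_of_mem _ hB)
      · have := Finset.card_erase_of_mem haT
        rw [this, h3]; simp
    simp only [transv, mem_image, mem_product]
    exact ⟨(a, T.erase a), ⟨haA, herase⟩, by simp [Finset.insert_erase haT]⟩

lemma filter_w_transv {A : Finset V} {L : List (Finset V)}
    (hL : (A :: L).Pairwise Disjoint) {w : V} (hw : w ∈ A) :
    ((transv (A :: L)).filter (fun T => w ∈ T)).card = (transv L).card := by
  classical
  have key : (transv (A :: L)).filter (fun T => w ∈ T) = (transv L).image (insert w) := by
    ext T
    simp only [Finset.mem_filter, Finset.mem_image]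
    constructor
    · rintro ⟨hT, hwT⟩
      simp only [transv, mem_image, mem_product] at hT
      obtain ⟨⟨a, T'⟩, ⟨ha, hT'⟩, rfl⟩ := hT
      have : w = a := by
        rcases Finset.mem_insert.1 hwT with h | h
        · exact h
        · exact absurd h (transv_not_mem_head hL hw hT')
      subst this
      exact ⟨T', hT', rfl⟩
    · rintro ⟨T', hT', rfl⟩
      constructor
      · simp only [transv, mem_image, mem_product]
        exact ⟨(w, T'), ⟨hw, hT'⟩, rfl⟩
      · exact Finset.mem_insert_self _ _
  rw [key]
  apply Finset.card_image_of_injOn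
  intro T hT T' hT' h
  simp only [Finset.mem_coe] at hT hT'
  have hwT : w ∉ T := transv_not_mem_head hL hw hT
  have hwT' : w ∉ T' := transv_not_mem_head hL hw hT'
  rw [← Finset.erase_insert hwT, ← Finset.erase_insert hwT', h]



lemma count_mod (m i : ℕ) (hm : 0 < m) (hi : i < m) : ∀ n : ℕ,
    ((Finset.range n).filter (fun v => v % m = i)).card
      = n / m + if i < n % m then 1 else 0 := by
  intro n
  induction n with
  | zero => simp
  | succ n ih =>
    rw [Finset.range_add_one, Finset.filter_insert]
    have ha : n % m < m := Nat.mod_lt _ hm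
    have hdm : m * (n / m) + n % m = n := Nat.div_add_mod n m
    by_cases hc : n % m + 1 = m
    · have e1 : m * (n / m + 1) = m * (n / m) + m := by ring
      have h1 : n + 1 = m * (n / m + 1) := by omega
      have hdiv : (n + 1) / m = n / m + 1 := by rw [h1, Nat.mul_div_cancel_left _ hm]
      have hmod : (n + 1) % m = 0 := by rw [h1, Nat.mul_mod_right]
      rw [hdiv, hmod, if_neg (by omega : ¬ i < 0)]
      by_cases hni : n % m = i
      · rw [if_pos hni, Finset.card_insert_of_notMem (by simp), ih,
          if_neg (by omega : ¬ i < n % m)]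
      · rw [if_neg hni, ih, if_pos (by omega : i < n % m)]
    · have h1 : n + 1 = m * (n / m) + (n % m + 1) := by omega
      have hdiv : (n + 1) / m = n / m := by
        have e1 : n / m * m = m * (n / m) := Nat.mul_comm _ _
        have e2 : (n / m + 1) * m = m * (n / m) + m := by ring
        exact Nat.div_eq_of_lt_le (by omega) (by omega)
      have hmod : (n + 1) % m = n % m + 1 := by
        rw [h1, Nat.mul_add_mod, Nat.mod_eq_of_lt (by omega)]
      rw [hdiv, hmod]
      by_cases hni : n % m = i
      · rw [if_pos hni, Finset.card_insert_of_notMem (by simp), ih,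
          if_neg (by omega : ¬ i < n % m), if_pos (by omega : i < n % m + 1)]
      · rw [if_neg hni, ih]
        by_cases h2 : i < n % m
        · rw [if_pos h2, if_pos (by omega)]
        · rw [if_neg h2, if_neg (by omega)]

lemma count_mod_fin (m i n : ℕ) (hm : 0 < m) (hi : i < m) :
    ((Finset.univ.filter (fun v : Fin n => (v : ℕ) % m = i))).card
      = n / m + if i < n % m then 1 else 0 := by
  rw [← count_mod m i hm hi n]
  refine Finset.card_nbij (fun v => (v : ℕ)) ?_ ?_ ?_
  · intro a ha
    simp only [Finset.mem_coe, Finset.mem_filter, Finset.mem_range, Finset.mem_univ, true_and] at *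
    exact ⟨a.isLt, ha⟩
  · intro a _ b _ h; exact Fin.ext h
  · intro x hx
    simp only [Finset.coe_filter, Set.mem_setOf_eq, Finset.mem_range, Finset.mem_univ,
      true_and, Set.mem_image, Finset.mem_coe] at hx ⊢
    exact ⟨⟨x, hx.1⟩, by simp [hx.2], rfl⟩



variable (k s n : ℕ)

def vz : ℕ := if n % (k-1) = 0 then k - 2 else n % (k-1) - 1

def col (v : Fin n) : ℕ :=
  if n % (k-1) ≠ 1 ∧ (v : ℕ) = vz k n then 0 else (v : ℕ) % (k-1)

def mtch (u v : Fin n) : Prop :=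
  ∃ j < s, ((u:ℕ) = 2*j*(k-1) ∧ (v:ℕ) = (2*j+1)*(k-1)) ∨
           ((v:ℕ) = 2*j*(k-1) ∧ (u:ℕ) = (2*j+1)*(k-1))

def del (u v : Fin n) : Prop :=
  n % (k-1) = 1 ∧ (((u:ℕ) = 0 ∧ (v:ℕ) = 1) ∨ ((u:ℕ) = 1 ∧ (v:ℕ) = 0))

lemma mtch_symm {u v : Fin n} (h : mtch k s n u v) : mtch k s n v u := by
  obtain ⟨j, hj, h⟩ := h; exact ⟨j, hj, h.symm⟩

lemma del_symm {u v : Fin n} (h : del k n u v) : del k n v u := by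
  obtain ⟨h1, h2⟩ := h; exact ⟨h1, by tauto⟩

def GG : SimpleGraph (Fin n) where
  Adj u v := u ≠ v ∧ ((col k n u ≠ col k n v ∧ ¬ del k n u v) ∨ mtch k s n u v)
  symm := by
    refine ⟨?_⟩
    rintro u v ⟨h1, h2⟩
    refine ⟨h1.symm, ?_⟩
    rcases h2 with ⟨h2, h3⟩ | h2
    · exact Or.inl ⟨h2.symm, fun hd => h3 (del_symm k n hd)⟩
    · exact Or.inr (mtch_symm k s n h2)
  loopless := ⟨fun v h => h.1 rfl⟩

def AV (k n j : ℕ) (hnp : 0 < n) : Fin n := ⟨2*j*(k-1) % n, Nat.mod_lt _ hnp⟩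
def BV (k n j : ℕ) (hnp : 0 < n) : Fin n := ⟨(2*j+1)*(k-1) % n, Nat.mod_lt _ hnp⟩
def W1 (n : ℕ) (hnp : 0 < n) : Fin n := ⟨1 % n, Nat.mod_lt _ hnp⟩
def tvF (k n j i : ℕ) (hnp : 0 < n) : Fin n := ⟨((i+1)+(j+1)*(k-1)) % n, Nat.mod_lt _ hnp⟩
def Ls (k n : ℕ) : List (Finset (Fin n)) :=
  (List.range (k-2)).map (fun i => Finset.univ.filter (fun v : Fin n => col k n v = i+1))

section Main

variable {k s n : ℕ} (hk : 4 ≤ k) (hs : 2 ≤ s) (hn : (2*s+2)*k ≤ n)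
include hk hs hn

lemma hbound : (2*s+1)*(k-1) + (k-1) ≤ n :=
  calc (2*s+1)*(k-1) + (k-1) = (2*s+2)*(k-1) := by ring
    _ ≤ (2*s+2)*k := Nat.mul_le_mul_left _ (by omega)
    _ ≤ n := hn

lemma bd {x y : ℕ} (hx : x ≤ 2*s+1) (hy : y ≤ k-1) : x*(k-1) + y ≤ n := by
  have h1 : x*(k-1) ≤ (2*s+1)*(k-1) := Nat.mul_le_mul_right _ hx
  have := hbound hk hs hn
  omega

lemma kn : k ≤ n := by
  have := hbound hk hs hn; have : 1*(k-1) ≤ (2*s+1)*(k-1) := Nat.mul_le_mul_right _ (by omega)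
  omega

lemma vz_lt : vz k n < k - 1 := by
  unfold vz
  have h1 : n % (k-1) < k - 1 := Nat.mod_lt _ (by omega)
  split <;> omega

lemma vz_pos (hr : n % (k-1) ≠ 1) : 1 ≤ vz k n := by
  unfold vz; split <;> omega

lemma col_lt (v : Fin n) : col k n v < k - 1 := by
  unfold col
  split
  · omega
  · exact Nat.mod_lt _ (by omega)

lemma col_eq_mod {v : Fin n} (h : (v:ℕ) % (k-1) ≠ vz k n) : col k n v = (v:ℕ) % (k-1) := by
  unfold col
  split
  · rename_i hcond
    exfalso
    apply h
    rw [hcond.2, Nat.mod_eq_of_lt]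
    have := vz_lt hk hs hn
    omega
  · rfl

lemma col_mul {v : Fin n} {t : ℕ} (hv : (v:ℕ) = t * (k-1)) : col k n v = 0 := by
  unfold col
  split
  · rfl
  · rw [hv]; exact Nat.mul_mod_left _ _

-- counts
noncomputable def cnt (k n i : ℕ) : ℕ := (univ.filter fun v : Fin n => col k n v = i).card
noncomputable def Rc (k n i : ℕ) : ℕ := (univ.filter fun v : Fin n => (v:ℕ) % (k-1) = i).card

lemma Rc_val {i : ℕ} (hi : i < k - 1) :
    Rc k n i = n / (k-1) + if i < n % (k-1) then 1 else 0 := by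
  unfold Rc
  rw [count_mod_fin (k-1) i n (by omega) hi]

lemma cnt_eq_Rc_r1 (hr : n % (k-1) = 1) (i : ℕ) : cnt k n i = Rc k n i := by
  unfold cnt Rc
  congr 1
  apply Finset.filter_congr
  intro v _
  unfold col
  rw [if_neg (by simp [hr])]

lemma cnt_zero (hr : n % (k-1) ≠ 1) : cnt k n 0 = Rc k n 0 + 1 := by
  have hvlt : vz k n < n := lt_of_lt_of_le (lt_of_lt_of_le (vz_lt hk hs hn) (by omega)) (kn hk hs hn)
  set w : Fin n := ⟨vz k n, hvlt⟩ with hw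
  have hvz1 : 1 ≤ vz k n := vz_pos hk hs hn hr
  have hvzm : vz k n % (k-1) = vz k n := Nat.mod_eq_of_lt (vz_lt hk hs hn)
  unfold cnt Rc
  have key : (univ.filter fun v : Fin n => col k n v = 0)
      = insert w (univ.filter fun v : Fin n => (v:ℕ) % (k-1) = 0) := by
    ext v
    simp only [Finset.mem_filter, Finset.mem_univ, true_and, Finset.mem_insert]
    constructor
    · intro hv
      unfold col at hv
      by_cases hc : n % (k-1) ≠ 1 ∧ (v:ℕ) = vz k n
      · left; exact Fin.ext hc.2
      · right; rwa [if_neg hc] at hv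
    · intro hv
      rcases hv with rfl | hv
      · unfold col; rw [if_pos ⟨hr, rfl⟩]
      · unfold col
        split
        · rfl
        · exact hv
  have hwnot : w ∉ (univ.filter fun v : Fin n => (v:ℕ)%(k-1) = 0) := by
    simp only [Finset.mem_filter, Finset.mem_univ, true_and]
    show ¬ ((w:ℕ) % (k-1) = 0)
    simp only [hw]
    omega
  rw [key, Finset.card_insert_of_notMem hwnot]

lemma cnt_vz (hr : n % (k-1) ≠ 1) : cnt k n (vz k n) + 1 = Rc k n (vz k n) := by
  have hvlt : vz k n < n := lt_of_lt_of_le (lt_of_lt_of_le (vz_lt hk hs hn) (by omega)) (kn hk hs hn)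
  set w : Fin n := ⟨vz k n, hvlt⟩ with hw
  have hvz1 : 1 ≤ vz k n := vz_pos hk hs hn hr
  have hvzm : vz k n % (k-1) = vz k n := Nat.mod_eq_of_lt (vz_lt hk hs hn)
  unfold cnt Rc
  have key : (univ.filter fun v : Fin n => col k n v = vz k n)
      = (univ.filter fun v : Fin n => (v:ℕ) % (k-1) = vz k n).erase w := by
    ext v
    simp only [Finset.mem_filter, Finset.mem_univ, true_and, Finset.mem_erase]
    constructor
    · intro hv
      unfold col at hv
      by_cases hc : n % (k-1) ≠ 1 ∧ (v:ℕ) = vz k n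
      · rw [if_pos hc] at hv; omega
      · rw [if_neg hc] at hv
        refine ⟨?_, hv⟩
        intro hvw
        exact hc ⟨hr, by rw [hvw]⟩
    · intro ⟨hv1, hv2⟩
      unfold col
      rw [if_neg]
      · exact hv2
      · rintro ⟨-, h2⟩
        exact hv1 (Fin.ext h2)
  rw [key, Finset.card_erase_add_one]
  simp only [Finset.mem_filter, Finset.mem_univ, true_and, hw, hvzm]

lemma cnt_other (hr : n % (k-1) ≠ 1) {i : ℕ} (h0 : i ≠ 0) (hvz : i ≠ vz k n) :
    cnt k n i = Rc k n i := by
  have hvzm : vz k n % (k-1) = vz k n := Nat.mod_eq_of_lt (vz_lt hk hs hn)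
  unfold cnt Rc
  congr 1
  apply Finset.filter_congr
  intro v _
  unfold col
  constructor
  · intro hv
    by_cases hc : n % (k-1) ≠ 1 ∧ (v:ℕ) = vz k n
    · rw [if_pos hc] at hv; omega
    · rwa [if_neg hc] at hv
  · intro hv
    rw [if_neg]
    · exact hv
    · rintro ⟨-, h2⟩
      rw [h2, hvzm] at hv
      exact hvz hv.symm

-- === chunk: edges ===

lemma mul_cancel_km {a b : ℕ} (h : a * (k-1) = b * (k-1)) : a = b :=
  Nat.eq_of_mul_eq_mul_right (by omega) h

lemma mtch_cols {u v : Fin n} (h : mtch k s n u v) :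
    col k n u = 0 ∧ col k n v = 0 := by
  obtain ⟨j, hj, h | h⟩ := h
  · exact ⟨col_mul hk hs hn h.1, col_mul hk hs hn h.2⟩
  · exact ⟨col_mul hk hs hn h.2, col_mul hk hs hn h.1⟩

lemma adj_iff (u v : Fin n) : (GG k s n).Adj u v ↔
    ((col k n u ≠ col k n v ∧ ¬ del k n u v) ∨ mtch k s n u v) := by
  constructor
  · exact fun h => h.2
  · intro h
    refine ⟨?_, h⟩
    rcases h with ⟨h1, -⟩ | h1
    · exact fun he => h1 (he ▸ rfl)
    · obtain ⟨j, hj, h | h⟩ := h1 <;>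
      · intro he
        rw [he] at h
        have h2 : (2*j)*(k-1) = (2*j+1)*(k-1) := by omega
        have := mul_cancel_km hk hs hn h2
        omega

lemma mtch_card (v : Fin n) : (univ.filter fun w => mtch k s n v w).card
    = if ∃ t, t < 2*s ∧ (v:ℕ) = t*(k-1) then 1 else 0 := by
  by_cases hex : ∃ t, t < 2*s ∧ (v:ℕ) = t*(k-1)
  · rw [if_pos hex]
    obtain ⟨t, ht, hv⟩ := hex
    rcases Nat.even_or_odd t with ⟨j, hj⟩ | ⟨j, hj⟩
    · -- t = j + j
      have hjs : j < s := by omega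
      have hplt : (2*j+1)*(k-1) < n := by
        have := bd hk hs hn (x := 2*j+1) (y := k-1) (by omega) (le_refl _)
        omega
      set p : Fin n := ⟨(2*j+1)*(k-1), hplt⟩ with hp
      have : (univ.filter fun w => mtch k s n v w) = {p} := by
        ext w
        simp only [Finset.mem_filter, Finset.mem_univ, true_and, Finset.mem_singleton]
        constructor
        · rintro ⟨j', hj', ⟨h1, h2⟩ | ⟨h1, h2⟩⟩
          · have hAB : (2*j')*(k-1) = (2*j)*(k-1) := by rw [← h1, hv, hj]; ring
            have : 2*j' = 2*j := mul_cancel_km hk hs hn hAB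
            have : j' = j := by omega
            subst this
            exact Fin.ext (by rw [h2, hp])
          · exfalso
            have hAB : (2*j'+1)*(k-1) = (2*j)*(k-1) := by rw [← h2, hv, hj]; ring
            have : 2*j'+1 = 2*j := mul_cancel_km hk hs hn hAB
            omega
        · rintro rfl
          exact ⟨j, hjs, Or.inl ⟨by rw [hv, hj]; ring, by rw [hp]⟩⟩
      rw [this, Finset.card_singleton]
    · -- t = 2*j + 1
      have hjs : j < s := by omega
      have hplt : (2*j)*(k-1) < n := by
        have := bd hk hs hn (x := 2*j) (y := k-1) (by omega) (le_refl _)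
        omega
      set p : Fin n := ⟨(2*j)*(k-1), hplt⟩ with hp
      have : (univ.filter fun w => mtch k s n v w) = {p} := by
        ext w
        simp only [Finset.mem_filter, Finset.mem_univ, true_and, Finset.mem_singleton]
        constructor
        · rintro ⟨j', hj', ⟨h1, h2⟩ | ⟨h1, h2⟩⟩
          · exfalso
            have hAB : (2*j')*(k-1) = (2*j+1)*(k-1) := by rw [← h1, hv, hj]
            have : 2*j' = 2*j+1 := mul_cancel_km hk hs hn hAB
            omega
          · have hAB : (2*j'+1)*(k-1) = (2*j+1)*(k-1) := by rw [← h2, hv, hj]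
            have : 2*j'+1 = 2*j+1 := mul_cancel_km hk hs hn hAB
            have : j' = j := by omega
            subst this
            exact Fin.ext (by rw [h1, hp])
        · rintro rfl
          exact ⟨j, hjs, Or.inr ⟨by rw [hp], by rw [hv, hj]⟩⟩
      rw [this, Finset.card_singleton]
  · rw [if_neg hex]
    rw [Finset.card_eq_zero, Finset.filter_eq_empty_iff]
    rintro w - ⟨j, hj, ⟨h1, -⟩ | ⟨-, h1⟩⟩
    · exact hex ⟨2*j, by omega, by omega⟩
    · exact hex ⟨2*j+1, by omega, by omega⟩

lemma del_card (v : Fin n) :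
    (univ.filter fun w => col k n v ≠ col k n w ∧ del k n v w).card
    = if n % (k-1) = 1 ∧ ((v:ℕ) = 0 ∨ (v:ℕ) = 1) then 1 else 0 := by
  have hn2 : 2 ≤ n := by have := kn hk hs hn; omega
  by_cases hc : n % (k-1) = 1 ∧ ((v:ℕ) = 0 ∨ (v:ℕ) = 1)
  · rw [if_pos hc]
    obtain ⟨hr, hv01⟩ := hc
    have hcol : ∀ w : Fin n, col k n w = (w:ℕ) % (k-1) := by
      intro w; unfold col; rw [if_neg (by simp [hr])]
    rcases hv01 with hv | hv
    · set p : Fin n := ⟨1, by omega⟩ with hp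
      have : (univ.filter fun w => col k n v ≠ col k n w ∧ del k n v w) = {p} := by
        ext w
        simp only [Finset.mem_filter, Finset.mem_univ, true_and, Finset.mem_singleton]
        constructor
        · rintro ⟨-, -, ⟨-, h2⟩ | ⟨h1, -⟩⟩
          · exact Fin.ext (by rw [h2, hp])
          · omega
        · rintro rfl
          refine ⟨?_, hr, Or.inl ⟨hv, by rw [hp]⟩⟩
          rw [hcol, hcol, hv, hp]
          simp only
          rw [Nat.zero_mod, Nat.mod_eq_of_lt (by omega)]
          omega
      rw [this, Finset.card_singleton]
    · set p : Fin n := ⟨0, by omega⟩ with hp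
      have : (univ.filter fun w => col k n v ≠ col k n w ∧ del k n v w) = {p} := by
        ext w
        simp only [Finset.mem_filter, Finset.mem_univ, true_and, Finset.mem_singleton]
        constructor
        · rintro ⟨-, -, ⟨h1, -⟩ | ⟨-, h2⟩⟩
          · omega
          · exact Fin.ext (by rw [h2, hp])
        · rintro rfl
          refine ⟨?_, hr, Or.inr ⟨hv, by rw [hp]⟩⟩
          rw [hcol, hcol, hv, hp]
          simp only
          rw [Nat.zero_mod, Nat.mod_eq_of_lt (by omega)]
          omega
      rw [this, Finset.card_singleton]
  · rw [if_neg hc]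
    rw [Finset.card_eq_zero, Finset.filter_eq_empty_iff]
    rintro w - ⟨-, hr, hd⟩
    exact hc ⟨hr, by omega⟩

lemma deg_eq (v : Fin n) : (GG k s n).degree v + cnt k n (col k n v)
      + (if n % (k-1) = 1 ∧ ((v:ℕ) = 0 ∨ (v:ℕ) = 1) then 1 else 0)
    = n + (if ∃ t, t < 2*s ∧ (v:ℕ) = t*(k-1) then 1 else 0) := by
  classical
  have hdeg : (GG k s n).degree v = (univ.filter fun w => (GG k s n).Adj v w).card := by
    rw [← SimpleGraph.neighborFinset_eq_filter]
    rfl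
  have hsplit : (univ.filter fun w => (GG k s n).Adj v w)
      = (univ.filter fun w => col k n v ≠ col k n w ∧ ¬ del k n v w)
        ∪ (univ.filter fun w => mtch k s n v w) := by
    ext w
    simp only [Finset.mem_filter, Finset.mem_univ, true_and, Finset.mem_union]
    rw [adj_iff hk hs hn]
  have hdisj : Disjoint (univ.filter fun w => col k n v ≠ col k n w ∧ ¬ del k n v w)
      (univ.filter fun w => mtch k s n v w) := by
    rw [Finset.disjoint_left]
    intro w hw1 hw2
    simp only [Finset.mem_filter, Finset.mem_univ, true_and] at hw1 hw2
    have := mtch_cols hk hs hn hw2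
    exact hw1.1 (by rw [this.1, this.2])
  have hsub : (univ.filter fun w => col k n v ≠ col k n w ∧ del k n v w)
      ⊆ (univ.filter fun w => col k n v ≠ col k n w) := by
    intro w hw
    simp only [Finset.mem_filter, Finset.mem_univ, true_and] at hw ⊢
    exact hw.1
  have hsd : (univ.filter fun w => col k n v ≠ col k n w ∧ ¬ del k n v w)
      = (univ.filter fun w => col k n v ≠ col k n w)
        \ (univ.filter fun w => col k n v ≠ col k n w ∧ del k n v w) := by
    ext w
    simp only [Finset.mem_filter, Finset.mem_univ, true_and, Finset.mem_sdiff]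
    tauto
  have e1 := Finset.card_sdiff_add_card_eq_card hsub
  have e2 : (univ.filter fun w => col k n v ≠ col k n w).card + cnt k n (col k n v) = n := by
    have h := Finset.card_filter_add_card_filter_not
      (s := (univ : Finset (Fin n))) (p := fun w : Fin n => col k n v = col k n w)
    rw [Finset.card_univ, Fintype.card_fin] at h
    have h1 : (univ.filter fun w : Fin n => ¬ col k n v = col k n w)
        = (univ.filter fun w => col k n v ≠ col k n w) := rfl
    have h2 : cnt k n (col k n v) = (univ.filter fun w : Fin n => col k n v = col k n w).card := by
      unfold cnt
      congr 1
      apply Finset.filter_congr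
      intro w _
      exact eq_comm
    rw [h2, h1] at *
    omega
  have e3 := del_card hk hs hn v
  have e4 := mtch_card hk hs hn v
  rw [hdeg, hsplit, Finset.card_union_of_disjoint hdisj, hsd]
  omega
-- === chunk: edge sums ===

lemma sum_mI : (∑ v : Fin n, if ∃ t, t < 2*s ∧ (v:ℕ) = t*(k-1) then 1 else 0) = 2*s := by
  rw [Finset.sum_boole, Nat.cast_id]
  have hcard : (univ.filter fun v : Fin n => ∃ t, t < 2*s ∧ (v:ℕ) = t*(k-1)).card
      = (Finset.range (2*s)).card := by
    refine Finset.card_nbij (fun v : Fin n => (v:ℕ)/(k-1)) ?_ ?_ ?_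
    · intro v hv
      simp only [Finset.mem_coe, Finset.mem_filter, Finset.mem_univ, true_and] at hv
      obtain ⟨t, ht, hv⟩ := hv
      simp only [Finset.mem_coe, Finset.mem_range]
      rw [hv, Nat.mul_div_cancel _ (by omega : 0 < k - 1)]
      exact ht
    · intro v₁ h₁ v₂ h₂ h
      simp only [Finset.coe_filter, Set.mem_setOf_eq, Finset.mem_univ, true_and] at h₁ h₂
      obtain ⟨t₁, ht₁, hv₁⟩ := h₁
      obtain ⟨t₂, ht₂, hv₂⟩ := h₂
      simp only at h
      rw [hv₁, hv₂, Nat.mul_div_cancel _ (by omega : 0 < k - 1),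
        Nat.mul_div_cancel _ (by omega : 0 < k - 1)] at h
      exact Fin.ext (by rw [hv₁, hv₂, h])
    · intro t ht
      simp only [Finset.coe_range, Set.mem_Iio] at ht
      have hlt : t*(k-1) < n := by
        have := bd hk hs hn (x := t) (y := k-1) (by omega) (le_refl _)
        omega
      refine ⟨⟨t*(k-1), hlt⟩, ?_, ?_⟩
      · simp only [Finset.coe_filter, Set.mem_setOf_eq, Finset.mem_univ, true_and]
        exact ⟨t, ht, rfl⟩
      · simp only
        rw [Nat.mul_div_cancel _ (by omega : 0 < k - 1)]
  rw [hcard, Finset.card_range]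

lemma sum_dI : (∑ v : Fin n, if n % (k-1) = 1 ∧ ((v:ℕ) = 0 ∨ (v:ℕ) = 1) then 1 else 0)
    = if n % (k-1) = 1 then 2 else 0 := by
  have hn2 : 2 ≤ n := by have := kn hk hs hn; omega
  by_cases hr : n % (k-1) = 1
  · rw [if_pos hr]
    simp only [hr, true_and]
    rw [Finset.sum_boole, Nat.cast_id]
    have : (univ.filter fun v : Fin n => (v:ℕ) = 0 ∨ (v:ℕ) = 1)
        = {⟨0, by omega⟩, ⟨1, by omega⟩} := by
      ext v
      simp only [Finset.mem_filter, Finset.mem_univ, true_and, Finset.mem_insert,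
        Finset.mem_singleton]
      constructor
      · rintro (h | h)
        · exact Or.inl (Fin.ext h)
        · exact Or.inr (Fin.ext h)
      · rintro (rfl | rfl)
        · exact Or.inl rfl
        · exact Or.inr rfl
    rw [this, Finset.card_insert_of_notMem (by simp), Finset.card_singleton]
  · rw [if_neg hr]
    apply Finset.sum_eq_zero
    intro v _
    rw [if_neg (by tauto)]

lemma sum_col_sq : (∑ v : Fin n, cnt k n (col k n v))
    = ∑ i ∈ Finset.range (k-1), cnt k n i * cnt k n i := by
  rw [← Finset.sum_fiberwise_of_maps_to
    (fun v _ => Finset.mem_range.2 (col_lt hk hs hn v)) (fun v => cnt k n (col k n v))]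
  apply Finset.sum_congr rfl
  intro i _
  rw [Finset.sum_congr rfl (fun v hv => by rw [(Finset.mem_filter.1 hv).2]),
    Finset.sum_const, smul_eq_mul]
  rfl

lemma sum_mod_sq : (∑ v : Fin n, Rc k n ((v:ℕ) % (k-1)))
    = ∑ i ∈ Finset.range (k-1), Rc k n i * Rc k n i := by
  rw [← Finset.sum_fiberwise_of_maps_to
    (fun v _ => Finset.mem_range.2 (Nat.mod_lt _ (by omega : 0 < k-1)))
    (fun v : Fin n => Rc k n ((v:ℕ) % (k-1)))]
  apply Finset.sum_congr rfl
  intro i _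
  rw [Finset.sum_congr rfl (fun v hv => by rw [(Finset.mem_filter.1 hv).2]),
    Finset.sum_const, smul_eq_mul]
  rfl

lemma twice_G : 2 * edgeCount (GG k s n)
      + (∑ i ∈ Finset.range (k-1), cnt k n i * cnt k n i)
      + (if n % (k-1) = 1 then 2 else 0)
    = n*n + 2*s := by
  have hE : 2 * edgeCount (GG k s n) = ∑ v : Fin n, (GG k s n).degree v := by
    rw [edgeCount, Nat.card_eq_fintype_card, ← SimpleGraph.edgeFinset_card,
      SimpleGraph.sum_degrees_eq_twice_card_edges]
  rw [hE]
  have h1 : (∑ v : Fin n, ((GG k s n).degree v + cnt k n (col k n v)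
      + (if n % (k-1) = 1 ∧ ((v:ℕ) = 0 ∨ (v:ℕ) = 1) then 1 else 0)))
      = ∑ v : Fin n, (n + (if ∃ t, t < 2*s ∧ (v:ℕ) = t*(k-1) then 1 else 0)) :=
    Finset.sum_congr rfl (fun v _ => deg_eq hk hs hn v)
  rw [Finset.sum_add_distrib, Finset.sum_add_distrib, Finset.sum_add_distrib] at h1
  rw [sum_col_sq hk hs hn, sum_dI hk hs hn,
    sum_mI hk hs hn, Finset.sum_const, Finset.card_univ, Fintype.card_fin, smul_eq_mul] at h1
  omega

lemma turan_deg (v : Fin n) :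
    (turanGraph n (k-1)).degree v + Rc k n ((v:ℕ) % (k-1)) = n := by
  classical
  have hdeg : (turanGraph n (k-1)).degree v
      = (univ.filter fun w : Fin n => ¬ ((v:ℕ) % (k-1) = (w:ℕ) % (k-1))).card := by
    have h1 : (turanGraph n (k-1)).degree v
        = (univ.filter fun w : Fin n => (turanGraph n (k-1)).Adj v w).card := by
      rw [← SimpleGraph.neighborFinset_eq_filter]
      rfl
    rw [h1]
    congr 1
  have h := Finset.card_filter_add_card_filter_not
    (s := (univ : Finset (Fin n))) (p := fun w : Fin n => (v:ℕ) % (k-1) = (w:ℕ) % (k-1))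
  rw [Finset.card_univ, Fintype.card_fin] at h
  have h2 : Rc k n ((v:ℕ) % (k-1))
      = (univ.filter fun w : Fin n => (v:ℕ) % (k-1) = (w:ℕ) % (k-1)).card := by
    unfold Rc
    congr 1
    apply Finset.filter_congr
    intro w _
    exact eq_comm
  rw [hdeg, h2]
  omega

lemma twice_T : 2 * edgeCount (turanGraph n (k-1))
      + (∑ i ∈ Finset.range (k-1), Rc k n i * Rc k n i) = n*n := by
  have hE : 2 * edgeCount (turanGraph n (k-1))
      = ∑ v : Fin n, (turanGraph n (k-1)).degree v := by
    rw [edgeCount, Nat.card_eq_fintype_card, ← SimpleGraph.edgeFinset_card,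
      SimpleGraph.sum_degrees_eq_twice_card_edges]
  rw [hE]
  have h1 : (∑ v : Fin n, ((turanGraph n (k-1)).degree v + Rc k n ((v:ℕ) % (k-1))))
      = ∑ v : Fin n, n := Finset.sum_congr rfl (fun v _ => turan_deg hk hs hn v)
  rw [Finset.sum_add_distrib,
    sum_mod_sq hk hs hn, Finset.sum_const, Finset.card_univ, Fintype.card_fin,
    smul_eq_mul] at h1
  omega

lemma Scnt_rel : (∑ i ∈ Finset.range (k-1), cnt k n i * cnt k n i)
      + (if n % (k-1) = 1 then 2 else 0)
    = (∑ i ∈ Finset.range (k-1), Rc k n i * Rc k n i) + 2 := by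
  by_cases hr : n % (k-1) = 1
  · rw [if_pos hr]
    have : (∑ i ∈ Finset.range (k-1), cnt k n i * cnt k n i)
        = ∑ i ∈ Finset.range (k-1), Rc k n i * Rc k n i :=
      Finset.sum_congr rfl (fun i _ => by rw [cnt_eq_Rc_r1 hk hs hn hr])
    rw [this]
  · rw [if_neg hr]
    have h0 : (0:ℕ) ∈ Finset.range (k-1) := Finset.mem_range.2 (by omega)
    have hvz1 : 1 ≤ vz k n := vz_pos hk hs hn hr
    have hvzmem : vz k n ∈ (Finset.range (k-1)).erase 0 := by
      simp only [Finset.mem_erase, Finset.mem_range]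
      exact ⟨by omega, vz_lt hk hs hn⟩
    rw [← Finset.add_sum_erase _ (fun i => cnt k n i * cnt k n i) h0,
      ← Finset.add_sum_erase _ (fun i => cnt k n i * cnt k n i) hvzmem,
      ← Finset.add_sum_erase _ (fun i => Rc k n i * Rc k n i) h0,
      ← Finset.add_sum_erase _ (fun i => Rc k n i * Rc k n i) hvzmem]
    have hrest : (∑ i ∈ ((Finset.range (k-1)).erase 0).erase (vz k n), cnt k n i * cnt k n i)
        = ∑ i ∈ ((Finset.range (k-1)).erase 0).erase (vz k n), Rc k n i * Rc k n i := by
      apply Finset.sum_congr rfl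
      intro i hi
      simp only [Finset.mem_erase, Finset.mem_range] at hi
      rw [cnt_other hk hs hn hr hi.2.1 hi.1]
    rw [hrest]
    have hq1 : 1 ≤ n / (k-1) := by
      have hkle := kn hk hs hn
      exact Nat.one_le_div_iff (by omega) |>.2 (by omega)
    have hRR : Rc k n (vz k n) = Rc k n 0 := by
      rw [Rc_val hk hs hn (vz_lt hk hs hn), Rc_val hk hs hn (by omega : 0 < k - 1)]
      congr 1
      unfold vz
      by_cases h0' : n % (k-1) = 0
      · rw [if_pos h0', if_neg (by omega), if_neg (by omega)]
      · rw [if_neg h0', if_pos (by omega), if_pos (by omega)]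
    have hc0 : cnt k n 0 = Rc k n 0 + 1 := cnt_zero hk hs hn hr
    have hcv : cnt k n (vz k n) + 1 = Rc k n (vz k n) := cnt_vz hk hs hn hr
    have hRpos : 1 ≤ Rc k n 0 := by
      rw [Rc_val hk hs hn (by omega : 0 < k - 1)]
      omega
    obtain ⟨u, hu⟩ : ∃ u, cnt k n (vz k n) = u := ⟨_, rfl⟩
    have ht : Rc k n 0 = u + 1 := by omega
    rw [hc0, hu, hRR, ht]
    ring

-- === chunk: clique helpers ===

omit hk hs hn in
lemma list_prod_range (f : ℕ → ℕ) (t : ℕ) :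
    ((List.range t).map f).prod = ∏ i ∈ Finset.range t, f i := by
  induction t with
  | zero => simp
  | succ t ih => rw [List.range_succ, List.map_append, List.prod_append,
      Finset.prod_range_succ, ih]; simp

omit hk hs hn in
lemma prod_ite_lt (a b c t : ℕ) (hct : c ≤ t) :
    (∏ i ∈ Finset.range t, if i < c then a else b) = a^c * b^(t-c) := by
  induction t with
  | zero => simp [Nat.le_zero.1 hct]
  | succ t ih =>
    by_cases hc : c ≤ t
    · rw [Finset.prod_range_succ, ih hc, if_neg (by omega)]
      have : t + 1 - c = (t - c) + 1 := by omega
      rw [this, pow_succ]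
      ring
    · have hc1 : c = t + 1 := by omega
      subst hc1
      rw [Finset.prod_congr rfl (fun i hi => if_pos (Finset.mem_range.1 hi)),
        Finset.prod_const, Finset.card_range, Nat.sub_self, pow_zero, mul_one]

lemma AV_val (j : ℕ) (hj : j < s) (hnp : 0 < n) : ((AV k n j hnp : Fin n) : ℕ) = 2*j*(k-1) := by
  have hlt : 2*j*(k-1) < n := by
    have := bd hk hs hn (x := 2*j) (y := k-1) (by omega) (le_refl _)
    have h2 : (2*j)*(k-1) = 2*j*(k-1) := by ring
    omega
  exact Nat.mod_eq_of_lt hlt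

lemma BV_val (j : ℕ) (hj : j < s) (hnp : 0 < n) : ((BV k n j hnp : Fin n) : ℕ) = (2*j+1)*(k-1) := by
  have hlt : (2*j+1)*(k-1) < n := by
    have := bd hk hs hn (x := 2*j+1) (y := k-1) (by omega) (le_refl _)
    omega
  exact Nat.mod_eq_of_lt hlt

lemma W1_val (hnp : 0 < n) : ((W1 n hnp : Fin n) : ℕ) = 1 := by
  have : 2 ≤ n := by have := kn hk hs hn; omega
  exact Nat.mod_eq_of_lt (by omega)

lemma tv_val (j i : ℕ) (hj : j < s) (hi : i < k-2) (hnp : 0 < n) :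
    ((tvF k n j i hnp : Fin n) : ℕ) = (i+1)+(j+1)*(k-1) := by
  have hlt : (i+1)+(j+1)*(k-1) < n := by
    have h1 : (j+1)*(k-1) ≤ (2*s+1)*(k-1) := Nat.mul_le_mul_right _ (by omega)
    have := hbound hk hs hn
    omega
  exact Nat.mod_eq_of_lt hlt

lemma col_of_val_zero (x : Fin n) (hx : (x:ℕ) = 0) : col k n x = 0 := by
  unfold col
  split
  · rfl
  · rw [hx]; exact Nat.zero_mod _

lemma col_W1 (hr : n % (k-1) = 1) (hnp : 0 < n) : col k n (W1 n hnp) = 1 := by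
  unfold col
  rw [if_neg (by simp [hr]), W1_val hk hs hn hnp, Nat.mod_eq_of_lt (by omega)]

omit hk hs hn in
lemma Ls_length : (Ls k n).length = k-2 := by simp [Ls]

omit hk hs hn in
lemma mem_Ls {A : Finset (Fin n)} : A ∈ Ls k n ↔
    ∃ i, i < k-2 ∧ A = Finset.univ.filter (fun v : Fin n => col k n v = i+1) := by
  simp only [Ls, List.mem_map, List.mem_range]
  constructor
  · rintro ⟨i, hi, rfl⟩; exact ⟨i, hi, rfl⟩
  · rintro ⟨i, hi, rfl⟩; exact ⟨i, hi, rfl⟩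

omit hk hs hn in
lemma Ls_disj : (Ls k n).Pairwise Disjoint := by
  unfold Ls
  rw [List.pairwise_map]
  have : (List.range (k-2)).Pairwise (· < ·) := List.pairwise_lt_range
  apply this.imp_of_mem
  intro a b _ _ hab
  rw [Finset.disjoint_left]
  intro x hx hx'
  simp only [Finset.mem_filter] at hx hx'
  omega

lemma col_mem_transv {T : Finset (Fin n)} (hT : T ∈ transv (Ls k n)) {x : Fin n}
    (hx : x ∈ T) : 1 ≤ col k n x ∧ col k n x ≤ k-2 := by
  obtain ⟨A, hA, hxA⟩ := mem_transv_subset hT x hx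
  obtain ⟨i, hi, rfl⟩ := mem_Ls.1 hA
  simp only [Finset.mem_filter] at hxA
  omega
-- === chunk: clique characterization ===

lemma kdvd_one {j' : ℕ} (h : (2*j'+1)*(k-1) = 1 ∨ 2*j'*(k-1) = 1) : False := by
  have h3 : 3 ≤ k - 1 := by omega
  rcases h with h | h
  · have hd : (k-1) ∣ (2*j'+1)*(k-1) := dvd_mul_left _ _
    rw [h] at hd
    have := Nat.le_of_dvd (by omega) hd
    omega
  · have hd : (k-1) ∣ 2*j'*(k-1) := dvd_mul_left _ _
    rw [h] at hd
    have := Nat.le_of_dvd (by omega) hd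
    omega

lemma clique_char (hnp : 0 < n) :
    (univ.filter fun T : Finset (Fin n) => (GG k s n).IsNClique k T)
    = ((Finset.range s ×ˢ transv (Ls k n)).filter
        (fun p => ¬ (n % (k-1) = 1 ∧ p.1 = 0 ∧ W1 n hnp ∈ p.2))).image
        (fun p => insert (AV k n p.1 hnp) (insert (BV k n p.1 hnp) p.2)) := by
  ext T
  simp only [Finset.mem_filter, Finset.mem_univ, true_and, Finset.mem_image,
    Finset.mem_product]
  constructor
  · intro hT
    have hmaps : ∀ x ∈ T, col k n x ∈ Finset.range (k-1) :=
      fun x _ => Finset.mem_range.2 (col_lt hk hs hn x)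
    have hlt : (Finset.range (k-1)).card < T.card := by
      rw [Finset.card_range, hT.card_eq]; omega
    obtain ⟨u, hu, v, hv, huv, hcoluv⟩ :=
      Finset.exists_ne_map_eq_of_card_lt_of_maps_to hlt hmaps
    have hadj : (GG k s n).Adj u v := hT.isClique hu hv huv
    have hm : mtch k s n u v := by
      rcases (adj_iff hk hs hn u v).1 hadj with ⟨hne, -⟩ | h
      · exact absurd hcoluv hne
      · exact h
    obtain ⟨j, hj, hcase⟩ := hm
    obtain ⟨a, ha, b, hb, hav, hbv⟩ : ∃ a ∈ T, ∃ b ∈ T,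
        (a:ℕ) = 2*j*(k-1) ∧ (b:ℕ) = (2*j+1)*(k-1) := by
      rcases hcase with ⟨h1, h2⟩ | ⟨h1, h2⟩
      · exact ⟨u, hu, v, hv, h1, h2⟩
      · exact ⟨v, hv, u, hu, h1, h2⟩
    have hane : a ≠ b := by
      intro h
      rw [h, hbv] at hav
      have := mul_cancel_km hk hs hn (hav : (2*j+1)*(k-1) = 2*j*(k-1))
      omega
    have hcola : col k n a = 0 := col_mul hk hs hn hav
    have hcolb : col k n b = 0 := col_mul hk hs hn hbv
    have hcol0 : ∀ x ∈ T, col k n x = 0 → x = a ∨ x = b := by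
      intro x hx hcx
      by_contra hxc
      push_neg at hxc
      obtain ⟨hxa, hxb⟩ := hxc
      have hadj1 : (GG k s n).Adj x a := hT.isClique hx ha hxa
      have hm1 : mtch k s n x a := by
        rcases (adj_iff hk hs hn x a).1 hadj1 with ⟨hne, -⟩ | h
        · exact absurd (hcx.trans hcola.symm) hne
        · exact h
      obtain ⟨j', hj', ⟨hx1, ha1⟩ | ⟨ha1, hx1⟩⟩ := hm1
      · rw [hav] at ha1
        have := mul_cancel_km hk hs hn ha1.symm
        omega
      · rw [hav] at ha1
        have : 2*j' = 2*j := mul_cancel_km hk hs hn ha1.symm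
        have hjj : j' = j := by omega
        subst hjj
        exact hxb (Fin.ext (by rw [hx1, hbv]))
    have hbT : b ∈ T.erase a := Finset.mem_erase.2 ⟨fun h => hane h.symm, hb⟩
    have hcardT' : ((T.erase a).erase b).card = k-2 := by
      rw [Finset.card_erase_of_mem hbT, Finset.card_erase_of_mem ha, hT.card_eq]
      omega
    have hconv : ∀ x ∈ (T.erase a).erase b, x ∈ T ∧ x ≠ a ∧ x ≠ b := by
      intro x hx
      simp only [Finset.mem_erase] at hx
      exact ⟨hx.2.2, hx.2.1, hx.1⟩
    have hcolT' : ∀ x ∈ (T.erase a).erase b, 1 ≤ col k n x ∧ col k n x ≤ k-2 := by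
      intro x hx
      obtain ⟨hxT, hxa, hxb⟩ := hconv x hx
      have h0 : col k n x ≠ 0 := by
        intro h
        rcases hcol0 x hxT h with rfl | rfl
        · exact hxa rfl
        · exact hxb rfl
      have := col_lt hk hs hn x
      omega
    have hT'mem : (T.erase a).erase b ∈ transv (Ls k n) := by
      apply mem_transv_of
      · intro x hx
        refine ⟨univ.filter (fun v : Fin n => col k n v = col k n x), ?_, by simp⟩
        rw [mem_Ls]
        obtain ⟨h1, h2⟩ := hcolT' x hx
        refine ⟨col k n x - 1, by omega, ?_⟩
        have he : col k n x - 1 + 1 = col k n x := by omega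
        rw [he]
      · intro A hA
        obtain ⟨i, hi, rfl⟩ := mem_Ls.1 hA
        rw [Finset.card_le_one]
        intro x hx y hy
        simp only [Finset.mem_inter, Finset.mem_filter, Finset.mem_univ, true_and] at hx hy
        by_contra hxy
        have hadjxy : (GG k s n).Adj x y :=
          hT.isClique (hconv x hx.1).1 (hconv y hy.1).1 hxy
        have hmxy : mtch k s n x y := by
          rcases (adj_iff hk hs hn x y).1 hadjxy with ⟨hne, -⟩ | h
          · exact absurd (hx.2.trans hy.2.symm) hne
          · exact h
        have := (mtch_cols hk hs hn hmxy).1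
        rw [hx.2] at this
        omega
      · rw [hcardT', Ls_length]
    have hfilt : ¬ (n % (k-1) = 1 ∧ j = 0 ∧ W1 n hnp ∈ (T.erase a).erase b) := by
      rintro ⟨hr, hj0, hWT⟩
      subst hj0
      have haval : (a:ℕ) = 0 := by rw [hav]; ring_nf
      obtain ⟨hWT1, hWa, hWb⟩ := hconv _ hWT
      have hadjWa : (GG k s n).Adj (W1 n hnp) a := hT.isClique hWT1 ha hWa
      have hW1v : ((W1 n hnp : Fin n) : ℕ) = 1 := W1_val hk hs hn hnp
      rcases (adj_iff hk hs hn _ _).1 hadjWa with ⟨-, hnd⟩ | hmw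
      · exact hnd ⟨hr, Or.inr ⟨hW1v, haval⟩⟩
      · obtain ⟨j', hj', ⟨h1, h2⟩ | ⟨h1, h2⟩⟩ := hmw
        · exact kdvd_one hk hs hn (Or.inr (by omega : 2*j'*(k-1) = 1))
        · exact kdvd_one hk hs hn (Or.inl (by omega : (2*j'+1)*(k-1) = 1))
    refine ⟨(j, (T.erase a).erase b), ⟨⟨Finset.mem_range.2 hj, hT'mem⟩, hfilt⟩, ?_⟩
    have haAV : AV k n j hnp = a := Fin.ext (by rw [AV_val hk hs hn j hj, hav])
    have hbBV : BV k n j hnp = b := Fin.ext (by rw [BV_val hk hs hn j hj, hbv])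
    simp only [haAV, hbBV]
    rw [Finset.insert_erase hbT, Finset.insert_erase ha]
  · rintro ⟨⟨j, T'⟩, ⟨⟨hjmem, hT'⟩, hfilt⟩, rfl⟩
    simp only at hfilt ⊢
    have hj : j < s := Finset.mem_range.1 hjmem
    have hav : ((AV k n j hnp : Fin n) : ℕ) = 2*j*(k-1) := AV_val hk hs hn j hj hnp
    have hbv : ((BV k n j hnp : Fin n) : ℕ) = (2*j+1)*(k-1) := BV_val hk hs hn j hj hnp
    have hcolA : col k n (AV k n j hnp) = 0 := col_mul hk hs hn hav
    have hcolB : col k n (BV k n j hnp) = 0 := col_mul hk hs hn hbv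
    have hAB : AV k n j hnp ≠ BV k n j hnp := by
      intro h
      rw [h, hbv] at hav
      have := mul_cancel_km hk hs hn (hav : (2*j+1)*(k-1) = 2*j*(k-1))
      omega
    have hcolT' : ∀ x ∈ T', 1 ≤ col k n x ∧ col k n x ≤ k-2 :=
      fun x hx => col_mem_transv hk hs hn hT' hx
    have hAT' : AV k n j hnp ∉ T' := fun h => by
      have := hcolT' _ h; omega
    have hBT' : BV k n j hnp ∉ T' := fun h => by
      have := hcolT' _ h; omega
    have hvalnz : ∀ x ∈ T', (x:ℕ) ≠ 0 := by
      intro x hx h0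
      have := col_of_val_zero hk hs hn x h0
      have := hcolT' x hx
      omega
    have adjAB : (GG k s n).Adj (AV k n j hnp) (BV k n j hnp) :=
      (adj_iff hk hs hn _ _).2 (Or.inr ⟨j, hj, Or.inl ⟨hav, hbv⟩⟩)
    have adjAx : ∀ x ∈ T', (GG k s n).Adj (AV k n j hnp) x := by
      intro x hx
      apply (adj_iff hk hs hn _ _).2
      left
      constructor
      · have := hcolT' x hx
        omega
      · rintro ⟨hr, ⟨hA0, hx1⟩ | ⟨hA1, hx0⟩⟩
        · rw [hav] at hA0
          have hj0 : j = 0 := by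
            rcases Nat.mul_eq_zero.1 hA0 with h | h <;> omega
          have hxW : x = W1 n hnp := Fin.ext (by rw [hx1, W1_val hk hs hn hnp])
          exact hfilt ⟨hr, hj0, hxW ▸ hx⟩
        · exact hvalnz x hx hx0
    have adjBx : ∀ x ∈ T', (GG k s n).Adj (BV k n j hnp) x := by
      intro x hx
      apply (adj_iff hk hs hn _ _).2
      left
      constructor
      · have := hcolT' x hx
        omega
      · rintro ⟨hr, ⟨hB0, hx1⟩ | ⟨hB1, hx0⟩⟩
        · rw [hbv] at hB0
          rcases Nat.mul_eq_zero.1 hB0 with h | h <;> omega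
        · rw [hbv] at hB1
          exact kdvd_one hk hs hn (Or.inl hB1)
    have adjxy : ∀ x ∈ T', ∀ y ∈ T', x ≠ y → (GG k s n).Adj x y := by
      intro x hx y hy hxy
      apply (adj_iff hk hs hn _ _).2
      left
      constructor
      · intro hcxy
        have hcx := hcolT' x hx
        have hA : (univ.filter (fun v : Fin n => col k n v = col k n x)) ∈ Ls k n := by
          rw [mem_Ls]
          refine ⟨col k n x - 1, by omega, ?_⟩
          have he : col k n x - 1 + 1 = col k n x := by omega
          rw [he]
        have := inter_card_transv Ls_disj hT' _ hA x
          (Finset.mem_inter.2 ⟨hx, by simp⟩) y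
          (Finset.mem_inter.2 ⟨hy, by simp [← hcxy]⟩)
        exact hxy this
      · rintro ⟨hr, ⟨hx0, hy1⟩ | ⟨hx1, hy0⟩⟩
        · exact hvalnz x hx hx0
        · exact hvalnz y hy hy0
    constructor
    · -- IsClique
      intro x hx y hy hxy
      simp only [Finset.coe_insert, Set.mem_insert_iff, Finset.mem_coe] at hx hy
      rcases hx with rfl | rfl | hx <;> rcases hy with rfl | rfl | hy
      · exact absurd rfl hxy
      · exact adjAB
      · exact adjAx y hy
      · exact adjAB.symm
      · exact absurd rfl hxy
      · exact adjBx y hy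
      · exact (adjAx x hx).symm
      · exact (adjBx x hx).symm
      · exact adjxy x hx y hy hxy
    · -- card
      rw [Finset.card_insert_of_notMem (by
          simp only [Finset.mem_insert]
          rintro (h | h)
          · exact hAB h
          · exact hAT' h),
        Finset.card_insert_of_notMem hBT',
        card_mem_transv Ls_disj hT', Ls_length]
      omega

-- === chunk: clique count ===

lemma phi_injOn (hnp : 0 < n) :
    Set.InjOn (fun p : ℕ × Finset (Fin n) => insert (AV k n p.1 hnp) (insert (BV k n p.1 hnp) p.2))
      ↑((Finset.range s ×ˢ transv (Ls k n)).filter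
        (fun p => ¬ (n % (k-1) = 1 ∧ p.1 = 0 ∧ W1 n hnp ∈ p.2))) := by
  rintro ⟨j, T'⟩ hp ⟨j2, T2⟩ hp2 h
  simp only [Finset.coe_filter, Set.mem_setOf_eq, Finset.mem_product, Finset.mem_range] at hp hp2
  obtain ⟨⟨hj, hT'⟩, -⟩ := hp
  obtain ⟨⟨hj2, hT2⟩, -⟩ := hp2
  simp only at h
  have hav : ((AV k n j hnp : Fin n) : ℕ) = 2*j*(k-1) := AV_val hk hs hn j hj hnp
  have hbv : ((BV k n j hnp : Fin n) : ℕ) = (2*j+1)*(k-1) := BV_val hk hs hn j hj hnp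
  have hav2 : ((AV k n j2 hnp : Fin n) : ℕ) = 2*j2*(k-1) := AV_val hk hs hn j2 hj2 hnp
  have hbv2 : ((BV k n j2 hnp : Fin n) : ℕ) = (2*j2+1)*(k-1) := BV_val hk hs hn j2 hj2 hnp
  have hmemA : AV k n j hnp ∈ insert (AV k n j2 hnp) (insert (BV k n j2 hnp) T2) := by
    rw [← h]; exact Finset.mem_insert_self _ _
  have hjj : j = j2 := by
    rcases Finset.mem_insert.1 hmemA with h1 | h1
    · have : (2:ℕ)*j = 2*j2 := by
        apply mul_cancel_km hk hs hn
        rw [← hav, ← hav2, h1]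
      omega
    · rcases Finset.mem_insert.1 h1 with h2 | h2
      · exfalso
        have : (2:ℕ)*j = 2*j2+1 := by
          apply mul_cancel_km hk hs hn
          rw [← hav, ← hbv2, h2]
        omega
      · exfalso
        have := (col_mem_transv hk hs hn hT2 h2).1
        rw [col_mul hk hs hn hav] at this
        omega
  subst hjj
  have herase : ∀ (X : Finset (Fin n)), X ∈ transv (Ls k n) →
      ((insert (AV k n j hnp) (insert (BV k n j hnp) X)).erase (AV k n j hnp)).erase
        (BV k n j hnp) = X := by
    intro X hX
    have hAX : AV k n j hnp ∉ X := fun hc => by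
      have := (col_mem_transv hk hs hn hX hc).1
      rw [col_mul hk hs hn hav] at this
      omega
    have hBX : BV k n j hnp ∉ X := fun hc => by
      have := (col_mem_transv hk hs hn hX hc).1
      rw [col_mul hk hs hn hbv] at this
      omega
    have hABne : AV k n j hnp ≠ BV k n j hnp := by
      intro hc
      have : (2:ℕ)*j = 2*j+1 := by
        apply mul_cancel_km hk hs hn
        rw [← hav, ← hbv, hc]
      omega
    rw [Finset.erase_insert (by
        simp only [Finset.mem_insert]
        rintro (hc | hc)
        · exact hABne hc
        · exact hAX hc),
      Finset.erase_insert hBX]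
  have := herase T' hT'
  rw [h, herase T2 hT2] at this
  exact Prod.ext rfl this.symm

lemma cliquecount_filter :
    cliqueCount (GG k s n) k
      = (univ.filter fun T : Finset (Fin n) => (GG k s n).IsNClique k T).card := by
  rw [cliqueCount, Nat.card_eq_fintype_card, Fintype.card_subtype]

lemma transv_card_P : (transv (Ls k n)).card = ∏ i ∈ Finset.range (k-2), cnt k n (i+1) := by
  rw [card_transv Ls_disj]
  unfold Ls
  rw [List.map_map, list_prod_range]
  rfl

lemma count_main : cliqueCount (GG k s n) k = NkBound k s n := by
  have hnp : 0 < n := by have := kn hk hs hn; omega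
  have hq1 : 1 ≤ n / (k-1) := Nat.one_le_div_iff (by omega) |>.2 (by have := kn hk hs hn; omega)
  have hrlt : n % (k-1) < k-1 := Nat.mod_lt _ (by omega)
  rw [cliquecount_filter hk hs hn, clique_char hk hs hn hnp,
    Finset.card_image_of_injOn (phi_injOn hk hs hn hnp)]
  by_cases hr : n % (k-1) = 1
  · -- r = 1 case
    have hsdiff : ((Finset.range s ×ˢ transv (Ls k n)).filter
        (fun p => ¬ (n % (k-1) = 1 ∧ p.1 = 0 ∧ W1 n hnp ∈ p.2)))
        = (Finset.range s ×ˢ transv (Ls k n))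
          \ ((Finset.range s ×ˢ transv (Ls k n)).filter
              (fun p => p.1 = 0 ∧ W1 n hnp ∈ p.2)) := by
      ext p
      simp only [Finset.mem_filter, Finset.mem_sdiff, hr, true_and]
      tauto
    rw [hsdiff, Finset.card_sdiff_of_subset (Finset.filter_subset _ _)]
    have hcons : Ls k n = (Finset.univ.filter (fun v : Fin n => col k n v = 0+1))
        :: (List.range (k-3)).map
            (fun i => Finset.univ.filter (fun v : Fin n => col k n v = (i+1)+1)) := by
      have h32 : k-2 = (k-3)+1 := by omega
      rw [Ls, h32, List.range_succ_eq_map, List.map_cons, List.map_map]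
      rfl
    have hW1head : W1 n hnp ∈ Finset.univ.filter (fun v : Fin n => col k n v = 0+1) := by
      simp only [Finset.mem_filter, Finset.mem_univ, true_and]
      exact col_W1 hk hs hn hr hnp
    have hdisj2 : ((Finset.univ.filter (fun v : Fin n => col k n v = 0+1))
        :: (List.range (k-3)).map
            (fun i => Finset.univ.filter (fun v : Fin n => col k n v = (i+1)+1))).Pairwise
          Disjoint := by
      rw [← hcons]; exact Ls_disj
    have hBcard : ((Finset.range s ×ˢ transv (Ls k n)).filter
        (fun p => p.1 = 0 ∧ W1 n hnp ∈ p.2)).card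
        = ((transv (Ls k n)).filter (fun T => W1 n hnp ∈ T)).card := by
      have : ((Finset.range s ×ˢ transv (Ls k n)).filter
          (fun p => p.1 = 0 ∧ W1 n hnp ∈ p.2))
          = ({0} : Finset ℕ) ×ˢ ((transv (Ls k n)).filter (fun T => W1 n hnp ∈ T)) := by
        ext ⟨j, T'⟩
        simp only [Finset.mem_filter, Finset.mem_product, Finset.mem_range,
          Finset.mem_singleton]
        constructor
        · rintro ⟨⟨h1, h2⟩, h3, h4⟩; exact ⟨h3, h2, h4⟩
        · rintro ⟨rfl, h2, h3⟩; exact ⟨⟨by omega, h2⟩, rfl, h3⟩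
      rw [this, Finset.card_product, Finset.card_singleton, one_mul]
    rw [hBcard]
    have hfw : ((transv (Ls k n)).filter (fun T => W1 n hnp ∈ T)).card
        = (transv ((List.range (k-3)).map
            (fun i => Finset.univ.filter (fun v : Fin n => col k n v = (i+1)+1)))).card := by
      conv_lhs => rw [hcons]
      exact filter_w_transv hdisj2 hW1head
    rw [hfw]
    have htail : (transv ((List.range (k-3)).map
        (fun i => Finset.univ.filter (fun v : Fin n => col k n v = (i+1)+1)))).card
        = (n/(k-1))^(k-3) := by
      rw [card_transv (List.Pairwise.of_cons hdisj2), List.map_map, list_prod_range]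
      have : ∀ i ∈ Finset.range (k-3), (Finset.card ∘ fun i =>
          Finset.univ.filter (fun v : Fin n => col k n v = (i+1)+1)) i = n/(k-1) := by
        intro i hi
        simp only [Function.comp_apply]
        have : (Finset.univ.filter (fun v : Fin n => col k n v = (i+1)+1)).card
            = cnt k n (i+2) := rfl
        rw [this, cnt_eq_Rc_r1 hk hs hn hr, Rc_val hk hs hn (by
          simp only [Finset.mem_range] at hi; omega), hr, if_neg (by omega), Nat.add_zero]
      rw [Finset.prod_congr rfl this, Finset.prod_const, Finset.card_range]
    rw [htail, Finset.card_product, Finset.card_range, transv_card_P hk hs hn]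
    have hPval : (∏ i ∈ Finset.range (k-2), cnt k n (i+1)) = (n/(k-1))^(k-2) := by
      have : ∀ i ∈ Finset.range (k-2), cnt k n (i+1) = n/(k-1) := by
        intro i hi
        simp only [Finset.mem_range] at hi
        rw [cnt_eq_Rc_r1 hk hs hn hr, Rc_val hk hs hn (by omega), hr, if_neg (by omega), Nat.add_zero]
      rw [Finset.prod_congr rfl this, Finset.prod_const, Finset.card_range]
    rw [hPval, NkBound, if_neg (by omega), if_pos hr]
  · -- r ≠ 1
    have hfilt_true : ((Finset.range s ×ˢ transv (Ls k n)).filter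
        (fun p => ¬ (n % (k-1) = 1 ∧ p.1 = 0 ∧ W1 n hnp ∈ p.2)))
        = Finset.range s ×ˢ transv (Ls k n) :=
      Finset.filter_true_of_mem (fun p _ hc => hr hc.1)
    rw [hfilt_true, Finset.card_product, Finset.card_range, transv_card_P hk hs hn]
    by_cases hr0 : n % (k-1) = 0
    · have hvzval : vz k n = k-2 := by unfold vz; rw [if_pos hr0]
      have h32 : k-2 = (k-3)+1 := by omega
      rw [h32, Finset.prod_range_succ]
      have hhead : ∀ i ∈ Finset.range (k-3), cnt k n (i+1) = n/(k-1) := by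
        intro i hi
        simp only [Finset.mem_range] at hi
        rw [cnt_other hk hs hn hr (by omega) (by omega : i+1 ≠ vz k n)]
        · rw [Rc_val hk hs hn (by omega), hr0, if_neg (by omega), Nat.add_zero]
      rw [Finset.prod_congr rfl hhead, Finset.prod_const, Finset.card_range]
      have hlast : cnt k n (k-3+1) + 1 = n/(k-1) := by
        have he : k-3+1 = vz k n := by omega
        rw [he]
        have := cnt_vz hk hs hn hr
        rw [this, Rc_val hk hs hn (by omega : vz k n < k-1), hr0, if_neg (by omega), Nat.add_zero]
      rw [NkBound, if_pos hr0]
      have hc : cnt k n (k-3+1) = n/(k-1) - 1 := by omega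
      rw [hc]
      ring
    · -- 2 ≤ r ≤ k-2
      have hr2 : 2 ≤ n % (k-1) := by omega
      have hvzval : vz k n = n % (k-1) - 1 := by unfold vz; rw [if_neg hr0]
      have hvals : ∀ i ∈ Finset.range (k-2), cnt k n (i+1)
          = if i < n % (k-1) - 2 then n/(k-1) + 1 else n/(k-1) := by
        intro i hi
        simp only [Finset.mem_range] at hi
        by_cases hlt : i < n % (k-1) - 2
        · rw [if_pos hlt, cnt_other hk hs hn hr (by omega) (by omega),
            Rc_val hk hs hn (by omega), if_pos (by omega)]
        · rw [if_neg hlt]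
          by_cases heq : i + 1 = vz k n
          · have := cnt_vz hk hs hn hr
            rw [heq]
            rw [← heq] at this ⊢
            rw [heq] at this
            rw [heq]
            have h2 := Rc_val hk hs hn (show vz k n < k-1 from vz_lt hk hs hn)
            rw [h2, if_pos (by omega)] at this
            omega
          · rw [cnt_other hk hs hn hr (by omega) heq,
              Rc_val hk hs hn (by omega), if_neg (by omega), Nat.add_zero]
      rw [Finset.prod_congr rfl hvals, prod_ite_lt _ _ _ _ (by omega)]
      rw [NkBound, if_neg hr0, if_neg hr]
      have he : k - 2 - (n % (k-1) - 2) = k - n % (k-1) := by omega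
      rw [he]
      ring

-- === chunk: edge main, cover, final ===

lemma edge_main : edgeCount (GG k s n) = turanEdges (k-1) n + (s - 1) := by
  have h1 := twice_G hk hs hn
  have h2 := twice_T hk hs hn
  have h3 := Scnt_rel hk hs hn
  rw [turanEdges]
  by_cases hr : n % (k-1) = 1
  · rw [if_pos hr] at h1 h3
    omega
  · rw [if_neg hr] at h1 h3
    omega

lemma col_tv (j i : ℕ) (hj : j < s) (hi : i < k-2) (hnp : 0 < n) :
    col k n (tvF k n j i hnp) = i+1 := by
  have hv := tv_val hk hs hn j i hj hi hnp
  have hm1 : (k-1) ≤ (j+1)*(k-1) := Nat.le_mul_of_pos_left _ (by omega)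
  have hvz := vz_lt (k := k) (n := n) hk hs hn
  unfold col
  rw [if_neg (by rintro ⟨-, h⟩; rw [hv] at h; omega)]
  rw [hv, Nat.add_mul_mod_self_right, Nat.mod_eq_of_lt (by omega)]

lemma cover_main : cliqueCover (GG k s n) k = s := by
  have hnp : 0 < n := by have := kn hk hs hn; omega
  set S0 : Finset (Fin n) := (Finset.range s).image (fun j => AV k n j hnp) with hS0
  have hS0card : S0.card = s := by
    rw [hS0, Finset.card_image_of_injOn, Finset.card_range]
    intro a ha b hb hab
    simp only [Finset.coe_range, Set.mem_Iio] at ha hb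
    have hab' : AV k n a hnp = AV k n b hnp := hab
    have h1 : (2:ℕ)*a*(k-1) = 2*b*(k-1) := by
      rw [← AV_val hk hs hn a ha hnp, ← AV_val hk hs hn b hb hnp, hab']
    have := mul_cancel_km hk hs hn h1
    omega
  have hcover : ∀ T : Finset (Fin n), (GG k s n).IsNClique k T → ∃ v ∈ T, v ∈ S0 := by
    intro T hT
    have hmem : T ∈ (univ.filter fun T : Finset (Fin n) => (GG k s n).IsNClique k T) :=
      Finset.mem_filter.2 ⟨Finset.mem_univ _, hT⟩
    rw [clique_char hk hs hn hnp] at hmem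
    obtain ⟨p, hp, rfl⟩ := Finset.mem_image.1 hmem
    refine ⟨AV k n p.1 hnp, Finset.mem_insert_self _ _, ?_⟩
    rw [hS0, Finset.mem_image]
    exact ⟨p.1, (Finset.mem_product.1 (Finset.mem_filter.1 hp).1).1, rfl⟩
  have hub : cliqueCover (GG k s n) k ≤ s := Nat.sInf_le ⟨S0, hS0card, hcover⟩
  have hlb : s ≤ cliqueCover (GG k s n) k := by
    rw [cliqueCover]
    refine le_csInf ⟨s, ⟨S0, hS0card, hcover⟩⟩ ?_
    rintro x ⟨S, rfl, hS⟩
    set Tj : ℕ → Finset (Fin n) := fun j => insert (AV k n j hnp) (insert (BV k n j hnp)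
      ((Finset.range (k-2)).image (fun i => tvF k n j i hnp))) with hTj
    have htvinj : ∀ j < s, Set.InjOn (fun i => tvF k n j i hnp) ↑(Finset.range (k-2)) := by
      intro j hj a ha b hb hab
      simp only [Finset.coe_range, Set.mem_Iio] at ha hb
      have hab' : tvF k n j a hnp = tvF k n j b hnp := hab
      have h1 : (a+1)+(j+1)*(k-1) = (b+1)+(j+1)*(k-1) := by
        rw [← tv_val hk hs hn j a hj ha hnp, ← tv_val hk hs hn j b hj hb hnp, hab']
      omega
    have hT'mem : ∀ j < s, ((Finset.range (k-2)).image (fun i => tvF k n j i hnp))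
        ∈ transv (Ls k n) := by
      intro j hj
      apply mem_transv_of
      · intro v hv
        obtain ⟨i, hi, rfl⟩ := Finset.mem_image.1 hv
        simp only [Finset.mem_range] at hi
        refine ⟨univ.filter (fun w : Fin n => col k n w = i+1), ?_, by
          simp only [Finset.mem_filter, Finset.mem_univ, true_and]
          exact col_tv hk hs hn j i hj hi hnp⟩
        rw [mem_Ls]
        exact ⟨i, hi, rfl⟩
      · intro A hA
        obtain ⟨i0, hi0, rfl⟩ := mem_Ls.1 hA
        rw [Finset.card_le_one]
        intro a ha b hb
        simp only [Finset.mem_inter, Finset.mem_filter, Finset.mem_univ, true_and] at ha hb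
        obtain ⟨ha1, ha2⟩ := ha
        obtain ⟨hb1, hb2⟩ := hb
        obtain ⟨i, hi, rfl⟩ := Finset.mem_image.1 ha1
        obtain ⟨i', hi', rfl⟩ := Finset.mem_image.1 hb1
        simp only [Finset.mem_range] at hi hi'
        rw [col_tv hk hs hn j i hj hi hnp] at ha2
        rw [col_tv hk hs hn j i' hj hi' hnp] at hb2
        have : i = i' := by omega
        rw [this]
      · rw [Finset.card_image_of_injOn (htvinj j hj), Finset.card_range, Ls_length]
    have hcliq : ∀ j < s, (GG k s n).IsNClique k (Tj j) := by
      intro j hj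
      have hmem : Tj j ∈ (univ.filter fun T : Finset (Fin n) => (GG k s n).IsNClique k T) := by
        rw [clique_char hk hs hn hnp]
        apply Finset.mem_image.2
        refine ⟨(j, (Finset.range (k-2)).image (fun i => tvF k n j i hnp)), ?_, rfl⟩
        rw [Finset.mem_filter, Finset.mem_product]
        refine ⟨⟨Finset.mem_range.2 hj, hT'mem j hj⟩, ?_⟩
        rintro ⟨hr, -, hW⟩
        obtain ⟨i, hi, hWi⟩ := Finset.mem_image.1 hW
        simp only [Finset.mem_range] at hi
        have h1 : ((W1 n hnp : Fin n) : ℕ) = 1 := W1_val hk hs hn hnp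
        have h2 := tv_val hk hs hn j i hj hi hnp
        rw [hWi] at h2
        have hm1 : (k-1) ≤ (j+1)*(k-1) := Nat.le_mul_of_pos_left _ (by omega)
        omega
      exact (Finset.mem_filter.1 hmem).2
    have hval_in : ∀ j < s, ∀ x ∈ Tj j, ((x:ℕ) = 2*j*(k-1) ∨ (x:ℕ) = (2*j+1)*(k-1))
        ∨ ∃ i < k-2, (x:ℕ) = (i+1)+(j+1)*(k-1) := by
      intro j hj x hx
      rw [hTj] at hx
      simp only [Finset.mem_insert] at hx
      rcases hx with rfl | rfl | hx
      · exact Or.inl (Or.inl (AV_val hk hs hn j hj hnp))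
      · exact Or.inl (Or.inr (BV_val hk hs hn j hj hnp))
      · obtain ⟨i, hi, rfl⟩ := Finset.mem_image.1 hx
        simp only [Finset.mem_range] at hi
        exact Or.inr ⟨i, hi, tv_val hk hs hn j i hj hi hnp⟩
    have hdisjT : ∀ j1, j1 < s → ∀ j2, j2 < s → ∀ x : Fin n,
        x ∈ Tj j1 → x ∈ Tj j2 → j1 = j2 := by
      intro j1 hj1 j2 hj2 x hx1 hx2
      have hmod0 : ∀ t : ℕ, (t*(k-1)) % (k-1) = 0 := fun t => Nat.mul_mod_left _ _
      have hmodtv : ∀ i j : ℕ, i < k-2 → ((i+1)+(j+1)*(k-1)) % (k-1) = i+1 := by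
        intro i j hi
        rw [Nat.add_mul_mod_self_right, Nat.mod_eq_of_lt (by omega)]
      have hdivtv : ∀ i j : ℕ, i < k-2 → ((i+1)+(j+1)*(k-1)) / (k-1) = j+1 := by
        intro i j hi
        rw [Nat.add_mul_div_right _ _ (by omega : 0 < k-1), Nat.div_eq_of_lt (by omega)]
        omega
      have hdivt : ∀ t : ℕ, (t*(k-1)) / (k-1) = t :=
        fun t => Nat.mul_div_cancel _ (by omega)
      rcases hval_in j1 hj1 x hx1 with (h1 | h1) | ⟨i1, hi1, h1⟩ <;>
        rcases hval_in j2 hj2 x hx2 with (h2 | h2) | ⟨i2, hi2, h2⟩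
      · have := mul_cancel_km hk hs hn (h1 ▸ h2 : (2*j1*(k-1) : ℕ) = 2*j2*(k-1)); omega
      · have := mul_cancel_km hk hs hn (h1 ▸ h2 : (2*j1*(k-1) : ℕ) = (2*j2+1)*(k-1)); omega
      · exfalso
        have e1 : ((x:ℕ)) % (k-1) = 0 := by rw [h1]; exact hmod0 _
        have e2 : ((x:ℕ)) % (k-1) = i2+1 := by rw [h2]; exact hmodtv _ _ hi2
        omega
      · have := mul_cancel_km hk hs hn (h1 ▸ h2 : ((2*j1+1)*(k-1) : ℕ) = 2*j2*(k-1)); omega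
      · have := mul_cancel_km hk hs hn (h1 ▸ h2 : ((2*j1+1)*(k-1) : ℕ) = (2*j2+1)*(k-1)); omega
      · exfalso
        have e1 : ((x:ℕ)) % (k-1) = 0 := by rw [h1]; exact hmod0 _
        have e2 : ((x:ℕ)) % (k-1) = i2+1 := by rw [h2]; exact hmodtv _ _ hi2
        omega
      · exfalso
        have e1 : ((x:ℕ)) % (k-1) = 0 := by rw [h2]; exact hmod0 _
        have e2 : ((x:ℕ)) % (k-1) = i1+1 := by rw [h1]; exact hmodtv _ _ hi1
        omega
      · exfalso
        have e1 : ((x:ℕ)) % (k-1) = 0 := by rw [h2]; exact hmod0 _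
        have e2 : ((x:ℕ)) % (k-1) = i1+1 := by rw [h1]; exact hmodtv _ _ hi1
        omega
      · have e1 : ((x:ℕ)) / (k-1) = j1+1 := by rw [h1]; exact hdivtv _ _ hi1
        have e2 : ((x:ℕ)) / (k-1) = j2+1 := by rw [h2]; exact hdivtv _ _ hi2
        omega
    have hex : ∀ j : ℕ, ∃ v : Fin n, j < s → (v ∈ Tj j ∧ v ∈ S) := by
      intro j
      by_cases hj : j < s
      · obtain ⟨v, hv1, hv2⟩ := hS (Tj j) (hcliq j hj)
        exact ⟨v, fun _ => ⟨hv1, hv2⟩⟩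
      · exact ⟨⟨0, hnp⟩, fun h => absurd h hj⟩
    choose f hf using hex
    calc s = (Finset.range s).card := (Finset.card_range s).symm
      _ ≤ S.card := by
          apply Finset.card_le_card_of_injOn f
            (fun j hj => (hf j (Finset.mem_range.1 hj)).2)
          intro j1 hj1 j2 hj2 hff
          simp only [Finset.mem_coe, Finset.mem_range] at hj1 hj2
          exact hdisjT j1 hj1 j2 hj2 (f j1)
            (hf j1 hj1).1 (hff ▸ (hf j2 hj2).1)
  exact le_antisymm hub hlb

end Main

end S5

/-- existence of an extremal graph with `t_{k-1}(n) + s - 1` edges,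
`K_k`-covering number `s`, and exactly `N_k(n,s)` copies of `K_k`. -/
theorem stmt_5 (k s : ℕ) (hk : 4 ≤ k) (hs : 2 ≤ s) :
    ∃ n₀ : ℕ, ∀ n ≥ n₀, ∃ G : SimpleGraph (Fin n),
      edgeCount G = turanEdges (k - 1) n + (s - 1) ∧ cliqueCover G k = s ∧
      cliqueCount G k = NkBound k s n := by
  exact ⟨(2*s+2)*k, fun n hn =>
    ⟨S5.GG k s n, S5.edge_main hk hs hn, S5.cover_main hk hs hn, S5.count_main hk hs hn⟩⟩
end

section
/- Let s > t ≥ 1 and k ≥ 4 be integers and let n be sufficiently large with n⁻_{k,s,t} ∈ ℕ. Then there exists a simple graph G on n vertices with exactly t_{k−1}(n) + t edges, K_k-covering number τ_k(G) = s, and exactly N_k(G) = s·(n⁻_{k,s,t})^{k−2} copies of K_k; namely, the graph obtained from the complete (k−1)-partite graph with one part of size (n + (k−2)R_k(n,s,t))/(k−1) and k−2 parts of size n⁻_{k,s,t} by adding s pairwise disjoint edges inside the largest part. -/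
open Finset SimpleGraph

/-! ### Auxiliary construction -/

/-- part function: part 0 is `[0,b)`, part `j+1` is `{v ≥ b : (v-b) % k2 = j}`. -/
def pfn (b k2 v : ℕ) : ℕ := if v < b then 0 else (v - b) % k2 + 1

/-- the construction graph. -/
def GG (n b k2 s : ℕ) : SimpleGraph (Fin n) where
  Adj u v := pfn b k2 u.val ≠ pfn b k2 v.val ∨
    (u ≠ v ∧ u.val / 2 = v.val / 2 ∧ u.val / 2 < s)
  symm := by
    constructor
    intro u v h
    rcases h with h | ⟨h1, h2, h3⟩
    · exact Or.inl h.symm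
    · exact Or.inr ⟨h1.symm, h2.symm, h2 ▸ h3⟩
  loopless := by constructor; intro v h; rcases h with h | ⟨h1, _, _⟩ <;> simp_all

instance GGdec (n b k2 s : ℕ) : DecidableRel (GG n b k2 s).Adj := fun u v =>
  decidable_of_iff (pfn b k2 u.val ≠ pfn b k2 v.val ∨
    (u ≠ v ∧ u.val / 2 = v.val / 2 ∧ u.val / 2 < s)) Iff.rfl

lemma GG_adj {n b k2 s : ℕ} {u v : Fin n} : (GG n b k2 s).Adj u v ↔
    (pfn b k2 u.val ≠ pfn b k2 v.val ∨
      (u ≠ v ∧ u.val / 2 = v.val / 2 ∧ u.val / 2 < s)) := Iff.rfl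

lemma pfn_eq_zero {b k2 v : ℕ} : pfn b k2 v = 0 ↔ v < b := by
  unfold pfn; split <;> simp_all

lemma pfn_le {b k2 v : ℕ} (h : 0 < k2) : pfn b k2 v ≤ k2 := by
  unfold pfn; split
  · omega
  · have := Nat.mod_lt (v - b) h; omega

lemma pfn_vtx {b k2 m j : ℕ} (hj : j < k2) : pfn b k2 (b + (k2 * m + j)) = j + 1 := by
  unfold pfn
  rw [if_neg (by omega), Nat.add_sub_cancel_left, Nat.mul_add_mod, Nat.mod_eq_of_lt hj]

/-- cardinality of initial segment filter -/
lemma card_filter_lt {n m : ℕ} (h : m ≤ n) :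
    ((univ : Finset (Fin n)).filter (fun v => v.val < m)).card = m := by
  have he : (univ : Finset (Fin n)).filter (fun v => v.val < m)
      = (Finset.range m).attachFin (fun x hx => lt_of_lt_of_le (mem_range.mp hx) h) := by
    ext v; simp [Finset.mem_attachFin]
  rw [he, Finset.card_attachFin, Finset.card_range]

/-- fiber `j+1` of `pfn` has cardinality `a` when `n = b + k2 * a`. -/
lemma card_fiber_succ {n b k2 a j : ℕ} (hn : n = b + k2 * a) (hj : j < k2) :
    ((univ : Finset (Fin n)).filter (fun v => pfn b k2 v.val = j + 1)).card = a := by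
  have hk2 : 0 < k2 := by omega
  have hmem : ∀ x ∈ (Finset.range a).image (fun m => b + (k2 * m + j)), x < n := by
    intro x hx
    simp only [mem_image, mem_range] at hx
    obtain ⟨m, hm, rfl⟩ := hx
    have : k2 * m + k2 ≤ k2 * a := by
      calc k2 * m + k2 = k2 * (m + 1) := by ring
      _ ≤ k2 * a := Nat.mul_le_mul_left _ (by omega)
    omega
  have he : (univ : Finset (Fin n)).filter (fun v => pfn b k2 v.val = j + 1)
      = ((Finset.range a).image (fun m => b + (k2 * m + j))).attachFin hmem := by
    ext v
    simp only [mem_filter, mem_univ, true_and, Finset.mem_attachFin, mem_image, mem_range]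
    constructor
    · intro hv
      have hvb : ¬ (v.val < b) := by
        intro hlt; rw [pfn, if_pos hlt] at hv; omega
      rw [pfn, if_neg hvb] at hv
      refine ⟨(v.val - b) / k2, ?_, ?_⟩
      · have h1 : k2 * ((v.val - b) / k2) ≤ v.val - b := Nat.mul_div_le _ _
        have h2 : v.val < n := v.isLt
        have h3 : v.val - b < k2 * a := by omega
        rw [Nat.div_lt_iff_lt_mul hk2]
        have h4 : k2 * a = a * k2 := Nat.mul_comm _ _
        omega
      · have := Nat.div_add_mod (v.val - b) k2
        omega
    · rintro ⟨m, hm, hv⟩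
      have : pfn b k2 (b + (k2 * m + j)) = j + 1 := pfn_vtx hj
      rw [hv] at this; exact this
  have hinj : Function.Injective (fun m => b + (k2 * m + j)) := by
    intro x y hxy
    simp only [Nat.add_right_cancel_iff, Nat.add_left_cancel_iff] at hxy
    exact Nat.eq_of_mul_eq_mul_left hk2 hxy
  rw [he, Finset.card_attachFin, Finset.card_image_of_injective _ hinj, Finset.card_range]

/-- fiber 0 of `pfn` has cardinality `b`. -/
lemma card_fiber_zero {n b k2 : ℕ} (hb : b ≤ n) :
    ((univ : Finset (Fin n)).filter (fun v => pfn b k2 v.val = 0)).card = b := by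
  have : ((univ : Finset (Fin n)).filter (fun v => pfn b k2 v.val = 0))
      = ((univ : Finset (Fin n)).filter (fun v => v.val < b)) := by
    ext v; simp [pfn_eq_zero]
  rw [this, card_filter_lt hb]

/-- sum over vertices of size of own fiber equals sum of squared fiber sizes. -/
lemma sum_fiber_sq {n : ℕ} (c : Fin n → ℕ) (D : Finset ℕ) (hD : ∀ v, c v ∈ D) :
    ∑ v : Fin n, ((univ : Finset (Fin n)).filter (fun u => c u = c v)).card
      = ∑ x ∈ D, ((univ : Finset (Fin n)).filter (fun v => c v = x)).card ^ 2 := by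
  have himg : (univ : Finset (Fin n)).image c ⊆ D := by
    intro x hx
    obtain ⟨v, _, rfl⟩ := Finset.mem_image.mp hx
    exact hD v
  rw [Finset.sum_comp (fun x => ((univ : Finset (Fin n)).filter (fun v => c v = x)).card) c,
    Finset.sum_subset himg (fun x _ hnx => ?_)]
  · exact Finset.sum_congr rfl fun x _ => by rw [smul_eq_mul, sq]
  · have he : ((univ : Finset (Fin n)).filter (fun v => c v = x)) = ∅ := by
      rw [Finset.filter_eq_empty_iff]
      intro v _ hv
      exact hnx (Finset.mem_image.mpr ⟨v, mem_univ v, hv⟩)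
    rw [he]
    simp

lemma GG_degree {n b k2 s : ℕ} (hsb : 2 * s ≤ b) (hbn : b ≤ n) (v : Fin n) :
    (GG n b k2 s).degree v
      + ((univ : Finset (Fin n)).filter (fun u => pfn b k2 u.val = pfn b k2 v.val)).card
      = n + (if v.val < 2 * s then 1 else 0) := by
  classical
  rw [← SimpleGraph.card_neighborFinset_eq_degree]
  have hnb : (GG n b k2 s).neighborFinset v = univ.filter ((GG n b k2 s).Adj v) := by
    ext u; simp
  have hsplit : univ.filter ((GG n b k2 s).Adj v)
      = (univ.filter (fun u : Fin n => ¬ (pfn b k2 u.val = pfn b k2 v.val)))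
        ∪ (univ.filter (fun u : Fin n => v ≠ u ∧ v.val / 2 = u.val / 2 ∧ v.val / 2 < s)) := by
    ext u
    simp only [mem_filter, mem_univ, true_and, mem_union, GG_adj]
    constructor
    · rintro (h | h)
      · exact Or.inl (Ne.symm h)
      · exact Or.inr h
    · rintro (h | h)
      · exact Or.inl (Ne.symm h)
      · exact Or.inr h
  have hdisj : Disjoint
      (univ.filter (fun u : Fin n => ¬ (pfn b k2 u.val = pfn b k2 v.val)))
      (univ.filter (fun u : Fin n => v ≠ u ∧ v.val / 2 = u.val / 2 ∧ v.val / 2 < s)) := by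
    rw [Finset.disjoint_filter]
    rintro u _ hne ⟨h1, h2, h3⟩
    apply hne
    have hu : u.val < b := by omega
    have hv : v.val < b := by omega
    rw [pfn_eq_zero.mpr hu, pfn_eq_zero.mpr hv]
  have hcard2 : (univ.filter (fun u : Fin n => v ≠ u ∧ v.val / 2 = u.val / 2 ∧ v.val / 2 < s)).card
      = (if v.val < 2 * s then 1 else 0) := by
    split_ifs with hv
    · have hlt : 2 * (v.val / 2) + (1 - v.val % 2) < n := by omega
      have : (univ.filter (fun u : Fin n => v ≠ u ∧ v.val / 2 = u.val / 2 ∧ v.val / 2 < s))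
          = {(⟨2 * (v.val / 2) + (1 - v.val % 2), hlt⟩ : Fin n)} := by
        ext u
        simp only [mem_filter, mem_univ, true_and, Finset.mem_singleton, Ne, Fin.ext_iff]
        omega
      rw [this, Finset.card_singleton]
    · rw [Finset.card_eq_zero, Finset.filter_eq_empty_iff]
      rintro u _ ⟨h1, h2, h3⟩
      omega
  rw [hnb, hsplit, Finset.card_union_of_disjoint hdisj, hcard2]
  have := Finset.card_filter_add_card_filter_not
    (s := (univ : Finset (Fin n))) (p := fun u : Fin n => pfn b k2 u.val = pfn b k2 v.val)
  simp only [Finset.card_univ, Fintype.card_fin] at this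
  omega

lemma GG_edge_sum {n b k2 s a : ℕ} (hn : n = b + k2 * a) (hsb : 2 * s ≤ b) (hk2 : 0 < k2) :
    2 * (GG n b k2 s).edgeFinset.card + (b ^ 2 + k2 * a ^ 2) = n * n + 2 * s := by
  classical
  have hbn : b ≤ n := by omega
  have hdeg := fun v => GG_degree (n := n) (b := b) (k2 := k2) (s := s) hsb hbn v
  have hsum : ∑ v : Fin n, ((GG n b k2 s).degree v
      + ((univ : Finset (Fin n)).filter (fun u => pfn b k2 u.val = pfn b k2 v.val)).card)
      = ∑ v : Fin n, (n + (if v.val < 2 * s then 1 else 0)) := by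
    exact Finset.sum_congr rfl fun v _ => hdeg v
  rw [Finset.sum_add_distrib, Finset.sum_add_distrib, SimpleGraph.sum_degrees_eq_twice_card_edges,
    sum_fiber_sq (fun v => pfn b k2 v.val) (Finset.range (k2 + 1))
      (fun v => mem_range.mpr (by
        show pfn b k2 v.val < k2 + 1
        have := pfn_le (b := b) (v := v.val) hk2; omega))] at hsum
  have hfib : ∑ x ∈ Finset.range (k2 + 1),
      ((univ : Finset (Fin n)).filter (fun v => pfn b k2 v.val = x)).card ^ 2
      = b ^ 2 + k2 * a ^ 2 := by
    rw [Finset.sum_range_succ']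
    have h0 : ((univ : Finset (Fin n)).filter (fun v => pfn b k2 v.val = 0)).card ^ 2 = b ^ 2 := by
      rw [card_fiber_zero hbn]
    have hj : ∀ j ∈ Finset.range k2,
        ((univ : Finset (Fin n)).filter (fun v => pfn b k2 v.val = j + 1)).card ^ 2 = a ^ 2 := by
      intro j hj
      rw [card_fiber_succ hn (mem_range.mp hj)]
    rw [Finset.sum_congr rfl hj, h0, Finset.sum_const, Finset.card_range, smul_eq_mul]
    ring
  have hconst : ∑ _v : Fin n, n = n * n := by
    rw [Finset.sum_const, Finset.card_univ, Fintype.card_fin, smul_eq_mul]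
  have hite : ∑ v : Fin n, (if v.val < 2 * s then 1 else 0) = 2 * s := by
    rw [Finset.sum_boole]
    simp only [Nat.cast_id]
    exact card_filter_lt (le_trans hsb hbn)
  rw [hfib, hconst, hite] at hsum
  omega

lemma turan_adj' {n K : ℕ} (v w : Fin n) :
    (turanGraph n K).Adj v w ↔ v.val % K ≠ w.val % K := by
  simp [turanGraph]

lemma turan_degree {n K : ℕ} (v : Fin n) :
    (turanGraph n K).degree v
      + ((univ : Finset (Fin n)).filter (fun u => u.val % K = v.val % K)).card = n := by
  classical
  rw [← SimpleGraph.card_neighborFinset_eq_degree]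
  have hnb : (turanGraph n K).neighborFinset v
      = univ.filter (fun u : Fin n => ¬ (u.val % K = v.val % K)) := by
    ext u
    simp [turan_adj', ne_comm]
  rw [hnb]
  have := Finset.card_filter_add_card_filter_not
    (s := (univ : Finset (Fin n))) (p := fun u : Fin n => u.val % K = v.val % K)
  simp only [Finset.card_univ, Fintype.card_fin] at this
  omega

lemma turan_edge_sum {n K : ℕ} (hK : 0 < K) :
    2 * (turanGraph n K).edgeFinset.card
      + ∑ x ∈ Finset.range K, ((univ : Finset (Fin n)).filter (fun v => v.val % K = x)).card ^ 2
      = n * n := by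
  classical
  have hsum : ∑ v : Fin n, ((turanGraph n K).degree v
      + ((univ : Finset (Fin n)).filter (fun u => u.val % K = v.val % K)).card)
      = ∑ _v : Fin n, n := Finset.sum_congr rfl fun v _ => turan_degree v
  rw [Finset.sum_add_distrib, SimpleGraph.sum_degrees_eq_twice_card_edges,
    sum_fiber_sq (fun v => v.val % K) (Finset.range K)
      (fun v => mem_range.mpr (by show v.val % K < K; exact Nat.mod_lt _ hK)),
    Finset.sum_const, Finset.card_univ, Fintype.card_fin, smul_eq_mul] at hsum
  exact hsum

lemma card_fiber_mod {n K x : ℕ} (hx : x < K) :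
    ((univ : Finset (Fin n)).filter (fun v => v.val % K = x)).card
      = n / K + if x < n % K then 1 else 0 := by
  classical
  have hK : 0 < K := by omega
  set q := n / K with hq
  set r := n % K with hr
  have hqr : n = K * q + r := by rw [hq, hr]; exact (Nat.div_add_mod n K).symm
  have hrK : r < K := Nat.mod_lt _ hK
  set cnt := q + if x < r then 1 else 0 with hcnt
  have hmem : ∀ y ∈ (Finset.range cnt).image (fun m => K * m + x), y < n := by
    intro y hy
    simp only [mem_image, mem_range] at hy
    obtain ⟨m, hm, rfl⟩ := hy
    by_cases hxr : x < r
    · rw [hcnt, if_pos hxr] at hm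
      have h1 : K * m ≤ K * q := Nat.mul_le_mul_left _ (by omega)
      omega
    · rw [hcnt, if_neg hxr] at hm
      have h1 : K * (m + 1) ≤ K * q := Nat.mul_le_mul_left _ (by omega)
      have h2 : K * (m + 1) = K * m + K := by ring
      omega
  have he : ((univ : Finset (Fin n)).filter (fun v => v.val % K = x))
      = ((Finset.range cnt).image (fun m => K * m + x)).attachFin hmem := by
    ext v
    simp only [mem_filter, mem_univ, true_and, Finset.mem_attachFin, mem_image, mem_range]
    constructor
    · intro hv
      have hdm := Nat.div_add_mod v.val K
      refine ⟨v.val / K, ?_, by omega⟩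
      have hveq : v.val = K * (v.val / K) + x := by omega
      have hvn : v.val < n := v.isLt
      by_cases hxr : x < r
      · rw [hcnt, if_pos hxr]
        by_contra hge
        have h1 : K * (q + 1) ≤ K * (v.val / K) := Nat.mul_le_mul_left _ (by omega)
        have h2 : K * (q + 1) = K * q + K := by ring
        omega
      · rw [hcnt, if_neg hxr]
        by_contra hge
        have h1 : K * q ≤ K * (v.val / K) := Nat.mul_le_mul_left _ (by omega)
        omega
    · rintro ⟨m, hm, hv⟩
      have hmod : (K * m + x) % K = x := by
        rw [Nat.mul_add_mod, Nat.mod_eq_of_lt hx]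
      rw [← hv]
      exact hmod
  have hinj : Function.Injective (fun m => K * m + x) := by
    intro m m' hmm
    simp only [Nat.add_right_cancel_iff] at hmm
    exact Nat.eq_of_mul_eq_mul_left hK hmm
  rw [he, Finset.card_attachFin, Finset.card_image_of_injective _ hinj, Finset.card_range]

lemma turan_fiber_sum {n K : ℕ} (hK : 0 < K) :
    ∑ x ∈ Finset.range K, ((univ : Finset (Fin n)).filter (fun v => v.val % K = x)).card ^ 2
      = K * (n / K) ^ 2 + (n % K) * (2 * (n / K) + 1) := by
  classical
  have hstep : ∀ x ∈ Finset.range K,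
      ((univ : Finset (Fin n)).filter (fun v => v.val % K = x)).card ^ 2
        = (n / K) ^ 2 + (if x < n % K then 2 * (n / K) + 1 else 0) := by
    intro x hx
    rw [card_fiber_mod (mem_range.mp hx)]
    split_ifs <;> ring
  rw [Finset.sum_congr rfl hstep, Finset.sum_add_distrib, Finset.sum_const, Finset.card_range,
    smul_eq_mul, ← Finset.sum_filter]
  have hfe : (Finset.range K).filter (fun x => x < n % K) = Finset.range (n % K) := by
    have : n % K < K := Nat.mod_lt _ hK
    ext y
    simp only [mem_filter, mem_range]
    omega
  rw [hfe, Finset.sum_const, Finset.card_range, smul_eq_mul]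

section cliques

variable {n b k2 a s' : ℕ}

lemma vtx_lt (hn : n = b + k2 * a) (m : Fin a) (j : Fin k2) :
    b + (k2 * m.val + j.val) < n := by
  have h1 : k2 * (m.val + 1) ≤ k2 * a := Nat.mul_le_mul_left _ m.isLt
  have h2 : k2 * (m.val + 1) = k2 * m.val + k2 := by ring
  omega

def Phi (hn : n = b + k2 * a) (hsb : 2 * s' ≤ b)
    (p : Fin s' × (Fin k2 → Fin a)) : Finset (Fin n) :=
  Finset.attachFin
    (insert (2 * p.1.val) (insert (2 * p.1.val + 1)
      ((univ : Finset (Fin k2)).image (fun j => b + (k2 * (p.2 j).val + j.val)))))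
    (by
      intro y hy
      simp only [Finset.mem_insert, Finset.mem_image, Finset.mem_univ, true_and] at hy
      have hi := p.1.isLt
      have hbn : b ≤ n := by omega
      rcases hy with rfl | rfl | ⟨j, rfl⟩
      · omega
      · omega
      · exact vtx_lt hn (p.2 j) j)

lemma mem_Phi (hn : n = b + k2 * a) (hsb : 2 * s' ≤ b) (p : Fin s' × (Fin k2 → Fin a))
    (x : Fin n) : x ∈ Phi hn hsb p ↔
      (x.val = 2 * p.1.val ∨ x.val = 2 * p.1.val + 1 ∨
        ∃ j : Fin k2, x.val = b + (k2 * (p.2 j).val + j.val)) := by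
  simp only [Phi, Finset.mem_attachFin, Finset.mem_insert, Finset.mem_image, Finset.mem_univ,
    true_and]
  constructor
  · rintro (h | h | ⟨j, hj⟩)
    · exact Or.inl h
    · exact Or.inr (Or.inl h)
    · exact Or.inr (Or.inr ⟨j, hj.symm⟩)
  · rintro (h | h | ⟨j, hj⟩)
    · exact Or.inl h
    · exact Or.inr (Or.inl h)
    · exact Or.inr (Or.inr ⟨j, hj.symm⟩)

lemma vtx_inj (hk2 : 0 < k2) {m m' j j' : ℕ} (hj : j < k2) (hj' : j' < k2)
    (h : k2 * m + j = k2 * m' + j') : j = j' ∧ m = m' := by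
  have h1 : (k2 * m + j) % k2 = (k2 * m' + j') % k2 := by rw [h]
  rw [Nat.mul_add_mod, Nat.mul_add_mod, Nat.mod_eq_of_lt hj, Nat.mod_eq_of_lt hj'] at h1
  subst h1
  have : k2 * m = k2 * m' := by omega
  exact ⟨rfl, Nat.eq_of_mul_eq_mul_left hk2 this⟩

lemma Phi_isNClique (hn : n = b + k2 * a) (hsb : 2 * s' ≤ b) (hk2 : 0 < k2)
    (p : Fin s' × (Fin k2 → Fin a)) :
    (GG n b k2 s').IsNClique (k2 + 2) (Phi hn hsb p) := by
  have hi := p.1.isLt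
  have hp0 : pfn b k2 (2 * p.1.val) = 0 := pfn_eq_zero.mpr (by omega)
  have hp1 : pfn b k2 (2 * p.1.val + 1) = 0 := pfn_eq_zero.mpr (by omega)
  have hpv : ∀ j : Fin k2, pfn b k2 (b + (k2 * (p.2 j).val + j.val)) = j.val + 1 :=
    fun j => pfn_vtx j.isLt
  constructor
  · intro x hx y hy hxy
    rw [Finset.mem_coe, mem_Phi] at hx
    rw [Finset.mem_coe, mem_Phi] at hy
    rw [GG_adj]
    have hdiv : ∀ z : Fin n, z.val = 2 * p.1.val ∨ z.val = 2 * p.1.val + 1 → z.val / 2 = p.1.val := by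
      rintro z (hz | hz) <;> omega
    rcases hx with hx | hx | ⟨j, hx⟩ <;> rcases hy with hy | hy | ⟨j', hy⟩
    · exact absurd (Fin.ext (hx.trans hy.symm)) hxy
    · exact Or.inr ⟨hxy, by omega, by omega⟩
    · exact Or.inl (by rw [hx, hy, hp0, hpv]; omega)
    · exact Or.inr ⟨hxy, by omega, by omega⟩
    · exact absurd (Fin.ext (hx.trans hy.symm)) hxy
    · exact Or.inl (by rw [hx, hy, hp1, hpv]; omega)
    · exact Or.inl (by rw [hx, hy, hpv, hp0]; omega)
    · exact Or.inl (by rw [hx, hy, hpv, hp1]; omega)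
    · -- both vtx
      refine Or.inl ?_
      rw [hx, hy, hpv, hpv]
      intro hjj
      have hj : j = j' := Fin.ext (by omega)
      subst hj
      exact hxy (Fin.ext (hx.trans hy.symm))
  · rw [Phi, Finset.card_attachFin]
    have himg_card : (((univ : Finset (Fin k2)).image
        (fun j => b + (k2 * (p.2 j).val + j.val)))).card = k2 := by
      rw [Finset.card_image_of_injective _ ?inj, Finset.card_univ, Fintype.card_fin]
      case inj =>
        intro j j' hjj
        have h : k2 * (p.2 j).val + j.val = k2 * (p.2 j').val + j'.val :=
          Nat.add_left_cancel hjj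
        exact Fin.ext (vtx_inj hk2 j.isLt j'.isLt h).1
    have h1 : 2 * p.1.val + 1 ∉ ((univ : Finset (Fin k2)).image
        (fun j => b + (k2 * (p.2 j).val + j.val))) := by
      simp only [Finset.mem_image, Finset.mem_univ, true_and, not_exists]
      intro j hj
      have hi := p.1.isLt
      omega
    have h0 : 2 * p.1.val ∉ insert (2 * p.1.val + 1) ((univ : Finset (Fin k2)).image
        (fun j => b + (k2 * (p.2 j).val + j.val))) := by
      simp only [Finset.mem_insert, Finset.mem_image, Finset.mem_univ, true_and, not_or,
        not_exists]
      have hi := p.1.isLt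
      constructor
      · omega
      · intro j hj
        omega
    rw [Finset.card_insert_of_notMem h0, Finset.card_insert_of_notMem h1, himg_card]

end cliques

section cliques2
variable {n b k2 a s' : ℕ}

lemma mk_f (hn : n = b + k2 * a) (hk2 : 0 < k2) {w : Fin n} {j : ℕ} (hj : j < k2)
    (hw : pfn b k2 w.val = j + 1) : ∃ m : Fin a, b + (k2 * m.val + j) = w.val := by
  have hwb : ¬ (w.val < b) := by
    intro h; rw [pfn_eq_zero.mpr h] at hw; omega
  have hmod : (w.val - b) % k2 = j := by
    rw [pfn] at hw
    rw [if_neg hwb] at hw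
    omega
  have hdm := Nat.div_add_mod (w.val - b) k2
  have hwn : w.val < n := w.isLt
  have hma : (w.val - b) / k2 < a := by
    rw [Nat.div_lt_iff_lt_mul hk2]
    have : k2 * a = a * k2 := Nat.mul_comm _ _
    omega
  exact ⟨⟨(w.val - b) / k2, hma⟩, by simp only; omega⟩

lemma clique_eq_Phi (hn : n = b + k2 * a) (hsb : 2 * s' ≤ b) (hk2 : 0 < k2)
    {T : Finset (Fin n)} (hT : (GG n b k2 s').IsNClique (k2 + 2) T) :
    ∃ p, Phi hn hsb p = T := by
  obtain ⟨hclique, hcard⟩ := hT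
  have hbn : b ≤ n := by omega
  -- pigeonhole: two vertices in the same part
  have hmap : ∀ v ∈ T, pfn b k2 v.val ∈ Finset.range (k2 + 1) := fun v _ =>
    mem_range.mpr (by have := pfn_le (b := b) (v := v.val) hk2; omega)
  have hlt : (Finset.range (k2 + 1)).card < T.card := by
    rw [hcard, card_range]; omega
  obtain ⟨u, hu, v, hv, huv, hpuv⟩ := Finset.exists_ne_map_eq_of_card_lt_of_maps_to hlt hmap
  have hadj := hclique hu hv huv
  rw [GG_adj] at hadj
  have hspec : u.val / 2 = v.val / 2 ∧ u.val / 2 < s' := by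
    rcases hadj with h | ⟨_, h2, h3⟩
    · exact absurd hpuv h
    · exact ⟨h2, h3⟩
  have hi : u.val / 2 < s' := hspec.2
  have hx0lt : 2 * (u.val / 2) < n := by omega
  have hx1lt : 2 * (u.val / 2) + 1 < n := by omega
  set x0 : Fin n := ⟨2 * (u.val / 2), hx0lt⟩ with hx0
  set x1 : Fin n := ⟨2 * (u.val / 2) + 1, hx1lt⟩ with hx1
  have hvals : (u = x0 ∧ v = x1) ∨ (u = x1 ∧ v = x0) := by
    have h1 : u.val = 2 * (u.val / 2) ∨ u.val = 2 * (u.val / 2) + 1 := by omega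
    have h2 : v.val = 2 * (u.val / 2) ∨ v.val = 2 * (u.val / 2) + 1 := by
      rcases hspec with ⟨h, _⟩; omega
    have hne : u.val ≠ v.val := fun h => huv (Fin.ext h)
    rcases h1 with h1 | h1 <;> rcases h2 with h2 | h2
    · omega
    · exact Or.inl ⟨Fin.ext h1, Fin.ext h2⟩
    · exact Or.inr ⟨Fin.ext h1, Fin.ext h2⟩
    · omega
  have hx0T : x0 ∈ T := by rcases hvals with ⟨h, _⟩ | ⟨_, h⟩ <;> [exact h ▸ hu; exact h ▸ hv]
  have hx1T : x1 ∈ T := by rcases hvals with ⟨_, h⟩ | ⟨h, _⟩ <;> [exact h ▸ hv; exact h ▸ hu]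
  -- part-0 vertices of T are exactly x0, x1
  have hA : ∀ w ∈ T, w ≠ x0 → w ≠ x1 → pfn b k2 w.val ≠ 0 := by
    intro w hw hw0 hw1 hpw
    have hadj0 := hclique hw hx0T hw0
    rw [GG_adj] at hadj0
    have hpx0 : pfn b k2 x0.val = 0 := pfn_eq_zero.mpr (by simp [hx0]; omega)
    rcases hadj0 with h | ⟨_, h2, h3⟩
    · rw [hpw, hpx0] at h; exact h rfl
    · have : w.val = 2 * (u.val / 2) ∨ w.val = 2 * (u.val / 2) + 1 := by
        simp only [hx0] at h2; omega
      rcases this with h | h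
      · exact hw0 (Fin.ext h)
      · exact hw1 (Fin.ext h)
  -- at most one vertex per nonzero part
  have hB : ∀ w ∈ T, ∀ w' ∈ T, pfn b k2 w.val = pfn b k2 w'.val →
      pfn b k2 w.val ≠ 0 → w = w' := by
    intro w hw w' hw' hpe hp0
    by_contra hne
    have hadjw := hclique hw hw' hne
    rw [GG_adj] at hadjw
    rcases hadjw with h | ⟨_, h2, h3⟩
    · exact h hpe
    · have : w.val < b := by omega
      exact hp0 (pfn_eq_zero.mpr this)
  -- each nonzero part is represented
  have hsurj : ∀ j : Fin k2, ∃ w, w ∈ T ∧ pfn b k2 w.val = j.val + 1 := by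
    intro j
    set T' := (T.erase x0).erase x1 with hT'
    have hx1x0 : x1 ∈ T.erase x0 := Finset.mem_erase.mpr ⟨by simp [hx0, hx1, Fin.ext_iff], hx1T⟩
    have hcT' : T'.card = k2 := by
      rw [hT', Finset.card_erase_of_mem hx1x0, Finset.card_erase_of_mem hx0T, hcard]
      omega
    have hmem' : ∀ w ∈ T', w ∈ T ∧ w ≠ x0 ∧ w ≠ x1 := by
      intro w hw
      rw [hT', Finset.mem_erase, Finset.mem_erase] at hw
      exact ⟨hw.2.2, hw.2.1, hw.1⟩
    have hmapsto : ∀ w ∈ T', pfn b k2 w.val - 1 ∈ Finset.range k2 := by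
      intro w hw
      obtain ⟨hwT, hw0, hw1⟩ := hmem' w hw
      have := hA w hwT hw0 hw1
      have := pfn_le (b := b) (v := w.val) hk2
      rw [mem_range]; omega
    have hinj : Set.InjOn (fun w : Fin n => pfn b k2 w.val - 1) T' := by
      intro w hw w' hw' he
      obtain ⟨hwT, hw0, hw1⟩ := hmem' w (by exact hw)
      obtain ⟨hwT', hw0', hw1'⟩ := hmem' w' (by exact hw')
      have h0 := hA w hwT hw0 hw1
      have h0' := hA w' hwT' hw0' hw1'
      simp only at he
      exact hB w hwT w' hwT' (by omega) h0
    have himg : T'.image (fun w : Fin n => pfn b k2 w.val - 1) = Finset.range k2 := by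
      apply Finset.eq_of_subset_of_card_le
      · intro x hx
        obtain ⟨w, hw, rfl⟩ := Finset.mem_image.mp hx
        exact hmapsto w hw
      · rw [Finset.card_range, Finset.card_image_of_injOn hinj, hcT']
    have hjmem : j.val ∈ T'.image (fun w : Fin n => pfn b k2 w.val - 1) := by
      rw [himg]; exact mem_range.mpr j.isLt
    obtain ⟨w, hw, hwj⟩ := Finset.mem_image.mp hjmem
    obtain ⟨hwT, hw0, hw1⟩ := hmem' w hw
    have h0 := hA w hwT hw0 hw1
    exact ⟨w, hwT, by omega⟩
  choose w hwT hwp using hsurj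
  have hf : ∀ j : Fin k2, ∃ m : Fin a, b + (k2 * m.val + j.val) = (w j).val :=
    fun j => mk_f hn hk2 j.isLt (hwp j)
  choose f hfv using hf
  refine ⟨(⟨u.val / 2, hi⟩, f), ?_⟩
  apply Finset.eq_of_subset_of_card_le
  · intro x hx
    rw [mem_Phi] at hx
    simp only at hx
    rcases hx with hx | hx | ⟨j, hx⟩
    · have : x = x0 := Fin.ext hx
      exact this ▸ hx0T
    · have : x = x1 := Fin.ext hx
      exact this ▸ hx1T
    · have : x = w j := Fin.ext (by rw [hx, hfv j])
      exact this ▸ hwT j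
  · rw [hcard, (Phi_isNClique hn hsb hk2 _).card_eq]

lemma Phi_injective (hn : n = b + k2 * a) (hsb : 2 * s' ≤ b) (hk2 : 0 < k2) :
    Function.Injective (Phi hn hsb (a := a) (s' := s')) := by
  rintro ⟨i, f⟩ ⟨i', f'⟩ hpq
  have hii : i = i' := by
    have h0 : (⟨2 * i.val, by have := i.isLt; omega⟩ : Fin n) ∈ Phi hn hsb (⟨i, f⟩ : Fin s' × (Fin k2 → Fin a)) := by
      rw [mem_Phi]; exact Or.inl rfl
    rw [hpq, mem_Phi] at h0
    simp only at h0
    have hi := i.isLt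
    have hi' := i'.isLt
    rcases h0 with h | h | ⟨j, h⟩
    · exact Fin.ext (by omega)
    · omega
    · have := (f' j).isLt
      omega
  subst hii
  have hff : f = f' := by
    funext j
    have h0 : (⟨b + (k2 * (f j).val + j.val), vtx_lt hn (f j) j⟩ : Fin n)
        ∈ Phi hn hsb (⟨i, f⟩ : Fin s' × (Fin k2 → Fin a)) := by
      rw [mem_Phi]; exact Or.inr (Or.inr ⟨j, rfl⟩)
    rw [hpq, mem_Phi] at h0
    simp only at h0
    have hi := i.isLt
    rcases h0 with h | h | ⟨j', h⟩
    · omega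
    · omega
    · obtain ⟨hj, hm⟩ := vtx_inj hk2 (m := (f j).val) (m' := (f' j').val) j.isLt j'.isLt (by omega)
      have : j = j' := Fin.ext hj
      subst this
      exact Fin.ext hm
  rw [hff]

lemma GG_cliqueCount (hn : n = b + k2 * a) (hsb : 2 * s' ≤ b) (hk2 : 0 < k2) :
    Nat.card {T : Finset (Fin n) // (GG n b k2 s').IsNClique (k2 + 2) T} = s' * a ^ k2 := by
  have hiff : ∀ T : Finset (Fin n),
      (GG n b k2 s').IsNClique (k2 + 2) T ↔ T ∈ Set.range (Phi hn hsb (a := a) (s' := s')) := by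
    intro T
    constructor
    · intro h
      obtain ⟨p, hp⟩ := clique_eq_Phi hn hsb hk2 h
      exact ⟨p, hp⟩
    · rintro ⟨p, rfl⟩
      exact Phi_isNClique hn hsb hk2 p
  rw [Nat.card_congr (Equiv.subtypeEquivRight hiff)]
  rw [Nat.card_range_of_injective (Phi_injective hn hsb hk2)]
  simp [Nat.card_eq_fintype_card]
end cliques2

section cover
variable {n b k2 a s' : ℕ}

lemma GG_cover (hn : n = b + k2 * a) (hsb : 2 * s' ≤ b) (hk2 : 0 < k2) (hsa : s' ≤ a) :
    sInf {m | ∃ S : Finset (Fin n), S.card = m ∧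
      ∀ T : Finset (Fin n), (GG n b k2 s').IsNClique (k2 + 2) T → ∃ v ∈ T, v ∈ S} = s' := by
  have hbn : b ≤ n := by omega
  -- the covering set of left endpoints
  have hS0lt : ∀ y ∈ (Finset.range s').image (fun i => 2 * i), y < n := by
    intro y hy
    simp only [mem_image, mem_range] at hy
    obtain ⟨i, hi, rfl⟩ := hy
    omega
  set S0 : Finset (Fin n) := ((Finset.range s').image (fun i => 2 * i)).attachFin hS0lt with hS0
  have hS0card : S0.card = s' := by
    rw [hS0, Finset.card_attachFin, Finset.card_image_of_injective _ (fun x y h => by omega),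
      Finset.card_range]
  have hS0cov : ∀ T : Finset (Fin n), (GG n b k2 s').IsNClique (k2 + 2) T → ∃ v ∈ T, v ∈ S0 := by
    intro T hT
    obtain ⟨p, rfl⟩ := clique_eq_Phi hn hsb hk2 hT
    refine ⟨⟨2 * p.1.val, by have := p.1.isLt; omega⟩, ?_, ?_⟩
    · rw [mem_Phi]; exact Or.inl rfl
    · simp only [hS0, Finset.mem_attachFin, mem_image, mem_range]
      exact ⟨p.1.val, p.1.isLt, rfl⟩
  have hmem : s' ∈ {m | ∃ S : Finset (Fin n), S.card = m ∧
      ∀ T : Finset (Fin n), (GG n b k2 s').IsNClique (k2 + 2) T → ∃ v ∈ T, v ∈ S} :=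
    ⟨S0, hS0card, hS0cov⟩
  apply le_antisymm (Nat.sInf_le hmem)
  apply le_csInf ⟨s', hmem⟩
  rintro m ⟨S, hScard, hScov⟩
  by_contra hlt
  push_neg at hlt
  -- every special edge has an endpoint in S
  have hhit : ∀ i : Fin s', ∃ x ∈ S, x.val = 2 * i.val ∨ x.val = 2 * i.val + 1 := by
    intro i
    by_contra hno
    push_neg at hno
    have hav : ∀ j : Fin k2, ∃ wv : Fin n, pfn b k2 wv.val = j.val + 1 ∧ wv ∉ S := by
      intro j
      have hFcard : ((univ : Finset (Fin n)).filter (fun v => pfn b k2 v.val = j.val + 1)).card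
          = a := card_fiber_succ hn j.isLt
      have hnsub : ¬ ((univ : Finset (Fin n)).filter (fun v => pfn b k2 v.val = j.val + 1)) ⊆ S := by
        intro hsub
        have := Finset.card_le_card hsub
        omega
      obtain ⟨wv, hwF, hwS⟩ := Finset.not_subset.mp hnsub
      rw [Finset.mem_filter] at hwF
      exact ⟨wv, hwF.2, hwS⟩
    choose wv hwp hwS using hav
    have hf : ∀ j : Fin k2, ∃ m : Fin a, b + (k2 * m.val + j.val) = (wv j).val :=
      fun j => mk_f hn hk2 j.isLt (hwp j)
    choose f hfv using hf
    obtain ⟨v, hvT, hvS⟩ := hScov (Phi hn hsb (i, f)) (Phi_isNClique hn hsb hk2 _)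
    rw [mem_Phi] at hvT
    simp only at hvT
    rcases hvT with hv | hv | ⟨j, hv⟩
    · exact (hno v hvS).1 hv
    · exact (hno v hvS).2 hv
    · have : v = wv j := Fin.ext (by rw [hv, hfv j])
      exact hwS j (this ▸ hvS)
  choose c hcS hcval using hhit
  have hcinj : Function.Injective c := by
    intro i i' h
    have h1 := hcval i
    have h2 := hcval i'
    rw [h] at h1
    apply Fin.ext
    omega
  have : s' ≤ S.card := by
    have h1 : (univ : Finset (Fin s')).card ≤ S.card :=
      Finset.card_le_card_of_injOn c (fun i _ => hcS i) (fun i _ i' _ h => hcinj h)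
    simpa using h1
  omega
end cover

lemma key_arith (K a R q r b s t : ℤ) (hK : K ≠ 0)
    (hb : b = a + R) (h23 : K * a + R = K * q + r)
    (h4 : (K - 1) * R ^ 2 = 2 * K * (s - t) + (K - r) * r) :
    K * q ^ 2 + r * (2 * q + 1) + 2 * s = b ^ 2 + (K - 1) * a ^ 2 + 2 * t := by
  apply mul_left_cancel₀ hK
  linear_combination (-(K * (b + a + R))) * hb + (-(K * a + R + K * q + r)) * h23 - h4

lemma ecount {n : ℕ} (G : SimpleGraph (Fin n)) [DecidableRel G.Adj] :
    edgeCount G = G.edgeFinset.card := by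
  rw [edgeCount, Nat.card_eq_fintype_card, SimpleGraph.edgeFinset_card]

lemma main_exists (k s t n a R : ℕ) (hk : 4 ≤ k) (hts : t < s)
    (hnR : n = (k - 1) * a + R)
    (hkey : ((k : ℤ) - 2) * (R : ℤ) ^ 2 = 2 * ((k : ℤ) - 1) * ((s : ℤ) - (t : ℤ))
      + (((k : ℤ) - 1) - ((n % (k - 1) : ℕ) : ℤ)) * ((n % (k - 1) : ℕ) : ℤ))
    (hsa : 2 * s ≤ a) :
    ∃ G : SimpleGraph (Fin n), edgeCount G = turanEdges (k - 1) n + t ∧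
      cliqueCover G k = s ∧ cliqueCount G k = s * a ^ (k - 2) := by
  set k2 := k - 2 with hk2def
  have hk2 : 0 < k2 := by omega
  set b := a + R with hbdef
  have hn : n = b + k2 * a := by
    rw [hbdef, hk2def]
    have h1 : (k - 1) * a = (k - 2) * a + a := by
      rw [show k - 1 = (k - 2) + 1 from by omega, Nat.succ_mul]
    omega
  have hsb : 2 * s ≤ b := by omega
  have hkk2 : k = k2 + 2 := by omega
  refine ⟨GG n b k2 s, ?_, ?_, ?_⟩
  · -- edge count
    have hK : 0 < k - 1 := by omega
    have hA := GG_edge_sum (s := s) hn hsb hk2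
    have hB := turan_edge_sum (n := n) (K := k - 1) hK
    rw [turan_fiber_sum hK] at hB
    set Q := n / (k - 1) with hQdef
    set r := n % (k - 1) with hrdef
    have hcast1 : ((k - 1 : ℕ) : ℤ) = (k : ℤ) - 1 := by omega
    have hcast2 : ((k2 : ℕ) : ℤ) = (k : ℤ) - 2 := by omega
    have hNat23 : (k - 1) * a + R = (k - 1) * Q + r := by
      rw [← hnR, hQdef, hrdef]
      exact (Nat.div_add_mod n (k - 1)).symm
    have hZ23 : ((k : ℤ) - 1) * (a : ℤ) + (R : ℤ) = ((k : ℤ) - 1) * (Q : ℤ) + (r : ℤ) := by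
      have h := congrArg (fun x : ℕ => (x : ℤ)) hNat23
      push_cast at h
      rw [hcast1] at h
      exact h
    have hZ := key_arith ((k : ℤ) - 1) (a : ℤ) (R : ℤ) (Q : ℤ) (r : ℤ) (b : ℤ) (s : ℤ) (t : ℤ)
      (by omega)
      (by rw [hbdef]; push_cast; ring)
      hZ23
      (by
        have h1 : ((k : ℤ) - 1) - 1 = (k : ℤ) - 2 := by ring
        rw [h1]
        exact hkey)
    have hNatC : (k - 1) * Q ^ 2 + r * (2 * Q + 1) + 2 * s = b ^ 2 + k2 * a ^ 2 + 2 * t := by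
      have h1 : (((k - 1) * Q ^ 2 + r * (2 * Q + 1) + 2 * s : ℕ) : ℤ)
          = ((b ^ 2 + k2 * a ^ 2 + 2 * t : ℕ) : ℤ) := by
        push_cast
        rw [hcast1, hcast2]
        linear_combination hZ
      exact Nat.cast_injective h1
    rw [ecount (GG n b k2 s), turanEdges, ecount (turanGraph n (k - 1))]
    omega
  · rw [cliqueCover, hkk2]
    exact GG_cover hn (by omega) hk2 (by omega)
  · rw [cliqueCount, hkk2]
    rw [GG_cliqueCount hn (by omega) hk2]

set_option maxHeartbeats 1600000 in
/-- when `n⁻_{k,s,t}` is a natural number and `n` is large, there exists a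
graph with `t_{k-1}(n) + t` edges, `K_k`-covering number `s`, and exactly
`s·(n⁻_{k,s,t})^{k-2}` copies of `K_k`. -/
theorem stmt_7 (k s t : ℕ) (hk : 4 ≤ k) (ht : 1 ≤ t) (hts : t < s) :
    ∃ n₀ : ℕ, ∀ n ≥ n₀,
      (∃ a : ℕ, (a : ℝ) = ((n : ℝ) - Rk k s t n) / ((k : ℝ) - 1)) →
      ∃ G : SimpleGraph (Fin n),
        edgeCount G = turanEdges (k - 1) n + t ∧ cliqueCover G k = s ∧
        (cliqueCount G k : ℝ) =
          (s : ℝ) * (((n : ℝ) - Rk k s t n) / ((k : ℝ) - 1)) ^ (k - 2) := by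
  refine ⟨2 * (k + s) + 2 * s * k + 1, fun n hn0 hex => ?_⟩
  obtain ⟨a, ha⟩ := hex
  have hkR : (4 : ℝ) ≤ (k : ℝ) := by exact_mod_cast hk
  have hstR : (t : ℝ) < (s : ℝ) := by exact_mod_cast hts
  have hrlt : n % (k - 1) < k - 1 := Nat.mod_lt _ (by omega)
  have hrR : ((n % (k - 1) : ℕ) : ℝ) ≤ (k : ℝ) - 2 := by
    have h1 : ((n % (k - 1) : ℕ) : ℝ) ≤ ((k - 2 : ℕ) : ℝ) := Nat.cast_le.mpr (by omega)
    have h2 : ((k - 2 : ℕ) : ℝ) = (k : ℝ) - 2 := by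
      rw [Nat.cast_sub (by omega : 2 ≤ k)]; norm_num
    rw [h2] at h1; exact h1
  have hrR0 : (0 : ℝ) ≤ ((n % (k - 1) : ℕ) : ℝ) := Nat.cast_nonneg _
  set X : ℝ := (2 * ((k : ℝ) - 1) * ((s : ℝ) - t) +
    ((k : ℝ) - 1 - (n % (k - 1) : ℕ)) * (n % (k - 1) : ℕ)) / ((k : ℝ) - 2) with hXdef
  have hX0 : 0 ≤ X := by
    apply div_nonneg _ (by linarith)
    have h1 : 0 ≤ 2 * ((k : ℝ) - 1) * ((s : ℝ) - t) := by nlinarith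
    nlinarith
  have hRkX : Rk k s t n = Real.sqrt X := by rw [Rk, hXdef]
  have hRk2 : (Rk k s t n) ^ 2 = X := by rw [hRkX]; exact Real.sq_sqrt hX0
  have hRk0 : 0 ≤ Rk k s t n := by rw [hRkX]; exact Real.sqrt_nonneg _
  have hkne : (k : ℝ) - 1 ≠ 0 := by linarith
  have hRkeq : Rk k s t n = (n : ℝ) - ((k : ℝ) - 1) * a := by
    field_simp at ha
    linarith
  have hkm1R : ((k - 1 : ℕ) : ℝ) = (k : ℝ) - 1 := by
    rw [Nat.cast_sub (by omega : 1 ≤ k)]; norm_num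
  have h1n : (k - 1) * a ≤ n := by
    have h1 : (((k - 1) * a : ℕ) : ℝ) ≤ (n : ℝ) := by
      push_cast
      rw [hkm1R]
      nlinarith [hRk0, hRkeq]
    exact_mod_cast h1
  obtain ⟨R, hRdef⟩ : ∃ R, R = n - (k - 1) * a := ⟨_, rfl⟩
  have hnR : n = (k - 1) * a + R := by omega
  have hRreal : (R : ℝ) = Rk k s t n := by
    rw [hRdef, Nat.cast_sub h1n, hRkeq]
    push_cast
    rw [hkm1R]
  have hkeyR : ((k : ℝ) - 2) * (R : ℝ) ^ 2 = 2 * ((k : ℝ) - 1) * ((s : ℝ) - t) +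
      ((k : ℝ) - 1 - (n % (k - 1) : ℕ)) * (n % (k - 1) : ℕ) := by
    rw [hRreal, hRk2, hXdef]
    have hk2ne : (k : ℝ) - 2 ≠ 0 := by linarith
    rw [mul_comm, div_mul_cancel₀ _ hk2ne]
  obtain ⟨rn, hrn⟩ : ∃ m, n % (k - 1) = m := ⟨_, rfl⟩
  rw [hrn] at hkeyR hrlt
  have hkeyZ : ((k : ℤ) - 2) * (R : ℤ) ^ 2 = 2 * ((k : ℤ) - 1) * ((s : ℤ) - (t : ℤ))
      + (((k : ℤ) - 1) - ((rn : ℕ) : ℤ)) * ((rn : ℕ) : ℤ) := by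
    have h2 : ((((k : ℤ) - 2) * (R : ℤ) ^ 2 : ℤ) : ℝ)
        = ((2 * ((k : ℤ) - 1) * ((s : ℤ) - (t : ℤ))
          + (((k : ℤ) - 1) - ((rn : ℕ) : ℤ)) * ((rn : ℕ) : ℤ) : ℤ) : ℝ) := by
      push_cast
      linear_combination hkeyR
    exact Int.cast_injective h2
  -- bound on R
  have hR2n : R ^ 2 ≤ 2 * k * s + k * k := by
    have hZ : (R : ℤ) ^ 2 ≤ 2 * (k : ℤ) * s + k * k := by
      have h4 : (4 : ℤ) ≤ (k : ℤ) := by exact_mod_cast hk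
      have hst : (t : ℤ) < (s : ℤ) := by exact_mod_cast hts
      have ht1 : (1 : ℤ) ≤ (t : ℤ) := by exact_mod_cast ht
      have hr1 : ((rn : ℕ) : ℤ) ≤ (k : ℤ) - 2 := by omega
      have hr0 : (0 : ℤ) ≤ ((rn : ℕ) : ℤ) := Int.natCast_nonneg _
      have t1 : 2 * ((k : ℤ) - 1) * ((s : ℤ) - t) ≤ 2 * (k : ℤ) * s := by
        nlinarith [mul_nonneg (by linarith : (0:ℤ) ≤ (k:ℤ) - 1) (by linarith : (0:ℤ) ≤ (t:ℤ))]
      have t2 : (((k : ℤ) - 1) - rn) * rn ≤ (k : ℤ) * k := by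
        have hb1 : ((k : ℤ) - 1) - rn ≤ (k : ℤ) := by linarith
        have hb2 : ((rn : ℕ) : ℤ) ≤ (k : ℤ) := by linarith
        exact mul_le_mul hb1 hb2 hr0 (by linarith)
      have t3 : (R : ℤ) ^ 2 ≤ ((k : ℤ) - 2) * (R : ℤ) ^ 2 := by
        nlinarith [sq_nonneg ((R : ℤ))]
      linarith
    exact_mod_cast hZ
  have hRle : R ≤ 2 * (k + s) := by
    by_contra hgt
    push_neg at hgt
    have h := Nat.mul_le_mul (Nat.le_of_lt hgt) (Nat.le_of_lt hgt)
    have hsq : R ^ 2 = R * R := sq R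
    have hexp : (2 * (k + s)) * (2 * (k + s)) = 4 * (k * k) + 8 * (k * s) + 4 * (s * s) := by ring
    have h2ks : 2 * k * s = 2 * (k * s) := by ring
    have hkk : 16 ≤ k * k := Nat.mul_le_mul hk hk
    omega
  have hsa : 2 * s ≤ a := by
    have hexp : k * (2 * s) = (k - 1) * (2 * s) + 2 * s := by
      have h9 : k - 1 + 1 = k := by omega
      calc k * (2 * s) = (k - 1 + 1) * (2 * s) := by rw [h9]
        _ = (k - 1) * (2 * s) + 2 * s := by rw [Nat.succ_mul]
    have hcomm : k * (2 * s) = 2 * s * k := by ring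
    have hlt : (k - 1) * (2 * s) < (k - 1) * a := by omega
    have := Nat.lt_of_mul_lt_mul_left hlt
    omega
  rw [← hrn] at hkeyZ
  obtain ⟨G, hG1, hG2, hG3⟩ := main_exists k s t n a R hk hts hnR hkeyZ hsa
  refine ⟨G, hG1, hG2, ?_⟩
  rw [hG3, ← ha]
  push_cast
  ring
end
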